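/- arXiv:2307.14195 — 11 statements merged into one kernel-verified Lean document; each statement's English description precedes it below -/
import Mathlib

section
/- Let P = {p_1, ..., p_n} be a finite point set in R^d in general position (every subset of size at most d+1 is affinely independent). Then for every non-zero affine dependency z of P, there exists another non-zero affine dependency z' of P such that sign(z') ≤ sign(z) coordinatewise (where 0 ≤ + and 0 ≤ -, and +,- are incomparable) and the support of z' has size exactly d+2. -/
open Finset Module

private lemma sign_eq_sign_of_mul_pos {a b : ℝ} (h : 0 < a * b) :
    Real.sign a = Real.sign b := by
  rcases lt_trichotomy a 0 with ha | ha | ha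
  · have hb : b < 0 := by nlinarith
    rw [Real.sign_of_neg ha, Real.sign_of_neg hb]
  · subst ha; simp at h
  · have hb : 0 < b := by nlinarith
    rw [Real.sign_of_pos ha, Real.sign_of_pos hb]

/-- Any `d+2` points in `ℝ^d` admit a nonzero affine dependency. -/
private lemma exists_dep {d n : ℕ} (P : Fin n → (Fin d → ℝ)) (T : Finset (Fin n))
    (hT : T.card = d + 2) :
    ∃ w : Fin n → ℝ, w ≠ 0 ∧ (∀ i, i ∉ T → w i = 0) ∧
      (∑ i, w i = 0) ∧ (∑ i, w i • P i = 0) := by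
  have hni : ¬ AffineIndependent ℝ (fun i : T => P i) := by
    rw [← finrank_vectorSpan_le_iff_not_affineIndependent ℝ _
      (by simp [hT] : Fintype.card T = d + 2)]
    calc finrank ℝ (vectorSpan ℝ (Set.range fun i : T => P i))
        ≤ finrank ℝ (Fin d → ℝ) := Submodule.finrank_le _
      _ = d := by simp
  rw [affineIndependent_iff] at hni
  push_neg at hni
  obtain ⟨s, w, hs, hc, e, he, hne⟩ := hni
  classical
  refine ⟨fun i => if h : i ∈ T then (if (⟨i, h⟩ : T) ∈ s then w ⟨i, h⟩ else 0) else 0,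
    ?_, ?_, ?_, ?_⟩
  · intro h
    have := congrFun h e.1
    simp [e.2, Subtype.eta, he] at this
    exact hne this
  · intro i hi; simp [hi]
  · rw [← Finset.sum_subset (Finset.subset_univ T)
      (fun i _ hi => by simp [hi]), ← Finset.sum_coe_sort T]
    have : ∀ e' : T, (if h : (e' : Fin n) ∈ T then
        (if (⟨e', h⟩ : T) ∈ s then w ⟨e', h⟩ else 0) else 0)
        = if e' ∈ s then w e' else 0 := by
      intro e'; simp [e'.2]
    rw [Finset.sum_congr rfl (fun e' _ => this e'), Finset.sum_ite_mem,
      Finset.univ_inter]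
    exact hs
  · rw [← Finset.sum_subset (Finset.subset_univ T)
      (fun i _ hi => by simp [hi]), ← Finset.sum_coe_sort T]
    have : ∀ e' : T, (if h : (e' : Fin n) ∈ T then
        (if (⟨e', h⟩ : T) ∈ s then w ⟨e', h⟩ else 0) else 0) • P e'
        = if e' ∈ s then w e' • P e' else 0 := by
      intro e'; by_cases h : e' ∈ s <;> simp [e'.2, h]
    rw [Finset.sum_congr rfl (fun e' _ => this e'), Finset.sum_ite_mem,
      Finset.univ_inter]
    exact hc

private lemma aux (d n : ℕ) (P : Fin n → (Fin d → ℝ))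
    (hgen : ∀ s : Finset (Fin n), s.card ≤ d + 1 →
      AffineIndependent ℝ (fun i : s => P i)) :
    ∀ N : ℕ, ∀ z : Fin n → ℝ,
      (Finset.univ.filter (fun i => z i ≠ 0)).card ≤ N → z ≠ 0 →
      (∑ i, z i • P i = 0) → (∑ i, z i = 0) →
      ∃ z' : Fin n → ℝ, z' ≠ 0 ∧
        (∑ i, z' i • P i = 0) ∧ (∑ i, z' i = 0) ∧
        (∀ i, z' i = 0 ∨ Real.sign (z' i) = Real.sign (z i)) ∧
        (Finset.univ.filter (fun i => z' i ≠ 0)).card = d + 2 := by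
  classical
  intro N
  induction N with
  | zero =>
    intro z hcard hz _ _
    exfalso; apply hz; funext i
    by_contra h
    have hi : i ∈ Finset.univ.filter (fun i => z i ≠ 0) :=
      Finset.mem_filter.2 ⟨Finset.mem_univ i, h⟩
    have := Finset.card_pos.2 ⟨i, hi⟩
    omega
  | succ N ih =>
    intro z hcard hz hdep hsum
    set S := Finset.univ.filter (fun i => z i ≠ 0) with hS
    have hmemS : ∀ i, i ∈ S ↔ z i ≠ 0 := by intro i; simp [hS]
    by_cases hle : S.card ≤ d + 1
    · -- contradiction with general position
      exfalso
      have hai := hgen S hle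
      rw [affineIndependent_iff] at hai
      have hsum0 : Finset.univ.sum (fun e : S => z e) = 0 := by
        rw [Finset.sum_coe_sort S z,
          Finset.sum_subset (Finset.subset_univ S) (fun i _ hi => by
            by_contra h; exact hi ((hmemS i).2 h))]
        exact hsum
      have hdep0 : ∑ e : S, z e • P e = 0 := by
        rw [Finset.sum_coe_sort S (fun i => z i • P i),
          Finset.sum_subset (Finset.subset_univ S) (fun i _ hi => by
            have hzi : z i = 0 := by by_contra h; exact hi ((hmemS i).2 h)
            simp [hzi])]
        exact hdep
      have h0 := hai Finset.univ (fun e : S => z e) hsum0 hdep0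
      apply hz; funext i
      by_cases hiS : i ∈ S
      · exact h0 ⟨i, hiS⟩ (Finset.mem_univ _)
      · by_contra h; exact hiS ((hmemS i).2 h)
    · by_cases heq : S.card = d + 2
      · exact ⟨z, hz, hdep, hsum, fun i => Or.inr rfl, heq⟩
      · have hgt : d + 3 ≤ S.card := by omega
        obtain ⟨T, hTsub, hTcard⟩ := Finset.exists_subset_card_eq (s := S) (n := d + 2) (by omega)
        obtain ⟨w₀, hw₀ne, hw₀supp, hw₀sum, hw₀dep⟩ := exists_dep P T hTcard
        -- choose w = ±w₀ so that some z i * w i > 0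
        have hex : ∃ w : Fin n → ℝ, (∀ i, i ∉ T → w i = 0) ∧
            (∑ i, w i = 0) ∧ (∑ i, w i • P i = 0) ∧ ∃ j, 0 < z j * w j := by
          obtain ⟨j, hj⟩ : ∃ j, w₀ j ≠ 0 := by
            by_contra h; push_neg at h; exact hw₀ne (funext h)
          have hjT : j ∈ T := by by_contra h; exact hj (hw₀supp j h)
          have hzj : z j ≠ 0 := (hmemS j).1 (hTsub hjT)
          rcases lt_or_gt_of_ne (mul_ne_zero hzj hj) with hneg | hpos
          · refine ⟨-w₀, fun i hi => by simp [hw₀supp i hi], by simp [hw₀sum], ?_, j, ?_⟩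
            · have hneg' : ∑ i, (-w₀) i • P i = -∑ i, w₀ i • P i := by
                simp [neg_smul, Finset.sum_neg_distrib]
              rw [hneg', hw₀dep, neg_zero]
            · simp only [Pi.neg_apply]; nlinarith
          · exact ⟨w₀, hw₀supp, hw₀sum, hw₀dep, ⟨j, hpos⟩⟩
        obtain ⟨w, hwsupp, hwsum, hwdep, j₀, hj₀⟩ := hex
        set S' := T.filter (fun i => 0 < z i * w i) with hS'
        have hS'ne : S'.Nonempty := by
          refine ⟨j₀, Finset.mem_filter.2 ⟨?_, hj₀⟩⟩
          by_contra h
          rw [hwsupp j₀ h] at hj₀; simp at hj₀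
        obtain ⟨i₀, hi₀S', hi₀min⟩ := Finset.exists_min_image S' (fun i => z i / w i) hS'ne
        obtain ⟨hi₀T, hzwi₀⟩ := Finset.mem_filter.1 hi₀S'
        have hwi₀ : w i₀ ≠ 0 := by intro h; rw [h] at hzwi₀; simp at hzwi₀
        set t := z i₀ / w i₀ with htdef
        have ht : 0 < t := by
          rcases lt_trichotomy (w i₀) 0 with h | h | h
          · have : z i₀ < 0 := by nlinarith
            exact div_pos_of_neg_of_neg this h
          · exact absurd h hwi₀
          · have : 0 < z i₀ := by nlinarith
            exact div_pos this h
        set z'' := fun i => z i - t * w i with hz''def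
        have hz''sum : ∑ i, z'' i = 0 := by
          simp only [hz''def, Finset.sum_sub_distrib, ← Finset.mul_sum, hsum, hwsum,
            mul_zero, sub_zero]
        have hz''dep : ∑ i, z'' i • P i = 0 := by
          have : ∀ i, z'' i • P i = z i • P i - t • (w i • P i) := by
            intro i; simp [hz''def, sub_smul, mul_smul]
          simp only [this, Finset.sum_sub_distrib, ← Finset.smul_sum, hdep, hwdep,
            smul_zero, sub_zero]
        have hsign : ∀ i, z'' i = 0 ∨ Real.sign (z'' i) = Real.sign (z i) := by
          intro i
          by_cases h0 : z'' i = 0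
          · exact Or.inl h0
          right
          by_cases hwi : w i = 0
          · simp [hz''def, hwi]
          have hiT : i ∈ T := by by_contra h; exact hwi (hwsupp i h)
          have hzi : z i ≠ 0 := (hmemS i).1 (hTsub hiT)
          apply sign_eq_sign_of_mul_pos
          rcases lt_or_gt_of_ne (mul_ne_zero hzi hwi) with hneg | hpos
          · -- z i * w i < 0 : z'' i moves away from 0
            rcases lt_or_gt_of_ne hwi with hw | hw
            · have hz' : 0 < z i := by nlinarith
              have : 0 < z'' i := by simp only [hz''def]; nlinarith
              nlinarith
            · have hz' : z i < 0 := by nlinarith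
              have : z'' i < 0 := by simp only [hz''def]; nlinarith
              nlinarith
          · -- z i * w i > 0 : i ∈ S', use minimality of t
            have hiS' : i ∈ S' := Finset.mem_filter.2 ⟨hiT, hpos⟩
            have hmin : t ≤ z i / w i := hi₀min i hiS'
            rcases lt_or_gt_of_ne hwi with hw | hw
            · have hz' : z i < 0 := by nlinarith
              have h1 : z i ≤ t * w i := by
                rw [le_div_iff_of_neg hw] at hmin
                linarith
              have h2 : z'' i ≤ 0 := by simp only [hz''def]; linarith
              have h3 : z'' i < 0 := lt_of_le_of_ne h2 h0
              nlinarith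
            · have hz' : 0 < z i := by nlinarith
              have h1 : t * w i ≤ z i := by
                rw [le_div_iff₀ hw] at hmin
                linarith
              have h2 : 0 ≤ z'' i := by simp only [hz''def]; linarith
              have h3 : 0 < z'' i := lt_of_le_of_ne h2 (Ne.symm h0)
              nlinarith
        have hz''i₀ : z'' i₀ = 0 := by
          simp only [hz''def, htdef]
          rw [div_mul_cancel₀ _ hwi₀]; ring
        have hsub : Finset.univ.filter (fun i => z'' i ≠ 0) ⊆ S := by
          intro i hi
          rw [Finset.mem_filter] at hi
          rw [hmemS]
          intro hzi
          apply hi.2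
          have hwi : w i = 0 := by
            by_contra h
            have hiT : i ∈ T := by by_contra h'; exact h (hwsupp i h')
            exact ((hmemS i).1 (hTsub hiT)) hzi
          simp [hz''def, hzi, hwi]
        have hssub : Finset.univ.filter (fun i => z'' i ≠ 0) ⊂ S := by
          refine ⟨hsub, fun h => ?_⟩
          have : i₀ ∈ Finset.univ.filter (fun i => z'' i ≠ 0) := h (hTsub hi₀T)
          rw [Finset.mem_filter] at this
          exact this.2 hz''i₀
        have hcard'' : (Finset.univ.filter (fun i => z'' i ≠ 0)).card ≤ N := by
          have := Finset.card_lt_card hssub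
          omega
        have hz''ne : z'' ≠ 0 := by
          have hnsub : ¬ S ⊆ T := by
            intro h
            have := Finset.card_le_card h
            omega
          obtain ⟨j, hjS, hjT⟩ := Finset.not_subset.1 hnsub
          intro h
          have hj0 : z'' j = 0 := congrFun h j
          have hwj : w j = 0 := hwsupp j hjT
          rw [hz''def] at hj0
          simp only [hwj, mul_zero, sub_zero] at hj0
          exact ((hmemS j).1 hjS) hj0
        obtain ⟨z', hz'ne, hz'dep, hz'sum, hz'sign, hz'card⟩ :=
          ih z'' hcard'' hz''ne hz''dep hz''sum
        refine ⟨z', hz'ne, hz'dep, hz'sum, ?_, hz'card⟩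
        intro i
        rcases hz'sign i with h | h
        · exact Or.inl h
        rcases hsign i with h' | h'
        · left
          rw [h'] at h
          simp only [Real.sign_zero] at h
          exact Real.sign_eq_zero_iff.1 h
        · exact Or.inr (h.trans h')

/-- For a point set in general position in ℝ^d, every non-zero affine
dependency dominates (in sign pattern) a non-zero affine dependency with support of
size exactly d+2. -/
theorem stmt_0 (d n : ℕ) (P : Fin n → (Fin d → ℝ))
    (hgen : ∀ s : Finset (Fin n), s.card ≤ d + 1 →
      AffineIndependent ℝ (fun i : s => P i))
    (z : Fin n → ℝ) (hz : z ≠ 0)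
    (hdep : ∑ i, z i • P i = 0) (hsum : ∑ i, z i = 0) :
    ∃ z' : Fin n → ℝ, z' ≠ 0 ∧
      (∑ i, z' i • P i = 0) ∧ (∑ i, z' i = 0) ∧
      (∀ i, z' i = 0 ∨ Real.sign (z' i) = Real.sign (z i)) ∧
      (Finset.univ.filter (fun i => z' i ≠ 0)).card = d + 2 := by
  exact aux d n P hgen _ z le_rfl hz hdep hsum
end

section
/- Let P_1 and P_2 be finite point sets in R^d such that P_1 ∪ P_2 is in general position. If conv(P_1) ∩ conv(P_2) strictly contains conv(P_1 ∩ P_2), then there exist disjoint nonempty subsets Q_1 ⊆ P_1 and Q_2 ⊆ P_2 with |Q_1 ∪ Q_2| = d+2 and conv(Q_1) ∩ conv(Q_2) ≠ ∅. -/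
open Finset

variable {E : Type*} [AddCommGroup E] [Module ℝ E] [DecidableEq E]

/-- helper: drop a zero-weight point -/
lemma mem_convexHull_erase {s : Finset E} {w : E → ℝ} {x z : E}
    (h0 : ∀ y ∈ s, 0 ≤ w y) (h1 : ∑ y ∈ s, w y = 1) (hx : ∑ y ∈ s, w y • y = x)
    (hz : w z = 0) : x ∈ convexHull ℝ (↑(s.erase z) : Set E) := by
  refine Finset.mem_convexHull'.2 ⟨w, fun y hy => h0 y (Finset.mem_of_mem_erase hy), ?_, ?_⟩
  · rw [Finset.sum_erase _ hz]; exact h1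
  · rw [Finset.sum_erase _ (by rw [hz, zero_smul])]; exact hx

lemma cancel_common {A B : Finset E} {z x : E} (hzA : z ∈ A) (hzB : z ∈ B)
    {wA wB : E → ℝ}
    (hA0 : ∀ y ∈ A, 0 ≤ wA y) (hA1 : ∑ y ∈ A, wA y = 1) (hAx : ∑ y ∈ A, wA y • y = x)
    (hB0 : ∀ y ∈ B, 0 ≤ wB y) (hB1 : ∑ y ∈ B, wB y = 1) (hBx : ∑ y ∈ B, wB y • y = x)
    (hle : wA z ≤ wB z) (hx : x ∉ convexHull ℝ (↑(A ∩ B) : Set E)) :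
    ∃ x', x' ∈ convexHull ℝ (↑(A.erase z) : Set E) ∧ x' ∈ convexHull ℝ (↑B : Set E) ∧
      x' ∉ convexHull ℝ (↑((A.erase z) ∩ B) : Set E) := by
  set α := wA z with hα
  have hzAB : z ∈ A ∩ B := Finset.mem_inter.2 ⟨hzA, hzB⟩
  have hα0 : 0 ≤ α := hA0 z hzA
  have hα1 : α ≤ 1 := hA1 ▸ Finset.single_le_sum hA0 hzA
  have hαne : α ≠ 1 := by
    intro h
    apply hx
    have hsum : ∑ y ∈ A.erase z, wA y = 0 := by
      have := Finset.add_sum_erase A wA hzA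
      rw [hA1] at this; linarith [this]
    have hall : ∀ y ∈ A.erase z, wA y = 0 := by
      intro y hy
      exact (Finset.sum_eq_zero_iff_of_nonneg
        (fun y hy => hA0 y (Finset.mem_of_mem_erase hy))).1 hsum y hy
    have hxz : x = z := by
      rw [← hAx, ← Finset.add_sum_erase A _ hzA, Finset.sum_eq_zero
        (fun y hy => by rw [hall y hy, zero_smul]), add_zero, ← hα, h, one_smul]
    rw [hxz]
    exact subset_convexHull ℝ _ (by exact_mod_cast hzAB)
  have hαlt : α < 1 := lt_of_le_of_ne hα1 hαne
  have hc : (0:ℝ) < 1 - α := by linarith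
  set x' := (1 - α)⁻¹ • (x - α • z) with hx'
  have hxcomb : x = α • z + (1 - α) • x' := by
    rw [hx', smul_smul, mul_inv_cancel₀ (ne_of_gt hc), one_smul]; abel
  refine ⟨x', ?_, ?_, ?_⟩
  · -- x' ∈ conv (A.erase z)
    refine Finset.mem_convexHull'.2 ⟨fun y => (1 - α)⁻¹ * wA y, ?_, ?_, ?_⟩
    · exact fun y hy => mul_nonneg (le_of_lt (inv_pos.2 hc)) (hA0 y (Finset.mem_of_mem_erase hy))
    · rw [← Finset.mul_sum]
      have := Finset.add_sum_erase A wA hzA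
      rw [hA1] at this
      have : ∑ y ∈ A.erase z, wA y = 1 - α := by linarith
      rw [this, inv_mul_cancel₀ (ne_of_gt hc)]
    · have hvec : ∑ y ∈ A.erase z, wA y • y = x - α • z := by
        have := Finset.add_sum_erase A (fun y => wA y • y) hzA
        rw [hAx] at this
        have h2 : α • z + ∑ y ∈ A.erase z, wA y • y = x := this
        linear_combination (norm := module) h2
      calc ∑ y ∈ A.erase z, ((1 - α)⁻¹ * wA y) • y
          = (1-α)⁻¹ • ∑ y ∈ A.erase z, wA y • y := by
            rw [Finset.smul_sum]; exact Finset.sum_congr rfl (fun y _ => by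
              rw [smul_smul])
        _ = x' := by rw [hvec, hx']
  · -- x' ∈ conv B
    refine Finset.mem_convexHull'.2
      ⟨fun y => (1 - α)⁻¹ * (if y = z then wB z - α else wB y), ?_, ?_, ?_⟩
    · intro y hy
      refine mul_nonneg (le_of_lt (inv_pos.2 hc)) ?_
      split_ifs with h
      · linarith
      · exact hB0 y hy
    · rw [← Finset.mul_sum, ← Finset.add_sum_erase B _ hzB]
      have h1 : ∑ y ∈ B.erase z, (if y = z then wB z - α else wB y) = ∑ y ∈ B.erase z, wB y :=
        Finset.sum_congr rfl (fun y hy => by rw [if_neg (Finset.ne_of_mem_erase hy)])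
      have h2 := Finset.add_sum_erase B wB hzB
      rw [hB1] at h2
      rw [h1, if_pos rfl]
      have : wB z - α + ∑ y ∈ B.erase z, wB y = 1 - α := by linarith
      rw [this, inv_mul_cancel₀ (ne_of_gt hc)]
    · have h1 : ∑ y ∈ B.erase z, (if y = z then wB z - α else wB y) • y
          = ∑ y ∈ B.erase z, wB y • y :=
        Finset.sum_congr rfl (fun y hy => by rw [if_neg (Finset.ne_of_mem_erase hy)])
      have h2 := Finset.add_sum_erase B (fun y => wB y • y) hzB
      rw [hBx] at h2
      calc ∑ y ∈ B, ((1 - α)⁻¹ * (if y = z then wB z - α else wB y)) • y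
          = (1-α)⁻¹ • ∑ y ∈ B, (if y = z then wB z - α else wB y) • y := by
            rw [Finset.smul_sum]; exact Finset.sum_congr rfl (fun y _ => by rw [smul_smul])
        _ = (1-α)⁻¹ • ((wB z - α) • z + ∑ y ∈ B.erase z, wB y • y) := by
            rw [← Finset.add_sum_erase B _ hzB, if_pos rfl, h1]
        _ = (1-α)⁻¹ • (x - α • z) := by
            congr 1
            have h2' : wB z • z + ∑ y ∈ B.erase z, wB y • y = x := h2
            linear_combination (norm := module) h2'
        _ = x' := by rw [hx']
  · -- x' not in hull of intersection
    intro hmem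
    apply hx
    have hsub : (↑((A.erase z) ∩ B) : Set E) ⊆ (↑(A ∩ B) : Set E) := by
      intro y hy
      simp only [Finset.coe_inter, Set.mem_inter_iff, Finset.mem_coe] at hy ⊢
      exact ⟨Finset.mem_of_mem_erase hy.1, hy.2⟩
    have hz' : z ∈ convexHull ℝ (↑(A ∩ B) : Set E) :=
      subset_convexHull ℝ _ (by exact_mod_cast hzAB)
    have hx'' : x' ∈ convexHull ℝ (↑(A ∩ B) : Set E) :=
      convexHull_mono hsub hmem
    rw [hxcomb]
    exact (convex_convexHull ℝ _) hz' hx'' hα0 (le_of_lt hc) (by ring)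
lemma exists_kernel {d : ℕ} (U : Finset (Fin d → ℝ)) (hcard : d + 3 ≤ U.card)
    (ε ia ib : (Fin d → ℝ) → ℝ) :
    ∃ C : (Fin d → ℝ) → ℝ, (∃ y ∈ U, C y ≠ 0) ∧ (∑ y ∈ U, C y • ε y • y = 0) ∧
      (∑ y ∈ U, C y * ia y = 0) ∧ (∑ y ∈ U, C y * ib y = 0) := by
  classical
  set L : (↥U → ℝ) →ₗ[ℝ] (Fin d → ℝ) × ℝ × ℝ :=
    { toFun := fun c => (∑ i : ↥U, c i • ε (i : Fin d → ℝ) • (i : Fin d → ℝ),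
        ∑ i : ↥U, c i * ia (i : Fin d → ℝ), ∑ i : ↥U, c i * ib (i : Fin d → ℝ))
      map_add' := by
        intro c₁ c₂
        simp [add_smul, add_mul, Finset.sum_add_distrib, Prod.ext_iff]
      map_smul' := by
        intro r c
        simp [smul_smul, mul_assoc, Finset.mul_sum, Prod.ext_iff, Finset.smul_sum] } with hL
  have hdim : ¬ LinearMap.ker L = ⊥ := by
    rw [LinearMap.ker_eq_bot]
    intro hinj
    have h1 := LinearMap.finrank_le_finrank_of_injective hinj
    rw [Module.finrank_fintype_fun_eq_card, Fintype.card_coe] at h1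
    have h2 : Module.finrank ℝ ((Fin d → ℝ) × ℝ × ℝ) = d + 2 := by
      rw [Module.finrank_prod, Module.finrank_prod, Module.finrank_fintype_fun_eq_card,
        Fintype.card_fin, Module.finrank_self]
    omega
  obtain ⟨c, hcker, hcne⟩ := Submodule.exists_mem_ne_zero_of_ne_bot hdim
  set C : (Fin d → ℝ) → ℝ := fun y => if h : y ∈ U then c ⟨y, h⟩ else 0 with hC
  have hCc : ∀ i : ↥U, C (i : Fin d → ℝ) = c i := by
    intro i; rw [hC]; simp only [i.2, dif_pos]
  have hLc : L c = 0 := hcker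
  rw [hL] at hLc
  simp only [LinearMap.coe_mk, AddHom.coe_mk, Prod.ext_iff, Prod.fst_zero, Prod.snd_zero] at hLc
  obtain ⟨hvec, hsa, hsb⟩ := hLc
  refine ⟨C, ?_, ?_, ?_, ?_⟩
  · obtain ⟨i, hi⟩ := Function.ne_iff.1 hcne
    exact ⟨(i : Fin d → ℝ), i.2, by rw [hCc]; simpa using hi⟩
  · rw [← hvec, ← Finset.sum_coe_sort U (fun y => C y • ε y • y)]
    exact Finset.sum_congr rfl fun i _ => by rw [hCc]
  · rw [← hsa, ← Finset.sum_coe_sort U (fun y => C y * ia y)]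
    exact Finset.sum_congr rfl fun i _ => by rw [hCc]
  · rw [← hsb, ← Finset.sum_coe_sort U (fun y => C y * ib y)]
    exact Finset.sum_congr rfl fun i _ => by rw [hCc]

lemma exists_neg_coeff {E : Type*} (C : E → ℝ) {S : Finset E} {y₀ : E}
    (hy₀ : y₀ ∈ S) (hne : C y₀ ≠ 0) (hsum : ∑ y ∈ S, C y = 0) : ∃ y ∈ S, C y < 0 := by
  by_contra h
  push_neg at h
  exact hne ((Finset.sum_eq_zero_iff_of_nonneg h).1 hsum y₀ hy₀)

lemma radon_shrink {d : ℕ} {A B : Finset (Fin d → ℝ)} (hd : Disjoint A B)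
    (hcard : d + 3 ≤ A.card + B.card) {x : Fin d → ℝ}
    (hxA : x ∈ convexHull ℝ (↑A : Set (Fin d → ℝ)))
    (hxB : x ∈ convexHull ℝ (↑B : Set (Fin d → ℝ))) :
    ∃ A' B' : Finset (Fin d → ℝ), A' ⊆ A ∧ B' ⊆ B ∧
      A'.card + B'.card < A.card + B.card ∧
      (convexHull ℝ (↑A' : Set (Fin d → ℝ)) ∩ convexHull ℝ (↑B' : Set (Fin d → ℝ))).Nonempty := by
  classical
  obtain ⟨wA, hA0, hA1, hAx⟩ := Finset.mem_convexHull'.1 hxA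
  obtain ⟨wB, hB0, hB1, hBx⟩ := Finset.mem_convexHull'.1 hxB
  have hcardU : d + 3 ≤ (A ∪ B).card := by
    rw [Finset.card_union_of_disjoint hd]; exact hcard
  obtain ⟨C, ⟨y₀, hy₀U, hy₀⟩, hvec, hsa, hsb⟩ := exists_kernel (A ∪ B) hcardU
    (fun y => if y ∈ A then 1 else -1) (fun y => if y ∈ A then 1 else 0)
    (fun y => if y ∈ B then 1 else 0)
  have hnAB : ∀ y ∈ B, y ∉ A := fun y hy => Finset.disjoint_right.1 hd hy
  have hnBA : ∀ y ∈ A, y ∉ B := fun y hy => Finset.disjoint_left.1 hd hy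
  -- the three equations
  have hsA : ∑ y ∈ A, C y = 0 := by
    rw [Finset.sum_union hd] at hsa
    have e1 : ∑ y ∈ A, C y * (if y ∈ A then (1:ℝ) else 0) = ∑ y ∈ A, C y :=
      Finset.sum_congr rfl fun y hy => by simp [hy]
    have e2 : ∑ y ∈ B, C y * (if y ∈ A then (1:ℝ) else 0) = 0 :=
      Finset.sum_eq_zero fun y hy => by simp [hnAB y hy]
    rw [e1, e2, add_zero] at hsa
    exact hsa
  have hsB : ∑ y ∈ B, C y = 0 := by
    rw [Finset.sum_union hd] at hsb
    have e1 : ∑ y ∈ B, C y * (if y ∈ B then (1:ℝ) else 0) = ∑ y ∈ B, C y :=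
      Finset.sum_congr rfl fun y hy => by simp [hy]
    have e2 : ∑ y ∈ A, C y * (if y ∈ B then (1:ℝ) else 0) = 0 :=
      Finset.sum_eq_zero fun y hy => by simp [hnBA y hy]
    rw [e1, e2, zero_add] at hsb
    exact hsb
  have hvAB : ∑ y ∈ A, C y • y = ∑ y ∈ B, C y • y := by
    rw [Finset.sum_union hd] at hvec
    have e1 : ∑ y ∈ A, C y • (if y ∈ A then (1:ℝ) else -1) • y = ∑ y ∈ A, C y • y :=
      Finset.sum_congr rfl fun y hy => by simp [hy]
    have e2 : ∑ y ∈ B, C y • (if y ∈ A then (1:ℝ) else -1) • y = ∑ y ∈ B, -(C y • y) :=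
      Finset.sum_congr rfl fun y hy => by simp [hnAB y hy]
    rw [e1, e2, Finset.sum_neg_distrib] at hvec
    linear_combination (norm := module) hvec
  -- some negative coefficient
  have hNne : ∃ y ∈ A ∪ B, C y < 0 := by
    rw [Finset.mem_union] at hy₀U
    rcases hy₀U with h | h
    · obtain ⟨y, hy, hylt⟩ := exists_neg_coeff C h hy₀ hsA
      exact ⟨y, Finset.mem_union_left _ hy, hylt⟩
    · obtain ⟨y, hy, hylt⟩ := exists_neg_coeff C h hy₀ hsB
      exact ⟨y, Finset.mem_union_right _ hy, hylt⟩
  set N := (A ∪ B).filter (fun y => C y < 0) with hN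
  have hNne' : N.Nonempty := by
    obtain ⟨y, hy, hylt⟩ := hNne
    exact ⟨y, Finset.mem_filter.2 ⟨hy, hylt⟩⟩
  -- combined weights
  set W : (Fin d → ℝ) → ℝ := fun y => if y ∈ A then wA y else wB y with hW
  have hWA : ∀ y ∈ A, W y = wA y := fun y hy => by rw [hW]; simp [hy]
  have hWB : ∀ y ∈ B, W y = wB y := fun y hy => by rw [hW]; simp [hnAB y hy]
  have hW0 : ∀ y ∈ A ∪ B, 0 ≤ W y := by
    intro y hy
    rw [Finset.mem_union] at hy
    rcases hy with h | h
    · rw [hWA y h]; exact hA0 y h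
    · rw [hWB y h]; exact hB0 y h
  obtain ⟨m, hmN, hmin⟩ := N.exists_min_image (fun y => W y / (-C y)) hNne'
  have hmU : m ∈ A ∪ B := (Finset.mem_filter.1 hmN).1
  have hCm : C m < 0 := (Finset.mem_filter.1 hmN).2
  set t := W m / (-C m) with ht
  have ht0 : 0 ≤ t := div_nonneg (hW0 m hmU) (by linarith)
  have htm : t * (-C m) = W m := div_mul_cancel₀ _ (by linarith)
  set w' : (Fin d → ℝ) → ℝ := fun y => W y + t * C y with hw'
  have hw'0 : ∀ y ∈ A ∪ B, 0 ≤ w' y := by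
    intro y hy
    rw [hw']
    by_cases h : C y < 0
    · have hyN : y ∈ N := Finset.mem_filter.2 ⟨hy, h⟩
      have h1 := hmin y hyN
      rw [div_le_div_iff₀ (by linarith) (by linarith)] at h1
      have key : 0 ≤ (W y + t * C y) * (-C m) := by nlinarith [htm]
      simp only
      nlinarith [key, hCm]
    · push_neg at h
      have := hW0 y hy
      simp only
      nlinarith
  have hw'm : w' m = 0 := by
    rw [hw']
    simp only
    nlinarith [htm]
  have hsumA' : ∑ y ∈ A, w' y = 1 := by
    rw [hw']
    rw [Finset.sum_add_distrib, ← Finset.mul_sum, hsA, mul_zero, add_zero]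
    rw [Finset.sum_congr rfl hWA]; exact hA1
  have hsumB' : ∑ y ∈ B, w' y = 1 := by
    rw [hw']
    rw [Finset.sum_add_distrib, ← Finset.mul_sum, hsB, mul_zero, add_zero]
    rw [Finset.sum_congr rfl hWB]; exact hB1
  set x' := x + t • (∑ y ∈ A, C y • y) with hx'
  have hvecA : ∑ y ∈ A, w' y • y = x' := by
    rw [hw', hx']
    have h3 : ∀ y ∈ A, (W y + t * C y) • y = wA y • y + t • (C y • y) := fun y hy => by
      rw [hWA y hy, add_smul, smul_smul]
    rw [Finset.sum_congr rfl h3, Finset.sum_add_distrib, ← Finset.smul_sum, hAx]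
  have hvecB : ∑ y ∈ B, w' y • y = x' := by
    rw [hw', hx']
    have h3 : ∀ y ∈ B, (W y + t * C y) • y = wB y • y + t • (C y • y) := fun y hy => by
      rw [hWB y hy, add_smul, smul_smul]
    rw [Finset.sum_congr rfl h3, Finset.sum_add_distrib, ← Finset.smul_sum, hBx, ← hvAB]
  -- conclude
  have hx'A : x' ∈ convexHull ℝ (↑A : Set (Fin d → ℝ)) :=
    Finset.mem_convexHull'.2 ⟨w', fun y hy => hw'0 y (Finset.mem_union_left _ hy), hsumA', hvecA⟩
  have hx'B : x' ∈ convexHull ℝ (↑B : Set (Fin d → ℝ)) :=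
    Finset.mem_convexHull'.2 ⟨w', fun y hy => hw'0 y (Finset.mem_union_right _ hy), hsumB', hvecB⟩
  rw [Finset.mem_union] at hmU
  rcases hmU with hm | hm
  · refine ⟨A.erase m, B, Finset.erase_subset _ _, le_refl _, ?_, x', ?_, hx'B⟩
    · rw [Finset.card_erase_of_mem hm]
      have : 1 ≤ A.card := Finset.card_pos.2 ⟨m, hm⟩
      omega
    · exact mem_convexHull_erase (fun y hy => hw'0 y (Finset.mem_union_left _ hy)) hsumA'
        hvecA hw'm
  · refine ⟨A, B.erase m, le_refl _, Finset.erase_subset _ _, ?_, x', hx'A, ?_⟩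
    · rw [Finset.card_erase_of_mem hm]
      have : 1 ≤ B.card := Finset.card_pos.2 ⟨m, hm⟩
      omega
    · exact mem_convexHull_erase (fun y hy => hw'0 y (Finset.mem_union_right _ hy)) hsumB'
        hvecB hw'm
lemma shrink_main {d : ℕ} : ∀ n : ℕ, ∀ Q₁ Q₂ : Finset (Fin d → ℝ),
    Q₁.card + Q₂.card = n →
    (∃ x, x ∈ convexHull ℝ (↑Q₁ : Set (Fin d → ℝ)) ∧ x ∈ convexHull ℝ (↑Q₂ : Set (Fin d → ℝ)) ∧
      x ∉ convexHull ℝ (↑(Q₁ ∩ Q₂) : Set (Fin d → ℝ))) →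
    ∃ R₁ R₂ : Finset (Fin d → ℝ), R₁ ⊆ Q₁ ∧ R₂ ⊆ Q₂ ∧ R₁.Nonempty ∧ R₂.Nonempty ∧
      Disjoint R₁ R₂ ∧ R₁.card + R₂.card ≤ d + 2 ∧
      (convexHull ℝ (↑R₁ : Set (Fin d → ℝ)) ∩ convexHull ℝ (↑R₂ : Set (Fin d → ℝ))).Nonempty := by
  intro n
  induction n using Nat.strong_induction_on with
  | _ n ih =>
    intro Q₁ Q₂ hn ⟨x, hx1, hx2, hx3⟩
    have hQ₁ne : Q₁.Nonempty := by
      rcases Finset.eq_empty_or_nonempty Q₁ with h | h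
      · rw [h] at hx1; simp at hx1
      · exact h
    have hQ₂ne : Q₂.Nonempty := by
      rcases Finset.eq_empty_or_nonempty Q₂ with h | h
      · rw [h] at hx2; simp at hx2
      · exact h
    by_cases hint : (Q₁ ∩ Q₂).Nonempty
    · -- cancel a common point
      obtain ⟨z, hz⟩ := hint
      have hzA : z ∈ Q₁ := (Finset.mem_inter.1 hz).1
      have hzB : z ∈ Q₂ := (Finset.mem_inter.1 hz).2
      obtain ⟨wA, hA0, hA1, hAx⟩ := Finset.mem_convexHull'.1 hx1
      obtain ⟨wB, hB0, hB1, hBx⟩ := Finset.mem_convexHull'.1 hx2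
      rcases le_total (wA z) (wB z) with hle | hle
      · obtain ⟨x', h1, h2, h3⟩ := cancel_common hzA hzB hA0 hA1 hAx hB0 hB1 hBx hle hx3
        obtain ⟨R₁, R₂, hR1, hR2, hRn1, hRn2, hRd, hRc, hRne⟩ :=
          ih ((Q₁.erase z).card + Q₂.card)
            (by rw [Finset.card_erase_of_mem hzA]
                have : 1 ≤ Q₁.card := Finset.card_pos.2 hQ₁ne
                omega)
            (Q₁.erase z) Q₂ rfl ⟨x', h1, h2, h3⟩
        exact ⟨R₁, R₂, hR1.trans (Finset.erase_subset _ _), hR2, hRn1, hRn2, hRd, hRc, hRne⟩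
      · have hx3' : x ∉ convexHull ℝ (↑(Q₂ ∩ Q₁) : Set (Fin d → ℝ)) := by
          rw [Finset.inter_comm]; exact hx3
        obtain ⟨x', h1, h2, h3⟩ := cancel_common hzB hzA hB0 hB1 hBx hA0 hA1 hAx hle hx3'
        have h3' : x' ∉ convexHull ℝ (↑(Q₁ ∩ (Q₂.erase z)) : Set (Fin d → ℝ)) := by
          rw [Finset.inter_comm]; exact h3
        obtain ⟨R₁, R₂, hR1, hR2, hRn1, hRn2, hRd, hRc, hRne⟩ :=
          ih (Q₁.card + (Q₂.erase z).card)
            (by rw [Finset.card_erase_of_mem hzB]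
                have : 1 ≤ Q₂.card := Finset.card_pos.2 hQ₂ne
                omega)
            Q₁ (Q₂.erase z) rfl ⟨x', h2, h1, h3'⟩
        exact ⟨R₁, R₂, hR1, hR2.trans (Finset.erase_subset _ _), hRn1, hRn2, hRd, hRc, hRne⟩
    · -- disjoint case
      have hdisj : Disjoint Q₁ Q₂ := by
        rw [Finset.disjoint_iff_inter_eq_empty, ← Finset.not_nonempty_iff_eq_empty]
        exact hint
      by_cases hsize : Q₁.card + Q₂.card ≤ d + 2
      · exact ⟨Q₁, Q₂, le_refl _, le_refl _, hQ₁ne, hQ₂ne, hdisj, hsize, x, hx1, hx2⟩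
      · have hsize' : d + 3 ≤ Q₁.card + Q₂.card := by omega
        obtain ⟨A', B', hA', hB', hcard', x'', hx''1, hx''2⟩ :=
          radon_shrink hdisj hsize' hx1 hx2
        have hx''3 : x'' ∉ convexHull ℝ (↑(A' ∩ B') : Set (Fin d → ℝ)) := by
          have : A' ∩ B' = ∅ := by
            rw [← Finset.subset_empty, ← Finset.disjoint_iff_inter_eq_empty.1 hdisj]
            exact Finset.inter_subset_inter hA' hB'
          rw [this]
          simp
        obtain ⟨R₁, R₂, hR1, hR2, hRn1, hRn2, hRd, hRc, hRne⟩ :=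
          ih (A'.card + B'.card) (by omega) A' B' rfl ⟨x'', hx''1, hx''2, hx''3⟩
        exact ⟨R₁, R₂, hR1.trans hA', hR2.trans hB', hRn1, hRn2, hRd, hRc, hRne⟩

lemma pad_up {d : ℕ} (P₁ P₂ : Finset (Fin d → ℝ)) (hP : d + 2 ≤ (P₁ ∪ P₂).card) :
    ∀ k : ℕ, ∀ R₁ R₂ : Finset (Fin d → ℝ), R₁ ⊆ P₁ → R₂ ⊆ P₂ → R₁.Nonempty → R₂.Nonempty →
    Disjoint R₁ R₂ → R₁.card + R₂.card + k = d + 2 →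
    (convexHull ℝ (↑R₁ : Set (Fin d → ℝ)) ∩ convexHull ℝ (↑R₂ : Set (Fin d → ℝ))).Nonempty →
    ∃ Q₁ Q₂ : Finset (Fin d → ℝ), Q₁ ⊆ P₁ ∧ Q₂ ⊆ P₂ ∧ Q₁.Nonempty ∧ Q₂.Nonempty ∧
      Disjoint Q₁ Q₂ ∧ (Q₁ ∪ Q₂).card = d + 2 ∧
      (convexHull ℝ (↑Q₁ : Set (Fin d → ℝ)) ∩ convexHull ℝ (↑Q₂ : Set (Fin d → ℝ))).Nonempty := by
  intro k
  induction k with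
  | zero =>
    intro R₁ R₂ h1 h2 h3 h4 h5 h6 h7
    exact ⟨R₁, R₂, h1, h2, h3, h4, h5, by rw [Finset.card_union_of_disjoint h5]; omega, h7⟩
  | succ k ihk =>
    intro R₁ R₂ h1 h2 h3 h4 h5 h6 h7
    have hsub : R₁ ∪ R₂ ⊆ P₁ ∪ P₂ := Finset.union_subset_union h1 h2
    have hlt : (R₁ ∪ R₂).card < (P₁ ∪ P₂).card := by
      rw [Finset.card_union_of_disjoint h5]; omega
    obtain ⟨p, hpP, hpR⟩ := Finset.exists_of_ssubset (Finset.ssubset_iff_subset_ne.2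
      ⟨hsub, fun h => by rw [h] at hlt; omega⟩)
    have hpR1 : p ∉ R₁ := fun h => hpR (Finset.mem_union_left _ h)
    have hpR2 : p ∉ R₂ := fun h => hpR (Finset.mem_union_right _ h)
    rcases Finset.mem_union.1 hpP with hp | hp
    · refine ihk (insert p R₁) R₂ (Finset.insert_subset hp h1) h2
        (Finset.insert_nonempty _ _) h4 ?_ ?_ ?_
      · rw [Finset.disjoint_insert_left]
        exact ⟨hpR2, h5⟩
      · rw [Finset.card_insert_of_notMem hpR1]; omega
      · obtain ⟨y, hy1, hy2⟩ := h7
        exact ⟨y, convexHull_mono (by exact_mod_cast Finset.subset_insert p R₁) hy1, hy2⟩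
    · refine ihk R₁ (insert p R₂) h1 (Finset.insert_subset hp h2) h3
        (Finset.insert_nonempty _ _) ?_ ?_ ?_
      · rw [Finset.disjoint_insert_right]
        exact ⟨hpR1, h5⟩
      · rw [Finset.card_insert_of_notMem hpR2]; omega
      · obtain ⟨y, hy1, hy2⟩ := h7
        exact ⟨y, hy1, convexHull_mono (by exact_mod_cast Finset.subset_insert p R₂) hy2⟩

/-- If P₁ ∪ P₂ is in general position in ℝ^d and
conv(P₁) ∩ conv(P₂) strictly contains conv(P₁ ∩ P₂), then there are disjoint
nonempty Q₁ ⊆ P₁, Q₂ ⊆ P₂ with |Q₁ ∪ Q₂| = d+2 and conv(Q₁) ∩ conv(Q₂) ≠ ∅. -/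
theorem stmt_1 (d : ℕ) (P₁ P₂ : Finset (Fin d → ℝ))
    (hgen : ∀ s : Finset (Fin d → ℝ), s ⊆ P₁ ∪ P₂ → s.card ≤ d + 1 →
      AffineIndependent ℝ (fun x : s => (x : Fin d → ℝ)))
    (hstrict : convexHull ℝ (↑(P₁ ∩ P₂) : Set (Fin d → ℝ)) ⊂
      convexHull ℝ (↑P₁ : Set (Fin d → ℝ)) ∩ convexHull ℝ (↑P₂ : Set (Fin d → ℝ))) :
    ∃ Q₁ Q₂ : Finset (Fin d → ℝ), Q₁ ⊆ P₁ ∧ Q₂ ⊆ P₂ ∧ Q₁.Nonempty ∧ Q₂.Nonempty ∧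
      Disjoint Q₁ Q₂ ∧ (Q₁ ∪ Q₂).card = d + 2 ∧
      (convexHull ℝ (↑Q₁ : Set (Fin d → ℝ)) ∩
        convexHull ℝ (↑Q₂ : Set (Fin d → ℝ))).Nonempty := by
  classical
  obtain ⟨x, hxmem, hxnot⟩ := Set.exists_of_ssubset hstrict
  have hP : d + 2 ≤ (P₁ ∪ P₂).card := by
    by_contra h
    push_neg at h
    have hai := hgen (P₁ ∪ P₂) (le_refl _) (by omega)
    have h1 := hai.convexHull_inter (R := ℝ) Finset.subset_union_left
      Finset.subset_union_right
    have h2 : convexHull ℝ (↑(P₁ ∩ P₂) : Set (Fin d → ℝ)) =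
        convexHull ℝ (↑P₁ : Set (Fin d → ℝ)) ∩ convexHull ℝ (↑P₂ : Set (Fin d → ℝ)) := by
      simp only [Finset.coe_inter]; exact h1
    exact (ne_of_ssubset hstrict) h2
  obtain ⟨R₁, R₂, hR1, hR2, hRn1, hRn2, hRd, hRc, hRne⟩ :=
    shrink_main (P₁.card + P₂.card) P₁ P₂ rfl
      ⟨x, hxmem.1, hxmem.2, hxnot⟩
  exact pad_up P₁ P₂ hP (d + 2 - (R₁.card + R₂.card)) R₁ R₂ hR1 hR2 hRn1 hRn2 hRd
    (by omega) hRne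
end

section
/- Let A and B be disjoint finite point sets on the moment curve γ_d(t) = (t, t^2, ..., t^d) in R^d with |A ∪ B| = d+2. Order the points of A ∪ B as p_1, ..., p_{d+2} by their parameter values on γ_d, with p_1 ∈ A. Then conv(A) ∩ conv(B) ≠ ∅ if and only if A and B interlace, i.e., p_i ∈ A for all odd i and p_i ∈ B for all even i. -/
/-- The moment curve in ℝ^d. -/
noncomputable def momentCurve (d : ℕ) (t : ℝ) : Fin d → ℝ := fun i => t ^ ((i : ℕ) + 1)

namespace Stmt2Aux

open Finset Polynomial

variable {d : ℕ}

noncomputable def lam (t : Fin (d + 2) → ℝ) (i : Fin (d + 2)) : ℝ :=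
  (∏ j ∈ Finset.univ.erase i, (t i - t j))⁻¹

lemma lam_ne_zero {t : Fin (d + 2) → ℝ} (ht : Function.Injective t) (i : Fin (d + 2)) :
    lam t i ≠ 0 := by
  rw [lam, ne_eq, inv_eq_zero, Finset.prod_eq_zero_iff]
  rintro ⟨j, hj, hij⟩
  rw [Finset.mem_erase] at hj
  exact hj.1.symm (ht (sub_eq_zero.mp hij))

lemma key {t : Fin (d + 2) → ℝ} (ht : Function.Injective t) (k : ℕ) (hk : k < d + 1) :
    ∑ i, lam t i * t i ^ k = 0 := by
  classical
  have hinj : Set.InjOn t ↑(Finset.univ : Finset (Fin (d + 2))) := ht.injOn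
  have hcard : #(Finset.univ : Finset (Fin (d + 2))) = d + 2 := by simp
  have hdeg : ((X : ℝ[X]) ^ k).degree < #(Finset.univ : Finset (Fin (d + 2))) := by
    rw [degree_X_pow, hcard]
    exact_mod_cast (by omega : k < d + 2)
  have h := Lagrange.eq_interpolate (v := t) hinj hdeg
  have hco := congrArg (fun p => Polynomial.coeff p (d + 1)) h
  simp only [Lagrange.interpolate_apply, Polynomial.finset_sum_coeff,
    Polynomial.coeff_C_mul, Polynomial.coeff_X_pow] at hco
  have hbasis : ∀ i : Fin (d + 2), (Lagrange.basis Finset.univ t i).coeff (d + 1) = lam t i := by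
    intro i
    have hnd : (Lagrange.basis Finset.univ t i).natDegree = d + 1 := by
      rw [Lagrange.natDegree_basis hinj (Finset.mem_univ i), hcard]
      omega
    have hcl : (Lagrange.basis Finset.univ t i).coeff (d + 1) =
        (Lagrange.basis Finset.univ t i).leadingCoeff := by
      rw [Polynomial.leadingCoeff, hnd]
    rw [hcl, Lagrange.basis, Polynomial.leadingCoeff_prod, lam, ← Finset.prod_inv_distrib]
    refine Finset.prod_congr rfl fun j hj => ?_
    rw [Lagrange.basisDivisor, Polynomial.leadingCoeff_mul, Polynomial.leadingCoeff_C,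
      Polynomial.leadingCoeff_X_sub_C, mul_one]
  rw [if_neg (by omega : ¬ d + 1 = k)] at hco
  simp only [hbasis, eval_pow, eval_X] at hco
  rw [eq_comm] at hco
  rw [← hco]
  exact Finset.sum_congr rfl fun i _ => mul_comm _ _

lemma sign_lam {t : Fin (d + 2) → ℝ} (ht : StrictMono t) (i : Fin (d + 2)) :
    0 < (-1 : ℝ) ^ (d + 1 + (i : ℕ)) * lam t i := by
  have hsplit : Finset.univ.erase i = Finset.Iio i ∪ Finset.Ioi i := by
    ext j
    simp only [Finset.mem_erase, Finset.mem_univ, and_true, Finset.mem_union,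
      Finset.mem_Iio, Finset.mem_Ioi]
    exact ne_iff_lt_or_gt
  have hdisj : Disjoint (Finset.Iio i) (Finset.Ioi i) := by
    rw [Finset.disjoint_left]
    intro j hj hj'
    exact absurd (Finset.mem_Ioi.mp hj') (not_lt.mpr (le_of_lt (Finset.mem_Iio.mp hj)))
  have hP : ∏ j ∈ Finset.univ.erase i, (t i - t j)
      = (∏ j ∈ Finset.Iio i, (t i - t j)) * ∏ j ∈ Finset.Ioi i, (t i - t j) := by
    rw [hsplit, Finset.prod_union hdisj]
  have h1 : 0 < ∏ j ∈ Finset.Iio i, (t i - t j) :=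
    Finset.prod_pos fun j hj => sub_pos.mpr (ht (Finset.mem_Iio.mp hj))
  have h2 : ∏ j ∈ Finset.Ioi i, (t i - t j)
      = (-1 : ℝ) ^ (d + 2 - 1 - (i : ℕ)) * ∏ j ∈ Finset.Ioi i, (t j - t i) := by
    rw [Finset.prod_congr rfl (fun j _ => (by ring : t i - t j = (-1) * (t j - t i))),
      Finset.prod_mul_distrib, Finset.prod_const, Fin.card_Ioi]
  have h3 : 0 < ∏ j ∈ Finset.Ioi i, (t j - t i) :=
    Finset.prod_pos fun j hj => sub_pos.mpr (ht (Finset.mem_Ioi.mp hj))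
  have hQ : 0 < (∏ j ∈ Finset.Iio i, (t i - t j)) * ∏ j ∈ Finset.Ioi i, (t j - t i) :=
    mul_pos h1 h3
  have hinv : ((-1 : ℝ) ^ (d + 2 - 1 - (i : ℕ)))⁻¹ = (-1 : ℝ) ^ (d + 2 - 1 - (i : ℕ)) := by
    rw [← inv_pow, inv_neg, inv_one]
  have hlam : lam t i = (-1 : ℝ) ^ (d + 2 - 1 - (i : ℕ)) *
      ((∏ j ∈ Finset.Iio i, (t i - t j)) * ∏ j ∈ Finset.Ioi i, (t j - t i))⁻¹ := by
    rw [lam, hP, h2, show (∏ j ∈ Finset.Iio i, (t i - t j)) *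
        ((-1 : ℝ) ^ (d + 2 - 1 - (i : ℕ)) * ∏ j ∈ Finset.Ioi i, (t j - t i))
      = (-1 : ℝ) ^ (d + 2 - 1 - (i : ℕ)) *
        ((∏ j ∈ Finset.Iio i, (t i - t j)) * ∏ j ∈ Finset.Ioi i, (t j - t i)) from by ring,
      mul_inv, hinv]
  have hone : (-1 : ℝ) ^ (d + 1 + (i : ℕ)) * (-1 : ℝ) ^ (d + 2 - 1 - (i : ℕ)) = 1 := by
    rw [← pow_add]
    have hi := i.isLt
    rw [show (d + 1 + (i : ℕ)) + (d + 2 - 1 - (i : ℕ)) = 2 * (d + 1) by omega]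
    exact Even.neg_one_pow ⟨d + 1, by ring⟩
  rw [hlam, ← mul_assoc, hone, one_mul]
  exact inv_pos.mpr hQ

lemma unique {t : Fin (d + 2) → ℝ} (ht : Function.Injective t) {μ : Fin (d + 2) → ℝ}
    (hm : ∀ k, k < d + 1 → ∑ i, μ i * t i ^ k = 0) (h0 : μ 0 = 0) : μ = 0 := by
  have h : (fun j : Fin (d + 1) => μ j.succ) = 0 := by
    apply Matrix.eq_zero_of_forall_pow_sum_mul_pow_eq_zero (f := fun j : Fin (d + 1) => t j.succ)
    · intro a b hab
      exact Fin.succ_injective _ (ht hab)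
    · intro k
      have hk := hm k k.isLt
      rw [Fin.sum_univ_succ] at hk
      simpa [h0] using hk
  funext i
  induction i using Fin.cases with
  | zero => exact h0
  | succ j => exact congrFun h j

lemma eq_smul_lam {t : Fin (d + 2) → ℝ} (ht : Function.Injective t) {μ : Fin (d + 2) → ℝ}
    (hm : ∀ k, k < d + 1 → ∑ i, μ i * t i ^ k = 0) :
    μ = (μ 0 / lam t 0) • lam t := by
  have hδ : μ - (μ 0 / lam t 0) • lam t = 0 := by
    apply unique ht
    · intro k hk
      simp only [Pi.sub_apply, Pi.smul_apply, smul_eq_mul, sub_mul]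
      rw [Finset.sum_sub_distrib, hm k hk]
      have : ∑ i, μ 0 / lam t 0 * lam t i * t i ^ k
          = μ 0 / lam t 0 * ∑ i, lam t i * t i ^ k := by
        rw [Finset.mul_sum]
        exact Finset.sum_congr rfl fun i _ => by ring
      rw [this, key ht k hk, mul_zero, sub_zero]
    · simp only [Pi.sub_apply, Pi.smul_apply, smul_eq_mul]
      rw [div_mul_cancel₀ _ (lam_ne_zero ht 0), sub_self]
  exact sub_eq_zero.mp hδ

lemma exists_weights {n : ℕ} (f : Fin n → (Fin d → ℝ)) (S : Set (Fin n))
    {x : Fin d → ℝ} (hx : x ∈ convexHull ℝ (f '' S)) :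
    ∃ a : Fin n → ℝ, (∀ j, 0 ≤ a j) ∧ (∀ j, j ∉ S → a j = 0) ∧ ∑ j, a j = 1 ∧
      ∑ j, a j • f j = x := by
  classical
  rw [_root_.convexHull_eq] at hx
  obtain ⟨ι, s, w, z, hw0, hw1, hz, hx⟩ := hx
  have hg : ∀ i : { i // i ∈ s }, ∃ j, j ∈ S ∧ f j = z i.1 := by
    rintro ⟨i, hi⟩
    obtain ⟨j, hj, hfj⟩ := hz i hi
    exact ⟨j, hj, hfj⟩
  choose g hgS hgf using hg
  refine ⟨fun j => ∑ i ∈ s.attach.filter (fun i => g i = j), w i.1, ?_, ?_, ?_, ?_⟩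
  · intro j
    exact Finset.sum_nonneg fun i hi => hw0 i.1 i.2
  · intro j hj
    refine Finset.sum_eq_zero ?_
    intro i hi
    rw [Finset.mem_filter] at hi
    exact absurd (hi.2 ▸ hgS i) hj
  · rw [Finset.sum_fiberwise_of_maps_to (fun i _ => Finset.mem_univ (g i))]
    rw [Finset.sum_attach s (fun i => w i)]
    exact hw1
  · have hstep : ∀ j : Fin n, (∑ i ∈ s.attach.filter (fun i => g i = j), w i.1) • f j
        = ∑ i ∈ s.attach.filter (fun i => g i = j), w i.1 • z i.1 := by
      intro j
      rw [Finset.sum_smul]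
      refine Finset.sum_congr rfl fun i hi => ?_
      rw [Finset.mem_filter] at hi
      rw [← hgf i, hi.2]
    rw [Finset.sum_congr rfl fun j _ => hstep j,
      Finset.sum_fiberwise_of_maps_to (fun i _ => Finset.mem_univ (g i)),
      Finset.sum_attach s (fun i => w i • z i)]
    rw [← hx, Finset.centerMass_eq_of_sum_1 _ _ hw1]

end Stmt2Aux

open Stmt2Aux Finset

/-- For d+2 points on the moment curve split into two disjoint
parts A (containing the first point) and B, the convex hulls of A and B intersect
iff A and B interlace along the curve (A takes the odd positions, B the even ones,
in 1-based counting). -/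
theorem stmt_2 (d : ℕ) (t : Fin (d + 2) → ℝ) (ht : StrictMono t)
    (S : Set (Fin (d + 2))) (h0 : (0 : Fin (d + 2)) ∈ S)
    (A B : Set (Fin d → ℝ))
    (hA : A = (fun i => momentCurve d (t i)) '' S)
    (hB : B = (fun i => momentCurve d (t i)) '' Sᶜ) :
    (convexHull ℝ A ∩ convexHull ℝ B).Nonempty ↔
      (∀ i : Fin (d + 2), i ∈ S ↔ Even (i : ℕ)) := by
  classical
  subst hA hB
  have htinj : Function.Injective t := ht.injective
  have hu : (-1 : ℝ) ^ (d + 1) * (-1 : ℝ) ^ (d + 1) = 1 := by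
    rw [← pow_add]
    exact Even.neg_one_pow ⟨d + 1, by ring⟩
  have hsign : ∀ i : Fin (d + 2), 0 < (-1 : ℝ) ^ (i : ℕ) * (lam t i * lam t 0) := by
    intro i
    have h1 := sign_lam ht i
    have h2 := sign_lam ht 0
    have h12 := mul_pos h1 h2
    have heq : ((-1 : ℝ) ^ (d + 1 + (i : ℕ)) * lam t i) *
        ((-1 : ℝ) ^ (d + 1 + ((0 : Fin (d + 2)) : ℕ)) * lam t 0)
        = (-1 : ℝ) ^ (i : ℕ) * (lam t i * lam t 0) := by
      simp only [Fin.val_zero, Nat.add_zero, Nat.pow_add]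
      rw [pow_add (-1 : ℝ) (d + 1) (i : ℕ)]
      linear_combination ((-1 : ℝ) ^ (i : ℕ) * lam t i * lam t 0) * hu
    rw [heq] at h12
    exact h12
  constructor
  · rintro ⟨x, hxA, hxB⟩
    obtain ⟨a, ha0, haS, ha1, hax⟩ := exists_weights _ S hxA
    obtain ⟨b, hb0, hbS, hbSc, hbx⟩ := exists_weights _ Sᶜ hxB
    set μ : Fin (d + 2) → ℝ := fun i => a i - b i with hμdef
    have hb0zero : b 0 = 0 := hbS 0 (by simpa using h0)
    have hmom : ∀ k, k < d + 1 → ∑ i, μ i * t i ^ k = 0 := by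
      intro k hk
      rcases Nat.eq_zero_or_pos k with rfl | hkpos
      · simp only [pow_zero, mul_one, hμdef]
        rw [Finset.sum_sub_distrib, ha1, hbSc, sub_self]
      · obtain ⟨m, rfl⟩ : ∃ m, k = m + 1 := ⟨k - 1, by omega⟩
        have hm : m < d := by omega
        have hcoord := congrFun (hax.trans hbx.symm) ⟨m, hm⟩
        simp only [Finset.sum_apply, Pi.smul_apply, smul_eq_mul, momentCurve] at hcoord
        simp only [hμdef, sub_mul]
        rw [Finset.sum_sub_distrib]
        rw [show ∑ i, a i * t i ^ (m + 1) = ∑ i, b i * t i ^ (m + 1) from hcoord, sub_self]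
    have hμ := eq_smul_lam htinj hmom
    have hμ0nonneg : (0 : ℝ) ≤ μ 0 := by
      simp only [hμdef, hb0zero, sub_zero]
      exact ha0 0
    have hμ0 : 0 < μ 0 := by
      rcases lt_or_eq_of_le hμ0nonneg with h | h
      · exact h
      · exfalso
        have hμzero : μ = 0 := by
          rw [hμ, ← h, zero_div, zero_smul]
        have hasum : ∑ j, a j = 0 := by
          refine Finset.sum_eq_zero fun j _ => ?_
          by_cases hjS : j ∈ S
          · have hzj := congrFun hμzero j
            simp only [hμdef, Pi.zero_apply] at hzj
            have hbj : b j = 0 := hbS j (by simpa using hjS)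
            linarith
          · exact haS j hjS
        rw [ha1] at hasum
        exact one_ne_zero hasum
    have hci : ∀ i, μ i = μ 0 / lam t 0 * lam t i := by
      intro i
      have h := congrFun hμ i
      rw [Pi.smul_apply, smul_eq_mul] at h
      exact h
    obtain ⟨c, hc⟩ : ∃ c : ℝ, ∀ i, μ i = c * lam t i := ⟨_, hci⟩
    have hcne : c ≠ 0 := by
      intro h
      rw [hc 0, h, zero_mul] at hμ0
      exact lt_irrefl _ hμ0
    have hμne : ∀ i, μ i ≠ 0 := fun i =>
      (hc i) ▸ mul_ne_zero hcne (lam_ne_zero htinj i)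
    have hprod_iff : ∀ i : Fin (d + 2), (0 < μ i ↔ Even (i : ℕ)) := by
      intro i
      have hsq : μ i * μ 0 = c ^ 2 * (lam t i * lam t 0) := by
        rw [hc i, hc 0]; ring
      have hsqpos : 0 < c ^ 2 :=
        lt_of_le_of_ne (sq_nonneg c) (Ne.symm (pow_ne_zero 2 hcne))
      constructor
      · intro hpos
        have h1 : 0 < μ i * μ 0 := mul_pos hpos hμ0
        rw [hsq] at h1
        have hll : 0 < lam t i * lam t 0 := by
          rcases mul_pos_iff.mp h1 with ⟨_, h⟩ | ⟨h, _⟩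
          · exact h
          · exact absurd h (not_lt.mpr (le_of_lt hsqpos))
        rcases mul_pos_iff.mp (hsign i) with ⟨hpow, _⟩ | ⟨_, hneg⟩
        · by_contra hodd
          rw [(Nat.not_even_iff_odd.mp hodd).neg_one_pow] at hpow
          linarith
        · linarith
      · intro heven
        rcases (hμne i).lt_or_gt with hneg | hpos
        · exfalso
          have h1 : μ i * μ 0 < 0 := mul_neg_of_neg_of_pos hneg hμ0
          rw [hsq] at h1
          have hll : lam t i * lam t 0 < 0 := by
            nlinarith
          have := hsign i
          rw [heven.neg_one_pow, one_mul] at this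
          linarith
        · exact hpos
    intro i
    constructor
    · intro hiS
      refine (hprod_iff i).mp ?_
      have hbi : b i = 0 := hbS i (by simpa using hiS)
      have : (0 : ℝ) ≤ μ i := by simp [hμdef, hbi, ha0 i]
      exact lt_of_le_of_ne this (Ne.symm (hμne i))
    · intro heven
      by_contra hiS
      have hai : a i = 0 := haS i hiS
      have hle : μ i ≤ 0 := by simp [hμdef, hai, hb0 i]
      have := (hprod_iff i).mpr heven
      linarith
  · intro hS
    set f : Fin (d + 2) → (Fin d → ℝ) := fun i => momentCurve d (t i) with hfdef
    set w : Fin (d + 2) → ℝ := fun i => (-1 : ℝ) ^ (d + 1 + (i : ℕ)) * lam t i with hwdef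
    have hw : ∀ i, 0 < w i := fun i => sign_lam ht i
    set T : Finset (Fin (d + 2)) := Set.toFinset S with hT
    have hmemT : ∀ i, i ∈ T ↔ i ∈ S := fun i => Set.mem_toFinset
    have hlamT : ∀ i ∈ T, lam t i = (-1 : ℝ) ^ (d + 1) * w i := by
      intro i hi
      have he : Even (i : ℕ) := (hS i).mp ((hmemT i).mp hi)
      rw [hwdef]
      simp only
      rw [pow_add (-1 : ℝ) (d + 1) (i : ℕ), he.neg_one_pow, mul_one, ← mul_assoc, hu, one_mul]
    have hlamTc : ∀ i ∈ Tᶜ, lam t i = -((-1 : ℝ) ^ (d + 1) * w i) := by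
      intro i hi
      have hodd : Odd (i : ℕ) := by
        rw [← Nat.not_even_iff_odd]
        intro he
        exact (Finset.mem_compl.mp hi) ((hmemT i).mpr ((hS i).mpr he))
      rw [hwdef]
      simp only
      rw [pow_add (-1 : ℝ) (d + 1) (i : ℕ), hodd.neg_one_pow]
      linear_combination (-(lam t i)) * hu
    have hE : ∀ k, k < d + 1 → ∑ i ∈ T, w i * t i ^ k = ∑ i ∈ Tᶜ, w i * t i ^ k := by
      intro k hk
      have hkey := key htinj k hk
      rw [← Finset.sum_add_sum_compl T (fun i => lam t i * t i ^ k)] at hkey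
      have e1 : ∑ i ∈ T, lam t i * t i ^ k
          = (-1 : ℝ) ^ (d + 1) * ∑ i ∈ T, w i * t i ^ k := by
        rw [Finset.mul_sum]
        refine Finset.sum_congr rfl fun i hi => ?_
        rw [hlamT i hi]; ring
      have e2 : ∑ i ∈ Tᶜ, lam t i * t i ^ k
          = -((-1 : ℝ) ^ (d + 1) * ∑ i ∈ Tᶜ, w i * t i ^ k) := by
        rw [Finset.mul_sum, ← Finset.sum_neg_distrib]
        refine Finset.sum_congr rfl fun i hi => ?_
        rw [hlamTc i hi]; ring
      rw [e1, e2] at hkey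
      have hune : (-1 : ℝ) ^ (d + 1) ≠ 0 := pow_ne_zero _ (by norm_num)
      apply mul_left_cancel₀ hune
      linarith
    have hTmem0 : (0 : Fin (d + 2)) ∈ T := (hmemT 0).mpr h0
    have hsum_pos : 0 < ∑ i ∈ T, w i := Finset.sum_pos (fun i _ => hw i) ⟨0, hTmem0⟩
    have hsums : ∑ i ∈ T, w i = ∑ i ∈ Tᶜ, w i := by
      have := hE 0 (by omega)
      simpa using this
    refine ⟨T.centerMass w f, ?_, ?_⟩
    · apply Finset.centerMass_mem_convexHull T (fun i _ => le_of_lt (hw i)) hsum_pos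
      intro i hi
      exact Set.mem_image_of_mem f ((hmemT i).mp hi)
    · have hxy : T.centerMass w f = Tᶜ.centerMass w f := by
        have hsmul : ∑ i ∈ T, w i • f i = ∑ i ∈ Tᶜ, w i • f i := by
          funext c
          simp only [Finset.sum_apply, Pi.smul_apply, smul_eq_mul, hfdef, momentCurve]
          exact hE ((c : ℕ) + 1) (by omega)
        simp only [Finset.centerMass]
        rw [hsums, hsmul]
      rw [hxy]
      apply Finset.centerMass_mem_convexHull Tᶜ (fun i _ => le_of_lt (hw i))
        (hsums ▸ hsum_pos)
      intro i hi
      refine Set.mem_image_of_mem f ?_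
      rw [Set.mem_compl_iff, ← hmemT]
      exact Finset.mem_compl.mp hi
end

section
/- Let k ≤ d+1 be positive integers and let H be a k-uniform hypergraph with a total order ≺ on its vertex set. If H is (d+2)-interlacing with respect to ≺, then for every injective map φ from V(H) to the moment curve γ_d that respects the order ≺, there exist hyperedges e_1, e_2 of H such that conv(φ(e_1)) ∩ conv(φ(e_2)) strictly contains conv(φ(e_1) ∩ φ(e_2)). -/
open Finset Polynomial


/-- A hypergraph (given by its edge set `E`) on a linearly ordered vertex type is
`l`-interlacing if there are two distinct hyperedges `e₁ ≠ e₂` and vertices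
`v 0 ≺ v 1 ≺ ⋯ ≺ v (l-1)` alternating between `e₁` (1-based odd positions)
and `e₂` (1-based even positions). -/
def IsInterlacing {V : Type*} [LinearOrder V] (E : Set (Finset V)) (l : ℕ) : Prop :=
  ∃ e₁ ∈ E, ∃ e₂ ∈ E, e₁ ≠ e₂ ∧ ∃ v : Fin l → V, StrictMono v ∧
    ∀ i : Fin l, (Even (i : ℕ) → v i ∈ e₁) ∧ (¬ Even (i : ℕ) → v i ∈ e₂)

lemma vand_zero {d : ℕ} (B : Finset ℝ) (hB : B.card ≤ d + 1) (c : ℝ → ℝ)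
    (h : ∀ r ≤ d, ∑ x ∈ B, c x * x ^ r = 0) : ∀ x ∈ B, c x = 0 := by
  intro x₀ hx₀
  set f : Polynomial ℝ := ∏ x ∈ B.erase x₀, (X - C x) with hf
  have hdeg : f.natDegree ≤ d := by
    have : f.natDegree = (B.erase x₀).card := by
      rw [hf, natDegree_prod_of_monic]
      · simp
      · intro x _; exact monic_X_sub_C x
    rw [this]
    have := Finset.card_erase_of_mem hx₀
    omega
  have key : ∑ x ∈ B, c x * f.eval x = 0 := by
    have : ∀ x, f.eval x = ∑ r ∈ Finset.range (d + 1), f.coeff r * x ^ r := by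
      intro x
      rw [eval_eq_sum_range' (lt_of_le_of_lt hdeg (Nat.lt_succ_self d))]
    calc ∑ x ∈ B, c x * f.eval x
        = ∑ x ∈ B, ∑ r ∈ Finset.range (d+1), f.coeff r * (c x * x ^ r) := by
          refine Finset.sum_congr rfl fun x _ => ?_
          rw [this x, Finset.mul_sum]
          exact Finset.sum_congr rfl fun r _ => by ring
      _ = ∑ r ∈ Finset.range (d+1), f.coeff r * ∑ x ∈ B, c x * x ^ r := by
          rw [Finset.sum_comm]
          exact Finset.sum_congr rfl fun r _ => by rw [Finset.mul_sum]
      _ = 0 := by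
          refine Finset.sum_eq_zero fun r hr => ?_
          rw [h r (by simpa using Nat.lt_succ_iff.mp (Finset.mem_range.mp hr)), mul_zero]
  have hsingle : ∑ x ∈ B, c x * f.eval x = c x₀ * f.eval x₀ := by
    refine Finset.sum_eq_single_of_mem x₀ hx₀ fun x hx hne => ?_
    have : f.eval x = 0 := by
      rw [hf, eval_prod]
      exact Finset.prod_eq_zero (Finset.mem_erase.mpr ⟨hne, hx⟩) (by simp)
    rw [this, mul_zero]
  have hne : f.eval x₀ ≠ 0 := by
    rw [hf, eval_prod]
    refine Finset.prod_ne_zero_iff.mpr fun x hx => ?_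
    have := (Finset.mem_erase.mp hx).1
    simp only [eval_sub, eval_X, eval_C, sub_ne_zero]
    exact fun hc => this hc.symm
  have := hsingle ▸ key
  exact (mul_eq_zero.mp this).resolve_right hne

lemma lagrange_moment {n : ℕ} (t : Fin (n+2) → ℝ) (ht : Function.Injective t) {r : ℕ}
    (hr : r ≤ n) :
    ∑ i, t i ^ r * ∏ j ∈ Finset.univ.erase i, (t i - t j)⁻¹ = 0 := by
  set lam : Fin (n+2) → ℝ := fun i => ∏ j ∈ Finset.univ.erase i, (t i - t j)⁻¹ with hlam
  set F : Polynomial ℝ :=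
    ∑ i, C (t i ^ r * lam i) * ∏ j ∈ Finset.univ.erase i, (X - C (t j)) with hF
  have hcard : ∀ i : Fin (n+2), (Finset.univ.erase i).card = n + 1 := by
    intro i
    rw [Finset.card_erase_of_mem (Finset.mem_univ i)]
    simp
  have hprodne : ∀ i : Fin (n+2), ∏ j ∈ Finset.univ.erase i, (t i - t j) ≠ 0 := by
    intro i
    refine Finset.prod_ne_zero_iff.mpr fun j hj => ?_
    have hji := (Finset.mem_erase.mp hj).1
    exact sub_ne_zero.mpr fun hc => hji (ht hc).symm
  have hmonic : ∀ i : Fin (n+2), (∏ j ∈ Finset.univ.erase i, (X - C (t j))).Monic :=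
    fun i => monic_prod_of_monic _ _ fun j _ => monic_X_sub_C (t j)
  have hdegprod : ∀ i : Fin (n+2),
      (∏ j ∈ Finset.univ.erase i, (X - C (t j))).natDegree = n + 1 := by
    intro i
    rw [natDegree_prod_of_monic _ _ fun j _ => monic_X_sub_C (t j)]
    simp [hcard i]
  have hFeq : F = X ^ r := by
    have heval : ∀ k : Fin (n+2), (F - X ^ r).eval (t k) = 0 := by
      intro k
      have hFev : F.eval (t k) = t k ^ r := by
        rw [hF, eval_finset_sum]
        rw [Finset.sum_eq_single_of_mem k (Finset.mem_univ k)]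
        · rw [eval_mul, eval_C, eval_prod]
          simp only [eval_sub, eval_X, eval_C]
          have h1 : lam k * ∏ j ∈ Finset.univ.erase k, (t k - t j) = 1 := by
            show (∏ j ∈ Finset.univ.erase k, (t k - t j)⁻¹) * _ = 1
            rw [Finset.prod_inv_distrib]
            exact inv_mul_cancel₀ (hprodne k)
          calc t k ^ r * lam k * ∏ j ∈ Finset.univ.erase k, (t k - t j)
              = t k ^ r * (lam k * ∏ j ∈ Finset.univ.erase k, (t k - t j)) := by ring
            _ = t k ^ r := by rw [h1, mul_one]
        · intro i _ hik
          rw [eval_mul, eval_prod]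
          have : ∃ j ∈ Finset.univ.erase i, eval (t k) (X - C (t j)) = 0 := by
            exact ⟨k, Finset.mem_erase.mpr ⟨fun h => hik (h ▸ rfl), Finset.mem_univ k⟩, by simp⟩
          obtain ⟨j, hj, hjz⟩ := this
          rw [Finset.prod_eq_zero hj hjz, mul_zero]
      simp [hFev]
    have hdegF : (F - X ^ r).natDegree < n + 2 := by
      apply lt_of_le_of_lt (natDegree_sub_le _ _)
      apply max_lt
      · apply lt_of_le_of_lt (natDegree_sum_le _ _)
        rw [Finset.fold_max_lt]
        refine ⟨by omega, fun i _ => ?_⟩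
        simp only [Function.comp]
        apply lt_of_le_of_lt (natDegree_mul_le)
        rw [natDegree_C, hdegprod i]
        omega
      · rw [natDegree_X_pow]; omega
    have := Polynomial.eq_zero_of_natDegree_lt_card_of_eval_eq_zero (F - X ^ r) ht heval
      (by simpa using hdegF)
    exact sub_eq_zero.mp this
  have hcoeff : F.coeff (n+1) = ∑ i, t i ^ r * lam i := by
    rw [hF, finset_sum_coeff]
    refine Finset.sum_congr rfl fun i _ => ?_
    rw [coeff_C_mul]
    have : (∏ j ∈ Finset.univ.erase i, (X - C (t j))).coeff (n+1) = 1 := by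
      have := (hmonic i).coeff_natDegree
      rwa [hdegprod i] at this
    rw [this, mul_one]
  have hX : (X ^ r : Polynomial ℝ).coeff (n+1) = 0 := by
    rw [coeff_X_pow]
    simp only [if_neg (by omega : ¬ n + 1 = r)]
  rw [hFeq, hX] at hcoeff
  exact hcoeff.symm

/-- If a k-uniform hypergraph (1 ≤ k ≤ d+1) is (d+2)-interlacing with
respect to the vertex order, then for every order-respecting placement of its vertices
on the moment curve γ_d there are hyperedges whose convex hulls intersect in strictly
more than the convex hull of their common vertices. -/
theorem stmt_4 {V : Type*} [LinearOrder V] (d k : ℕ) (hk : 1 ≤ k) (hkd : k ≤ d + 1)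
    (E : Set (Finset V)) (hunif : ∀ e ∈ E, e.card = k)
    (hinter : IsInterlacing E (d + 2))
    (φ : V → ℝ) (hφ : StrictMono φ) :
    ∃ e₁ ∈ E, ∃ e₂ ∈ E,
      convexHull ℝ ((fun v => momentCurve d (φ v)) '' ((e₁ : Set V) ∩ (e₂ : Set V))) ⊂
        convexHull ℝ ((fun v => momentCurve d (φ v)) '' (e₁ : Set V)) ∩
          convexHull ℝ ((fun v => momentCurve d (φ v)) '' (e₂ : Set V)) := by
  classical
  obtain ⟨e₁, he₁, e₂, he₂, hne, w, hwmono, halt⟩ := hinter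
  refine ⟨e₁, he₁, e₂, he₂, ?_⟩
  set t : Fin (d+2) → ℝ := fun i => φ (w i) with ht
  have htmono : StrictMono t := fun i j hij => hφ (hwmono hij)
  have htinj : Function.Injective t := htmono.injective
  set lam : Fin (d+2) → ℝ := fun i => ∏ j ∈ Finset.univ.erase i, (t i - t j)⁻¹ with hlam
  set μ : Fin (d+2) → ℝ := fun i => (-1:ℝ)^((i:ℕ) + d + 1) * lam i with hμ
  -- positivity of μ
  have hμpos : ∀ i, 0 < μ i := by
    intro i
    have hsplit : Finset.univ.erase i = Finset.Iio i ∪ Finset.Ioi i := by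
      ext j
      simp only [Finset.mem_erase, Finset.mem_univ, and_true, Finset.mem_union,
        Finset.mem_Iio, Finset.mem_Ioi]
      exact ⟨fun h => Ne.lt_or_gt h, fun h => h.elim ne_of_lt ne_of_gt⟩
    have hdisj : Disjoint (Finset.Iio i) (Finset.Ioi i) := by
      rw [Finset.disjoint_left]
      intro j h1 h2
      exact absurd (Finset.mem_Ioi.mp h2) (not_lt.mpr (Finset.mem_Iio.mp h1).le)
    have hP : 0 < ∏ j ∈ Finset.Iio i, (t i - t j) :=
      Finset.prod_pos fun j hj => sub_pos.mpr (htmono (Finset.mem_Iio.mp hj))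
    have hQ : 0 < ∏ j ∈ Finset.Ioi i, (t j - t i) :=
      Finset.prod_pos fun j hj => sub_pos.mpr (htmono (Finset.mem_Ioi.mp hj))
    have hIoicard : (Finset.Ioi i).card = d + 1 - (i:ℕ) := by
      rw [Fin.card_Ioi]
      omega
    have hQ2 : ∏ j ∈ Finset.Ioi i, (t i - t j)
        = (-1:ℝ)^(d + 1 - (i:ℕ)) * ∏ j ∈ Finset.Ioi i, (t j - t i) := by
      rw [← hIoicard, ← Finset.prod_const, ← Finset.prod_mul_distrib]
      exact Finset.prod_congr rfl fun j _ => by ring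
    have hlami : lam i = (-1:ℝ)^(d + 1 - (i:ℕ)) *
        ((∏ j ∈ Finset.Iio i, (t i - t j)) * ∏ j ∈ Finset.Ioi i, (t j - t i))⁻¹ := by
      have : lam i = (∏ j ∈ Finset.univ.erase i, (t i - t j))⁻¹ := by
        rw [hlam]; exact Finset.prod_inv_distrib _
      rw [this, hsplit, Finset.prod_union hdisj, hQ2]
      rw [show (∏ j ∈ Finset.Iio i, (t i - t j)) * ((-1:ℝ)^(d + 1 - (i:ℕ)) *
          ∏ j ∈ Finset.Ioi i, (t j - t i)) = (-1:ℝ)^(d + 1 - (i:ℕ)) *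
          ((∏ j ∈ Finset.Iio i, (t i - t j)) * ∏ j ∈ Finset.Ioi i, (t j - t i)) by ring]
      rw [mul_inv]
      rw [show ((-1:ℝ)^(d + 1 - (i:ℕ)))⁻¹ = (-1:ℝ)^(d + 1 - (i:ℕ)) by
        rw [← inv_pow, inv_neg, inv_one]]
    have hsgn : (-1:ℝ)^((i:ℕ) + d + 1) * (-1:ℝ)^(d + 1 - (i:ℕ)) = 1 := by
      rw [← pow_add]
      have hi := i.isLt
      rw [show (i:ℕ) + d + 1 + (d + 1 - (i:ℕ)) = 2 * (d+1) by omega, pow_mul]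
      norm_num
    have hpos : 0 < ((∏ j ∈ Finset.Iio i, (t i - t j)) *
        ∏ j ∈ Finset.Ioi i, (t j - t i))⁻¹ := inv_pos.mpr (mul_pos hP hQ)
    calc (0:ℝ) < ((∏ j ∈ Finset.Iio i, (t i - t j)) *
        ∏ j ∈ Finset.Ioi i, (t j - t i))⁻¹ := hpos
      _ = μ i := by
        rw [hμ]
        show _ = (-1:ℝ)^((i:ℕ) + d + 1) * lam i
        rw [hlami, ← mul_assoc, hsgn, one_mul]
  -- the key moment identities
  have hkey : ∀ r, r ≤ d → ∑ i : Fin (d+2), (-1:ℝ)^(i:ℕ) * (μ i * t i ^ r) = 0 := by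
    intro r hr
    have h0 : ∑ i, t i ^ r * lam i = 0 := by
      simp only [hlam]
      exact lagrange_moment t htinj hr
    calc ∑ i : Fin (d+2), (-1:ℝ)^(i:ℕ) * (μ i * t i ^ r)
        = ∑ i : Fin (d+2), (-1:ℝ)^(d+1) * (t i ^ r * lam i) := by
          refine Finset.sum_congr rfl fun i _ => ?_
          have hs : (-1:ℝ)^(i:ℕ) * (-1:ℝ)^((i:ℕ) + d + 1) = (-1:ℝ)^(d+1) := by
            rw [← pow_add, show (i:ℕ) + ((i:ℕ) + d + 1) = 2 * (i:ℕ) + (d+1) by omega,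
              pow_add, pow_mul]
            norm_num
          rw [hμ]
          show (-1:ℝ)^(i:ℕ) * ((-1:ℝ)^((i:ℕ) + d + 1) * lam i * t i ^ r) = _
          linear_combination (lam i * t i ^ r) * hs
      _ = (-1:ℝ)^(d+1) * ∑ i : Fin (d+2), t i ^ r * lam i := by rw [Finset.mul_sum]
      _ = 0 := by rw [h0, mul_zero]
  set evens := Finset.univ.filter (fun i : Fin (d+2) => Even (i:ℕ)) with hevens
  set odds := Finset.univ.filter (fun i : Fin (d+2) => ¬ Even (i:ℕ)) with hodds
  have hsplitsum : ∀ r, r ≤ d →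
      ∑ i ∈ evens, μ i * t i ^ r = ∑ i ∈ odds, μ i * t i ^ r := by
    intro r hr
    have h := hkey r hr
    rw [← Finset.sum_filter_add_sum_filter_not Finset.univ
      (fun i : Fin (d+2) => Even (i:ℕ))] at h
    have h1 : ∑ i ∈ evens, (-1:ℝ)^(i:ℕ) * (μ i * t i ^ r)
        = ∑ i ∈ evens, μ i * t i ^ r := by
      refine Finset.sum_congr rfl fun i hi => ?_
      rw [(Finset.mem_filter.mp hi).2.neg_one_pow, one_mul]
    have h2 : ∑ i ∈ odds, (-1:ℝ)^(i:ℕ) * (μ i * t i ^ r)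
        = - ∑ i ∈ odds, μ i * t i ^ r := by
      rw [← Finset.sum_neg_distrib]
      refine Finset.sum_congr rfl fun i hi => ?_
      have hodd : Odd (i:ℕ) := Nat.not_even_iff_odd.mp (Finset.mem_filter.mp hi).2
      rw [hodd.neg_one_pow]
      ring
    rw [h1, h2] at h
    linarith
  have hΛodds : ∑ i ∈ evens, μ i = ∑ i ∈ odds, μ i := by
    have := hsplitsum 0 (Nat.zero_le d)
    simpa using this
  have h0evens : (0 : Fin (d+2)) ∈ evens := by
    rw [hevens]
    simp
  have hΛ : 0 < ∑ i ∈ evens, μ i :=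
    Finset.sum_pos (fun i _ => hμpos i) ⟨0, h0evens⟩
  set p : Fin d → ℝ := evens.centerMass μ (fun i => momentCurve d (t i)) with hp
  have hvec : ∑ i ∈ evens, μ i • momentCurve d (t i)
      = ∑ i ∈ odds, μ i • momentCurve d (t i) := by
    ext j
    rw [Finset.sum_apply, Finset.sum_apply]
    simp only [Pi.smul_apply, smul_eq_mul, momentCurve]
    exact hsplitsum ((j:ℕ)+1) (by have := j.isLt; omega)
  have hpodd : p = odds.centerMass μ (fun i => momentCurve d (t i)) := by
    rw [hp]
    unfold Finset.centerMass
    rw [hvec, hΛodds]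

  have hmembE : ∀ i ∈ evens, w i ∈ e₁ := fun i hi =>
    (halt i).1 (Finset.mem_filter.mp hi).2
  have hmembO : ∀ i ∈ odds, w i ∈ e₂ := fun i hi =>
    (halt i).2 (Finset.mem_filter.mp hi).2
  have hp1 : p ∈ convexHull ℝ ((fun x => momentCurve d (φ x)) '' (e₁ : Set V)) := by
    rw [hp]
    refine Finset.centerMass_mem_convexHull evens (fun i _ => (hμpos i).le) hΛ
      (fun i hi => ?_)
    exact ⟨w i, hmembE i hi, rfl⟩
  have hΛo : 0 < ∑ i ∈ odds, μ i := hΛodds ▸ hΛ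
  have hp2 : p ∈ convexHull ℝ ((fun x => momentCurve d (φ x)) '' (e₂ : Set V)) := by
    rw [hpodd]
    refine Finset.centerMass_mem_convexHull odds (fun i _ => (hμpos i).le) hΛo
      (fun i hi => ?_)
    exact ⟨w i, hmembO i hi, rfl⟩
  -- there is an even-index vertex not in e₂
  have hex : ∃ i₀ : Fin (d+2), Even (i₀:ℕ) ∧ w i₀ ∉ e₂ := by
    by_contra hcon
    push_neg at hcon
    have hall : ∀ i, w i ∈ e₂ := fun i => by
      by_cases h : Even (i:ℕ)
      · exact hcon i h
      · exact (halt i).2 h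
    have hsub : Finset.univ.image w ⊆ e₂ := fun x hx => by
      obtain ⟨i, _, rfl⟩ := Finset.mem_image.mp hx
      exact hall i
    have hcard := Finset.card_le_card hsub
    rw [Finset.card_image_of_injective _ hwmono.injective, Finset.card_univ,
      Fintype.card_fin, hunif e₂ he₂] at hcard
    omega
  obtain ⟨i₀, hi₀even, hi₀notin⟩ := hex
  have hi₀evens : i₀ ∈ evens := by
    rw [hevens]; exact Finset.mem_filter.mpr ⟨Finset.mem_univ _, hi₀even⟩
  -- B, the image of e₁
  set B : Finset ℝ := e₁.image φ with hB
  have hBcard : B.card ≤ d + 1 := by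
    rw [hB, Finset.card_image_of_injective _ hφ.injective, hunif e₁ he₁]
    exact hkd
  have hmapsE : ∀ i ∈ evens, t i ∈ B := fun i hi =>
    Finset.mem_image.mpr ⟨w i, hmembE i hi, rfl⟩
  -- the main non-membership
  have hnotin : p ∉ convexHull ℝ
      ((fun x => momentCurve d (φ x)) '' ((e₁ : Set V) ∩ (e₂ : Set V))) := by
    intro hpmem
    rw [_root_.convexHull_eq] at hpmem
    obtain ⟨ι, s, wt, z, hw0, hw1, hz, hcm⟩ := hpmem
    have : Nonempty V := ⟨w 0⟩
    have hzex : ∀ i, i ∈ s → ∃ x : V,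
        (x ∈ (e₁ : Set V) ∩ (e₂ : Set V)) ∧ momentCurve d (φ x) = z i := by
      intro i hi
      obtain ⟨x, hx1, hx2⟩ := hz i hi
      exact ⟨x, hx1, hx2⟩
    choose! u hu1 hu2 using hzex
    have hmapsS : ∀ i ∈ s, φ (u i) ∈ B := fun i hi =>
      Finset.mem_image.mpr ⟨u i, (hu1 i hi).1, rfl⟩
    set c : ℝ → ℝ := fun x => (∑ i ∈ evens.filter (fun i => t i = x), (∑ i' ∈ evens, μ i')⁻¹ * μ i)
      - ∑ i ∈ s.filter (fun i => φ (u i) = x), wt i with hc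
    have hcmom : ∀ r ≤ d, ∑ x ∈ B, c x * x ^ r = 0 := by
      intro r hr
      have hA : ∑ x ∈ B, (∑ i ∈ evens.filter (fun i => t i = x), (∑ i' ∈ evens, μ i')⁻¹ * μ i) * x ^ r
          = (∑ i' ∈ evens, μ i')⁻¹ * ∑ i ∈ evens, μ i * t i ^ r := by
        have h1 : ∀ x ∈ B, (∑ i ∈ evens.filter (fun i => t i = x), (∑ i' ∈ evens, μ i')⁻¹ * μ i) * x ^ r
            = ∑ i ∈ evens.filter (fun i => t i = x), (∑ i' ∈ evens, μ i')⁻¹ * (μ i * t i ^ r) := by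
          intro x hx
          rw [Finset.sum_mul]
          refine Finset.sum_congr rfl fun i hi => ?_
          rw [← (Finset.mem_filter.mp hi).2]
          ring
        rw [Finset.sum_congr rfl h1,
          Finset.sum_fiberwise_of_maps_to hmapsE (fun i => (∑ i' ∈ evens, μ i')⁻¹ * (μ i * t i ^ r)),
          ← Finset.mul_sum]
      have hW : ∑ x ∈ B, (∑ i ∈ s.filter (fun i => φ (u i) = x), wt i) * x ^ r
          = ∑ i ∈ s, wt i * (φ (u i)) ^ r := by
        have h1 : ∀ x ∈ B, (∑ i ∈ s.filter (fun i => φ (u i) = x), wt i) * x ^ r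
            = ∑ i ∈ s.filter (fun i => φ (u i) = x), wt i * (φ (u i)) ^ r := by
          intro x hx
          rw [Finset.sum_mul]
          refine Finset.sum_congr rfl fun i hi => ?_
          rw [← (Finset.mem_filter.mp hi).2]
        rw [Finset.sum_congr rfl h1,
          Finset.sum_fiberwise_of_maps_to hmapsS (fun i => wt i * (φ (u i)) ^ r)]
      have hexp : ∑ x ∈ B, c x * x ^ r
          = (∑ i' ∈ evens, μ i')⁻¹ * (∑ i ∈ evens, μ i * t i ^ r) - ∑ i ∈ s, wt i * (φ (u i)) ^ r := by
        rw [← hA, ← hW, ← Finset.sum_sub_distrib]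
        refine Finset.sum_congr rfl fun x _ => ?_
        rw [hc]
        ring
      rw [hexp]
      have hps : p = ∑ i ∈ s, wt i • z i := by
        rw [← hcm, Finset.centerMass_eq_of_sum_1 _ _ hw1]
      rcases Nat.eq_zero_or_pos r with hr0 | hrpos
      · subst hr0
        simp only [pow_zero, mul_one]
        rw [hw1, inv_mul_cancel₀ (ne_of_gt hΛ)]
        ring
      · obtain ⟨j, rfl⟩ : ∃ j, r = j + 1 := ⟨r - 1, by omega⟩
        have hjd : j < d := by omega
        set jf : Fin d := ⟨j, hjd⟩ with hjf
        have hL : (∑ i' ∈ evens, μ i')⁻¹ * (∑ i ∈ evens, μ i * t i ^ (j+1)) = p jf := by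
          rw [hp]
          unfold Finset.centerMass
          rw [Pi.smul_apply, Finset.sum_apply]
          simp only [Pi.smul_apply, smul_eq_mul, momentCurve]
          rfl
        have hR : ∑ i ∈ s, wt i * (φ (u i)) ^ (j+1) = p jf := by
          rw [hps, Finset.sum_apply]
          refine Finset.sum_congr rfl fun i hi => ?_
          rw [Pi.smul_apply, smul_eq_mul, ← hu2 i hi]
          simp [momentCurve]
          exact Or.inl rfl
        rw [hL, hR, sub_self]
    have hzero := vand_zero B hBcard c hcmom (t i₀) (hmapsE i₀ hi₀evens)
    have hfil1 : evens.filter (fun i => t i = t i₀) = {i₀} := by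
      ext i
      simp only [Finset.mem_filter, Finset.mem_singleton]
      constructor
      · rintro ⟨_, h⟩; exact htinj h
      · rintro rfl; exact ⟨hi₀evens, rfl⟩
    have hfil2 : s.filter (fun i => φ (u i) = t i₀) = ∅ := by
      rw [Finset.filter_eq_empty_iff]
      intro i hi heq
      have : u i = w i₀ := hφ.injective heq
      exact hi₀notin (by
        have h2 := (hu1 i hi).2
        rw [this] at h2
        exact h2)
    rw [hc] at hzero
    simp only [hfil1, hfil2, Finset.sum_singleton, Finset.sum_empty, sub_zero] at hzero
    have := mul_pos (inv_pos.mpr hΛ) (hμpos i₀)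
    linarith [hzero]
  -- assemble
  have hsub : convexHull ℝ ((fun x => momentCurve d (φ x)) '' ((e₁ : Set V) ∩ (e₂ : Set V)))
      ⊆ convexHull ℝ ((fun x => momentCurve d (φ x)) '' (e₁ : Set V)) ∩
        convexHull ℝ ((fun x => momentCurve d (φ x)) '' (e₂ : Set V)) :=
    Set.subset_inter
      (convexHull_mono (Set.image_mono Set.inter_subset_left))
      (convexHull_mono (Set.image_mono Set.inter_subset_right))
  rw [Set.ssubset_iff_of_subset hsub]
  exact ⟨p, ⟨hp1, hp2⟩, hnotin⟩
end

section
/- Let k ≤ d+1 be positive integers and H a k-uniform hypergraph with a total order ≺ on its vertices. If H is not (d+2)-interlacing with respect to ≺, then for any injective order-respecting map φ: V(H) → γ_d into the moment curve, for every pair of hyperedges e_1, e_2 of H we have conv(φ(e_1)) ∩ conv(φ(e_2)) = conv(φ(e_1) ∩ φ(e_2)); i.e., H is geometrically embeddable on the moment curve in R^d. -/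
section Aux
open Finset Polynomial

lemma moment_kill {ι : Type*} (S : Finset ι) (t ν : ι → ℝ) (d : ℕ)
    (h : ∀ j ≤ d, ∑ v ∈ S, ν v * t v ^ j = 0) (p : Polynomial ℝ)
    (hp : p.natDegree ≤ d) : ∑ v ∈ S, ν v * p.eval (t v) = 0 := by
  have hlt : p.natDegree < d + 1 := Nat.lt_succ_of_le hp
  have hev : ∀ v, ν v * p.eval (t v) = ∑ j ∈ Finset.range (d+1), p.coeff j * (ν v * t v ^ j) := by
    intro v
    rw [Polynomial.eval_eq_sum_range' hlt, Finset.mul_sum]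
    exact Finset.sum_congr rfl fun j _ => by ring
  simp_rw [hev]
  rw [Finset.sum_comm]
  refine Finset.sum_eq_zero fun j hj => ?_
  rw [← Finset.mul_sum, h j (Nat.lt_succ_iff.mp (Finset.mem_range.mp hj)), mul_zero]


lemma exists_weights {V : Type*} {F : Type*} [AddCommGroup F] [Module ℝ F]
    (s : Finset V) (f : V → F) {x : F}
    (hx : x ∈ convexHull ℝ (f '' (s : Set V))) :
    ∃ w : V → ℝ, (∀ v, 0 ≤ w v) ∧ (∀ v, v ∉ s → w v = 0) ∧
      ∑ v ∈ s, w v = 1 ∧ ∑ v ∈ s, w v • f v = x := by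
  classical
  have himg : f '' (s : Set V) = ((s.image f : Finset F) : Set F) := by simp
  rw [himg, Finset.convexHull_eq] at hx
  obtain ⟨w, hw0, hw1, hwx⟩ := hx
  have hsne : s.Nonempty := by
    rcases s.eq_empty_or_nonempty with h | h
    · exfalso; rw [h] at hw1; simp at hw1
    · exact h
  obtain ⟨v₀, hv₀⟩ := hsne
  have hrep : ∀ y ∈ s.image f, ∃ v, v ∈ s ∧ f v = y := by
    intro y hy; simpa using Finset.mem_image.mp hy
  choose r hr hfr using hrep
  set g : F → V := fun y => if h : y ∈ s.image f then r y h else v₀ with hg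
  have hgs : ∀ y ∈ s.image f, g y ∈ s := by
    intro y hy; simp only [hg, dif_pos hy]; exact hr y hy
  have hfg : ∀ y ∈ s.image f, f (g y) = y := by
    intro y hy; simp only [hg, dif_pos hy]; exact hfr y hy
  refine ⟨fun v => ∑ y ∈ (s.image f).filter (fun y => g y = v), w y, ?_, ?_, ?_, ?_⟩
  · intro v
    exact Finset.sum_nonneg fun y hy => hw0 y (Finset.mem_filter.mp hy).1
  · intro v hv
    have : (s.image f).filter (fun y => g y = v) = ∅ := by
      refine Finset.filter_eq_empty_iff.mpr fun y hy => ?_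
      intro hgy; exact hv (hgy ▸ hgs y hy)
    simp only [this, Finset.sum_empty]
  · rw [Finset.sum_fiberwise_of_maps_to hgs w]; exact hw1
  · have key : ∀ v ∈ s, (∑ y ∈ (s.image f).filter (fun y => g y = v), w y) • f v
        = ∑ y ∈ (s.image f).filter (fun y => g y = v), w y • y := by
      intro v hv
      rw [Finset.sum_smul]
      refine Finset.sum_congr rfl fun y hy => ?_
      obtain ⟨hy1, hy2⟩ := Finset.mem_filter.mp hy
      rw [← hy2, hfg y hy1]
    rw [Finset.sum_congr rfl key, Finset.sum_fiberwise_of_maps_to hgs (fun y => w y • y)]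
    rw [Finset.centerMass_eq_of_sum_1 _ id hw1] at hwx
    simpa using hwx

lemma affine_indep_moment {V : Type*} (d k : ℕ) (hkd : k ≤ d + 1)
    (e : Finset V) (hcard : e.card = k) (φ : V → ℝ) (hφinj : Function.Injective φ) :
    AffineIndependent ℝ (fun v : e => momentCurve d (φ v)) := by
  classical
  rw [affineIndependent_iff]
  intro s w hw0 hw1 i hi
  -- moments vanish
  have hmom : ∀ j ≤ d, ∑ v ∈ s, w v * (φ (v : V)) ^ j = 0 := by
    intro j hj
    rcases Nat.eq_zero_or_pos j with rfl | hjpos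
    · simpa using hw0
    · obtain ⟨j', rfl⟩ := Nat.exists_eq_succ_of_ne_zero hjpos.ne'
      have hj' : j' < d := by omega
      have := congrFun hw1 ⟨j', hj'⟩
      simpa [momentCurve, Finset.sum_apply] using this
  -- Lagrange polynomial
  set p : Polynomial ℝ := ∏ v ∈ s.erase i, (X - C (φ (v : V))) with hpdef
  have hdeg : p.natDegree ≤ d := by
    calc p.natDegree ≤ ∑ v ∈ s.erase i, (X - C (φ (v : V))).natDegree :=
          Polynomial.natDegree_prod_le _ _
      _ = (s.erase i).card := by
          simp [Polynomial.natDegree_X_sub_C]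
      _ ≤ d := by
          have h1 : (s.erase i).card < s.card := Finset.card_erase_lt_of_mem hi
          have h2 : s.card ≤ Fintype.card e := Finset.card_le_univ s
          have h3 : Fintype.card e = k := by rw [Fintype.card_coe, hcard]
          omega
  have hkill := moment_kill s (fun v => φ (v : V)) w d hmom p hdeg
  have heval0 : ∀ v ∈ s, v ≠ i → p.eval (φ (v : V)) = 0 := by
    intro v hv hne
    rw [hpdef, Polynomial.eval_prod]
    apply Finset.prod_eq_zero (Finset.mem_erase.mpr ⟨hne, hv⟩)
    simp
  have hsingle : ∑ v ∈ s, w v * p.eval (φ (v : V)) = w i * p.eval (φ (i : V)) := by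
    apply Finset.sum_eq_single
    · intro v hv hne
      rw [heval0 v hv hne, mul_zero]
    · intro h; exact absurd hi h
  have hpne : p.eval (φ (i : V)) ≠ 0 := by
    rw [hpdef]
    rw [Polynomial.eval_prod]
    apply Finset.prod_ne_zero_iff.mpr
    intro v hv
    simp only [Polynomial.eval_sub, Polynomial.eval_X, Polynomial.eval_C]
    have hvne : v ≠ i := (Finset.mem_erase.mp hv).1
    have : φ (i : V) ≠ φ (v : V) := fun h => hvne (Subtype.coe_injective (hφinj h)).symm
    exact sub_ne_zero.mpr this
  have := hsingle ▸ hkill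
  rcases mul_eq_zero.mp this with h | h
  · exact h
  · exact absurd h hpne

lemma alt_of_moments (d m : ℕ) (hm : 0 < m) (t ν : ℕ → ℝ)
    (ht : ∀ i j, i < j → j < m → t i < t j)
    (hν : ∀ n, n < m → ν n ≠ 0)
    (hmom : ∀ j ≤ d, ∑ n ∈ Finset.range m, ν n * t n ^ j = 0) :
    ∃ g : Fin (d+2) → ℕ, StrictMono g ∧ (∀ r, g r < m) ∧
      ((∀ r : Fin (d+2), (Even (r:ℕ) → 0 < ν (g r)) ∧ (¬ Even (r:ℕ) → ν (g r) < 0)) ∨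
       (∀ r : Fin (d+2), (Even (r:ℕ) → ν (g r) < 0) ∧ (¬ Even (r:ℕ) → 0 < ν (g r)))) := by
  classical
  set Chg : ℕ → Prop := fun j => ¬ ((0 < ν j) ↔ (0 < ν (j+1))) with hChg
  set c : ℕ → ℕ := fun n => ((Finset.range n).filter Chg).card with hcdef
  have hc0 : c 0 = 0 := by simp [hcdef]
  have hcsucc_pos : ∀ n, Chg n → c (n+1) = c n + 1 := by
    intro n h
    simp only [hcdef, Finset.range_add_one, Finset.filter_insert, if_pos h]
    rw [Finset.card_insert_of_notMem (by simp)]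
  have hcsucc_neg : ∀ n, ¬ Chg n → c (n+1) = c n := by
    intro n h
    simp only [hcdef, Finset.range_add_one, Finset.filter_insert, if_neg h]
  have hcsucc_le : ∀ n, c (n+1) ≤ c n + 1 := by
    intro n
    by_cases h : Chg n
    · rw [hcsucc_pos n h]
    · rw [hcsucc_neg n h]; omega
  have hcmono : Monotone c := fun a b hab =>
    Finset.card_le_card (Finset.filter_subset_filter _ (Finset.range_subset_range.mpr hab))
  have hsign : ∀ n, (0 < ν n ↔ (Even (c n) ↔ 0 < ν 0)) := by
    intro n
    induction n with
    | zero => rw [hc0]; simp only [Even.zero]; tauto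
    | succ n ih =>
      by_cases h : Chg n
      · rw [hcsucc_pos n h]
        have he : Even (c n + 1) ↔ ¬ Even (c n) := Nat.even_add_one
        rw [hChg] at h
        tauto
      · rw [hcsucc_neg n h]
        rw [hChg] at h
        simp only [not_not] at h
        tauto
  by_cases hA : d + 1 ≤ c (m-1)
  · -- extract alternating sequence
    have hivt : ∀ N r, r ≤ c N → ∃ n, n ≤ N ∧ c n = r := by
      intro N
      induction N with
      | zero => intro r hr; rw [hc0] at hr; exact ⟨0, le_refl 0, by omega⟩
      | succ N ih =>
        intro r hr
        by_cases h : r ≤ c N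
        · obtain ⟨n, hn, hcn⟩ := ih r h
          exact ⟨n, hn.trans (Nat.le_succ N), hcn⟩
        · push_neg at h
          have := hcsucc_le N
          exact ⟨N+1, le_refl _, by omega⟩
    have hex : ∀ r : Fin (d+2), ∃ n, n ≤ m-1 ∧ c n = (r : ℕ) := by
      intro r
      apply hivt
      have := r.isLt
      omega
    choose g hg1 hg2 using hex
    have hglt : ∀ r, g r < m := fun r => lt_of_le_of_lt (hg1 r) (by omega)
    have hgmono : StrictMono g := by
      intro r r' hrr
      by_contra hc'
      push_neg at hc'
      have h2 := hcmono hc'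
      rw [hg2, hg2] at h2
      have : (r : ℕ) < (r' : ℕ) := hrr
      omega
    have hsr : ∀ r : Fin (d+2), (0 < ν (g r) ↔ (Even (r : ℕ) ↔ 0 < ν 0)) := by
      intro r
      have := hsign (g r)
      rwa [hg2 r] at this
    refine ⟨g, hgmono, hglt, ?_⟩
    by_cases hν0 : 0 < ν 0
    · left
      intro r
      constructor
      · intro he
        exact (hsr r).mpr (iff_of_true he hν0)
      · intro he
        have hnp : ¬ (0 < ν (g r)) := fun hp => he (((hsr r).mp hp).mpr hν0)
        exact lt_of_le_of_ne (not_lt.mp hnp) (hν (g r) (hglt r))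
    · right
      intro r
      constructor
      · intro he
        have hnp : ¬ (0 < ν (g r)) := fun hp => hν0 (((hsr r).mp hp).mp he)
        exact lt_of_le_of_ne (not_lt.mp hnp) (hν (g r) (hglt r))
      · intro he
        exact (hsr r).mpr (iff_of_false he hν0)
  · -- polynomial contradiction
    exfalso
    push_neg at hA
    have hB : c (m-1) ≤ d := by omega
    set R : Finset ℕ := (Finset.range (m-1)).filter Chg with hR
    have hRcard : R.card = c (m-1) := rfl
    set ρ : ℕ → ℝ := fun j => (t j + t (j+1))/2 with hρ
    set p : Polynomial ℝ := C (ν 0) * ∏ j ∈ R, (C (ρ j) - X) with hp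
    have hdeg : p.natDegree ≤ d := by
      calc p.natDegree ≤ (∏ j ∈ R, (C (ρ j) - X)).natDegree :=
            Polynomial.natDegree_C_mul_le _ _
        _ ≤ ∑ j ∈ R, (C (ρ j) - X).natDegree := Polynomial.natDegree_prod_le _ _
        _ ≤ ∑ j ∈ R, 1 := by
            apply Finset.sum_le_sum
            intro j _
            have : (C (ρ j) - X : Polynomial ℝ) = -(X - C (ρ j)) := by ring
            rw [this, Polynomial.natDegree_neg, Polynomial.natDegree_X_sub_C]
        _ = R.card := by simp
        _ ≤ d := hRcard ▸ hB
    have hkey := moment_kill (Finset.range m) t ν d hmom p hdeg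
    have hmid : ∀ j, j + 1 < m → t j < ρ j ∧ ρ j < t (j+1) := by
      intro j hj
      have := ht j (j+1) (by omega) hj
      constructor <;> · simp only [hρ]; linarith
    have hpos : ∀ n ∈ Finset.range m, 0 < ν n * p.eval (t n) := by
      intro n hn
      rw [Finset.mem_range] at hn
      have hnm : n ≤ m - 1 := by omega
      have hjR : ∀ j ∈ R, j + 1 < m := by
        intro j hj
        have := (Finset.mem_filter.mp hj).1
        rw [Finset.mem_range] at this
        omega
      have hfib : R.filter (fun j => j < n) = (Finset.range n).filter Chg := by
        ext j
        simp only [hR, Finset.mem_filter, Finset.mem_range]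
        constructor
        · rintro ⟨⟨h1, h2⟩, h3⟩; exact ⟨h3, h2⟩
        · rintro ⟨h1, h2⟩; exact ⟨⟨by omega, h2⟩, h1⟩
      have hfibcard : (R.filter (fun j => j < n)).card = c n := by rw [hfib]
      set A : ℝ := ∏ j ∈ R.filter (fun j => j < n), (t n - ρ j) with hAdef
      set B : ℝ := ∏ j ∈ R.filter (fun j => ¬ j < n), (ρ j - t n) with hBdef
      have hApos : 0 < A := by
        apply Finset.prod_pos
        intro j hj
        obtain ⟨hj1, hj2⟩ := Finset.mem_filter.mp hj
        have hj3 := (hmid j (hjR j hj1)).2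
        have : t (j+1) ≤ t n := by
          rcases eq_or_lt_of_le (Nat.succ_le_of_lt hj2) with h | h
          · exact le_of_eq (congrArg t h)
          · exact le_of_lt (ht (j+1) n h hn)
        linarith
      have hBpos : 0 < B := by
        apply Finset.prod_pos
        intro j hj
        obtain ⟨hj1, hj2⟩ := Finset.mem_filter.mp hj
        push_neg at hj2
        have hjm := hjR j hj1
        have hj3 := (hmid j hjm).1
        have : t n ≤ t j := by
          rcases eq_or_lt_of_le hj2 with h | h
          · exact le_of_eq (congrArg t h)
          · exact le_of_lt (ht n j h (by omega))
        linarith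
      have hprodneg : ∏ j ∈ R.filter (fun j => j < n), (ρ j - t n)
          = (-1 : ℝ)^(c n) * A := by
        have h1 : ∀ j ∈ R.filter (fun j => j < n), (ρ j - t n) = (-1) * (t n - ρ j) := by
          intro j _; ring
        rw [Finset.prod_congr rfl h1, Finset.prod_mul_distrib, Finset.prod_const, hfibcard]
      have heval : p.eval (t n) = ν 0 * ((-1 : ℝ)^(c n) * A * B) := by
        rw [hp, Polynomial.eval_mul, Polynomial.eval_C, Polynomial.eval_prod]
        congr 1
        rw [← Finset.prod_filter_mul_prod_filter_not R (fun j => j < n)]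
        simp only [Polynomial.eval_sub, Polynomial.eval_C, Polynomial.eval_X]
        rw [hprodneg]
      have hsf : 0 < ν n * ν 0 * (-1 : ℝ)^(c n) := by
        have hs := hsign n
        by_cases he : Even (c n)
        · rw [he.neg_one_pow, mul_one]
          by_cases hν0 : 0 < ν 0
          · exact mul_pos (hs.mpr (iff_of_true he hν0)) hν0
          · have h0 : ν 0 < 0 := lt_of_le_of_ne (not_lt.mp hν0) (hν 0 hm)
            have hnp : ¬ (0 < ν n) := fun hp => hν0 ((hs.mp hp).mp he)
            exact mul_pos_of_neg_of_neg
              (lt_of_le_of_ne (not_lt.mp hnp) (hν n hn)) h0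
        · rw [(Nat.not_even_iff_odd.mp he).neg_one_pow]
          have hmn : ν n * ν 0 < 0 := by
            by_cases hν0 : 0 < ν 0
            · have hnp : ¬ (0 < ν n) := fun hp => he ((hs.mp hp).mpr hν0)
              exact mul_neg_of_neg_of_pos
                (lt_of_le_of_ne (not_lt.mp hnp) (hν n hn)) hν0
            · have h0 : ν 0 < 0 := lt_of_le_of_ne (not_lt.mp hν0) (hν 0 hm)
              have hpn : 0 < ν n := hs.mpr (iff_of_false he hν0)
              exact mul_neg_of_pos_of_neg hpn h0
          linarith
        -- goal closed
      calc (0:ℝ) < (ν n * ν 0 * (-1 : ℝ)^(c n)) * (A * B) :=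
            mul_pos hsf (mul_pos hApos hBpos)
        _ = ν n * p.eval (t n) := by rw [heval]; ring
    have hsum : 0 < ∑ n ∈ Finset.range m, ν n * p.eval (t n) :=
      Finset.sum_pos hpos ⟨0, Finset.mem_range.mpr hm⟩
    rw [hkey] at hsum
    exact lt_irrefl 0 hsum

end Aux

/-- If a k-uniform hypergraph (1 ≤ k ≤ d+1) is NOT (d+2)-interlacing,
then any order-respecting placement of its vertices on the moment curve γ_d is a
geometric embedding: convex hulls of hyperedges intersect exactly in the convex hull
of their common vertices (and each hyperedge image is affinely independent). -/
theorem stmt_5 {V : Type*} [LinearOrder V] (d k : ℕ) (hk : 1 ≤ k) (hkd : k ≤ d + 1)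
    (E : Set (Finset V)) (hunif : ∀ e ∈ E, e.card = k)
    (hninter : ¬ IsInterlacing E (d + 2))
    (φ : V → ℝ) (hφ : StrictMono φ) :
    (∀ e ∈ E, AffineIndependent ℝ (fun v : e => momentCurve d (φ v))) ∧
    ∀ e₁ ∈ E, ∀ e₂ ∈ E,
      convexHull ℝ ((fun v => momentCurve d (φ v)) '' (e₁ : Set V)) ∩
        convexHull ℝ ((fun v => momentCurve d (φ v)) '' (e₂ : Set V)) =
      convexHull ℝ ((fun v => momentCurve d (φ v)) '' ((e₁ : Set V) ∩ (e₂ : Set V))) := by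
  classical
  constructor
  · intro e he
    exact affine_indep_moment d k hkd e (hunif e he) φ hφ.injective
  intro e₁ he₁ e₂ he₂
  by_cases heq : e₁ = e₂
  · subst heq
    rw [Set.inter_self, Set.inter_self]
  set f : V → (Fin d → ℝ) := fun v => momentCurve d (φ v) with hf
  apply Set.Subset.antisymm
  swap
  · exact Set.subset_inter
      (convexHull_mono (Set.image_mono Set.inter_subset_left))
      (convexHull_mono (Set.image_mono Set.inter_subset_right))
  rintro x ⟨hx₁, hx₂⟩
  obtain ⟨lam, hlam0, hlamz, hlam1, hlamx⟩ := exists_weights e₁ f hx₁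
  obtain ⟨mu, hmu0, hmuz, hmu1, hmux⟩ := exists_weights e₂ f hx₂
  set ν : V → ℝ := fun v => lam v - mu v with hν
  set u : Finset V := e₁ ∪ e₂ with hu
  have hcoord : ∀ (w : V → ℝ) (e : Finset V), (∑ v ∈ e, w v • f v = x) →
      ∀ i : Fin d, ∑ v ∈ e, w v * (φ v) ^ ((i : ℕ) + 1) = x i := by
    intro w e hw i
    have := congrFun hw i
    rw [Finset.sum_apply] at this
    simpa [hf, momentCurve, smul_eq_mul] using this
  have hmomu : ∀ j ≤ d, ∑ v ∈ u, ν v * (φ v) ^ j = 0 := by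
    intro j hj
    have h1 : ∑ v ∈ e₁, lam v * (φ v) ^ j = ∑ v ∈ u, lam v * (φ v) ^ j :=
      Finset.sum_subset Finset.subset_union_left
        (fun v _ hv => by rw [hlamz v hv, zero_mul])
    have h2 : ∑ v ∈ e₂, mu v * (φ v) ^ j = ∑ v ∈ u, mu v * (φ v) ^ j :=
      Finset.sum_subset Finset.subset_union_right
        (fun v _ hv => by rw [hmuz v hv, zero_mul])
    have hsplit : ∑ v ∈ u, ν v * φ v ^ j
        = ∑ v ∈ u, lam v * φ v ^ j - ∑ v ∈ u, mu v * φ v ^ j := by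
      rw [← Finset.sum_sub_distrib]
      exact Finset.sum_congr rfl fun v _ => by simp [hν]; ring
    rw [hsplit, ← h1, ← h2]
    rcases Nat.eq_zero_or_pos j with rfl | hjpos
    · simp only [pow_zero, mul_one]
      rw [hlam1, hmu1]; ring
    · obtain ⟨i, rfl⟩ := Nat.exists_eq_succ_of_ne_zero hjpos.ne'
      have hi : i < d := by omega
      have ha := hcoord lam e₁ hlamx ⟨i, hi⟩
      have hb := hcoord mu e₂ hmux ⟨i, hi⟩
      simp only at ha hb
      rw [ha, hb]; ring
  set S : Finset V := u.filter (fun v => ν v ≠ 0) with hS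
  by_cases hSne : S.Nonempty
  · -- interlacing: contradiction
    exfalso
    obtain ⟨v₀, hv₀⟩ := hSne
    set l : List V := S.sort (· ≤ ·) with hl
    set m : ℕ := l.length with hm'
    set a : ℕ → V := fun n => l.getD n v₀ with ha
    have hm : 0 < m := by
      have : v₀ ∈ l := (Finset.mem_sort _).mpr hv₀
      exact List.length_pos_of_mem this
    have amem : ∀ n, n < m → a n ∈ S := by
      intro n hn
      rw [ha]
      simp only
      rw [List.getD_eq_getElem l v₀ hn]
      exact (Finset.mem_sort _).mp (List.getElem_mem hn)
    have amono : ∀ i j, i < j → j < m → a i < a j := by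
      intro i j hij hj
      have hi : i < m := hij.trans hj
      rw [ha]
      simp only
      rw [List.getD_eq_getElem l v₀ hi, List.getD_eq_getElem l v₀ hj]
      exact List.pairwise_iff_getElem.mp (Finset.sortedLT_sort S).pairwise i j hi hj hij
    have hsum : ∀ F : V → ℝ, ∑ n ∈ Finset.range m, F (a n) = ∑ v ∈ S, F v := by
      intro F
      refine Finset.sum_bij (fun n hn => a n) ?_ ?_ ?_ ?_
      · intro n hn; exact amem n (Finset.mem_range.mp hn)
      · intro n₁ h₁ n₂ h₂ hline
        by_contra hne
        rcases Nat.lt_or_ge n₁ n₂ with h | h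
        · exact absurd hline (ne_of_lt (amono _ _ h (Finset.mem_range.mp h₂)))
        · rcases Nat.lt_or_ge n₂ n₁ with h' | h'
          · exact absurd hline.symm (ne_of_lt (amono _ _ h' (Finset.mem_range.mp h₁)))
          · omega
      · intro v hv
        have : v ∈ l := (Finset.mem_sort _).mpr hv
        obtain ⟨n, hn, hvn⟩ := List.mem_iff_getElem.mp this
        refine ⟨n, Finset.mem_range.mpr hn, ?_⟩
        rw [ha]; simp only; rw [List.getD_eq_getElem l v₀ hn]; exact hvn
      · intro n hn; rfl
    have hmomS : ∀ j ≤ d, ∑ n ∈ Finset.range m, ν (a n) * (φ (a n)) ^ j = 0 := by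
      intro j hj
      rw [hsum (fun v => ν v * (φ v) ^ j)]
      rw [Finset.sum_filter_of_ne (by
        intro v hv hvne
        intro h0
        exact hvne (by rw [h0, zero_mul]))]
      exact hmomu j hj
    obtain ⟨g, hgm, hglt, hdisj⟩ := alt_of_moments d m hm (fun n => φ (a n)) (fun n => ν (a n))
      (fun i j hij hj => hφ (amono i j hij hj)) (fun n hn => (Finset.mem_filter.mp (amem n hn)).2)
      hmomS
    set w : Fin (d+2) → V := fun r => a (g r) with hw
    have hwmono : StrictMono w := fun r r' h => amono _ _ (hgm h) (hglt r')
    have hpos_mem : ∀ v, 0 < ν v → v ∈ e₁ := by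
      intro v hv
      by_contra hmem
      have h0 := hlamz v hmem
      have := hmu0 v
      simp only [hν] at hv
      linarith
    have hneg_mem : ∀ v, ν v < 0 → v ∈ e₂ := by
      intro v hv
      by_contra hmem
      have h0 := hmuz v hmem
      have := hlam0 v
      simp only [hν] at hv
      linarith
    apply hninter
    rcases hdisj with h | h
    · exact ⟨e₁, he₁, e₂, he₂, heq, w, hwmono, fun i =>
        ⟨fun he => hpos_mem _ ((h i).1 he), fun he => hneg_mem _ ((h i).2 he)⟩⟩
    · exact ⟨e₂, he₂, e₁, he₁, Ne.symm heq, w, hwmono, fun i =>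
        ⟨fun he => hneg_mem _ ((h i).1 he), fun he => hpos_mem _ ((h i).2 he)⟩⟩
  · -- ν ≡ 0 on u : x lies in the hull of the intersection
    have hνz : ∀ v ∈ u, ν v = 0 := by
      intro v hv
      by_contra h
      exact hSne ⟨v, Finset.mem_filter.mpr ⟨hv, h⟩⟩
    have hsup : ∀ v ∈ e₁, lam v ≠ 0 → v ∈ e₂ := by
      intro v hv hlne
      by_contra hv2
      have h0 := hmuz v hv2
      have := hνz v (Finset.mem_union_left _ hv)
      simp only [hν, h0, sub_zero] at this
      exact hlne this
    have h1 : ∑ v ∈ e₁ ∩ e₂, lam v = 1 := by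
      rw [← hlam1]
      apply Finset.sum_subset Finset.inter_subset_left
      intro v hv hvn
      by_contra h
      exact hvn (Finset.mem_inter.mpr ⟨hv, hsup v hv h⟩)
    have h2 : ∑ v ∈ e₁ ∩ e₂, lam v • f v = x := by
      rw [← hlamx]
      apply Finset.sum_subset Finset.inter_subset_left
      intro v hv hvn
      have hz : lam v = 0 := by
        by_contra h
        exact hvn (Finset.mem_inter.mpr ⟨hv, hsup v hv h⟩)
      rw [hz, zero_smul]
    have hcoeset : (e₁ : Set V) ∩ (e₂ : Set V) = ((e₁ ∩ e₂ : Finset V) : Set V) := by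
      simp [Finset.coe_inter]
    rw [hcoeset]
    have hmem := Finset.centerMass_mem_convexHull (e₁ ∩ e₂)
      (fun v _ => hlam0 v) (by rw [h1]; norm_num)
      (fun v hv => Set.mem_image_of_mem f (by exact_mod_cast hv))
    rwa [Finset.centerMass_eq_of_sum_1 _ f h1, h2] at hmem
end

section
/- Let T(a,b) be the full b-ary tree of depth a-1 and let H(a,b) be the hypergraph on V(T(a,b)) whose hyperedges are the sets of children of non-leaf vertices and the vertex sets of maximal root-to-leaf paths. If 3 ≤ a ≤ b, then H(a,b) is not (a+2)-interlacing with respect to any depth-first-search order on T(a,b). -/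
/-- The vertex set of the full b-ary tree `T(a,b)` of depth `a-1`:
vertices are addresses, i.e. lists over `Fin b` of length `< a`. -/
def TreeVert (a b : ℕ) : Type := {l : List (Fin b) // l.length < a}

instance (a b : ℕ) : DecidableEq (TreeVert a b) := by
  unfold TreeVert; infer_instance

/-- The maximal chain through a vertex: the set of all its prefixes
(for a leaf, this is the whole root-to-leaf path). -/
def chainOf {a b : ℕ} (m : TreeVert a b) : Finset (TreeVert a b) :=
  (Finset.range (m.1.length + 1)).image fun i =>
    ⟨m.1.take i, by rw [List.length_take]; exact lt_of_le_of_lt (min_le_right _ _) m.2⟩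

/-- The hyperedges of the hypergraph `H(a,b)`: child-sets of non-leaf vertices and
vertex sets of maximal (root-to-leaf) chains of `T(a,b)`. -/
def HabEdges (a b : ℕ) : Set (Finset (TreeVert a b)) :=
  {e | (∃ l : List (Fin b), ∃ h : l.length + 1 < a,
          e = Finset.univ.image fun j : Fin b =>
            (⟨l ++ [j], by simpa using h⟩ : TreeVert a b)) ∨
       (∃ leaf : TreeVert a b, leaf.1.length = a - 1 ∧ e = chainOf leaf)}

/-- For `3 ≤ a ≤ b`, the hypergraph `H(a,b)` is not `(a+2)`-interlacing
with respect to any DFS order on `T(a,b)`. A DFS order is a strict total order `lt`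
in which each vertex precedes all of its descendants and the descendants of each
vertex form an interval. -/
theorem stmt_6 (a b : ℕ) (ha : 3 ≤ a) (hab : a ≤ b)
    (lt : TreeVert a b → TreeVert a b → Prop)
    (htri : ∀ u v, lt u v ∨ u = v ∨ lt v u)
    (hirr : ∀ u, ¬ lt u u)
    (htrans : ∀ u v w, lt u v → lt v w → lt u w)
    (hdfs₁ : ∀ u v : TreeVert a b, u.1 <+: v.1 → u ≠ v → lt u v)
    (hdfs₂ : ∀ u v w : TreeVert a b, u.1 <+: w.1 → ¬ lt v u → ¬ lt w v → u.1 <+: v.1) :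
    ¬ ∃ e₁ ∈ HabEdges a b, ∃ e₂ ∈ HabEdges a b, e₁ ≠ e₂ ∧
        ∃ v : Fin (a + 2) → TreeVert a b,
          (∀ i j : Fin (a + 2), i < j → lt (v i) (v j)) ∧
          ∀ i : Fin (a + 2), (Even (i : ℕ) → v i ∈ e₁) ∧ (¬ Even (i : ℕ) → v i ∈ e₂) := by

  rintro ⟨e₁, he₁, e₂, he₂, hne, v, hmono, hmem⟩
  have asym : ∀ u w, lt u w → ¬ lt w u := fun u w h h' => hirr u (htrans _ _ _ h h')
  have nelt : ∀ u w, lt u w → u ≠ w := fun u w h he => hirr u (he ▸ h)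
  have sand : ∀ p y z : TreeVert a b, p.1 <+: z.1 → lt p y → lt y z → p.1 <+: y.1 :=
    fun p y z hh1 hh2 hh3 => hdfs₂ p y z hh1 (asym _ _ hh2) (asym _ _ hh3)
  have plen : ∀ x y : TreeVert a b, x.1 <+: y.1 → x ≠ y → x.1.length < y.1.length :=
    fun x y h hxy => lt_of_le_of_ne h.length_le
      (fun he => hxy (Subtype.ext (h.eq_of_length he)))
  have chainmem : ∀ (L x : TreeVert a b), x ∈ chainOf L → ∃ i, x.1 = L.1.take i := by
    intro L x hx
    obtain ⟨i, -, hi⟩ := Finset.mem_image.mp hx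
    exact ⟨i, congrArg Subtype.val hi.symm⟩
  have chainpre : ∀ (L x y : TreeVert a b), x ∈ chainOf L → y ∈ chainOf L →
      lt x y → x.1 <+: y.1 := by
    intro L x y hx hy hxy
    obtain ⟨i, hi⟩ := chainmem L x hx
    obtain ⟨j, hj⟩ := chainmem L y hy
    rcases le_total i j with h | h
    · rw [hi, hj]
      have hh : L.1.take i = (L.1.take j).take i := by
        rw [List.take_take, Nat.min_eq_left h]
      rw [hh]; exact List.take_prefix _ _
    · exfalso
      have hyx : y.1 <+: x.1 := by
        rw [hi, hj]
        have hh : L.1.take j = (L.1.take i).take j := by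
          rw [List.take_take, Nat.min_eq_left h]
        rw [hh]; exact List.take_prefix _ _
      exact asym _ _ hxy (hdfs₁ y x hyx (Ne.symm (nelt _ _ hxy)))
  have childmem : ∀ (l : List (Fin b)) (h : l.length + 1 < a) (x : TreeVert a b),
      x ∈ (Finset.univ.image fun j : Fin b =>
        (⟨l ++ [j], by simpa using h⟩ : TreeVert a b)) → ∃ j : Fin b, x.1 = l ++ [j] := by
    intro l h x hx
    obtain ⟨j, -, hj⟩ := Finset.mem_image.mp hx
    exact ⟨j, congrArg Subtype.val hj.symm⟩
  have childlt : ∀ (l : List (Fin b)) (hl : l.length < a) (x : TreeVert a b) (j : Fin b),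
      x.1 = l ++ [j] → lt ⟨l, hl⟩ x := by
    intro l hl x j hx
    refine hdfs₁ _ _ (by rw [hx]; exact List.prefix_append _ _) (fun he => ?_)
    have hh : l.length = x.1.length := congrArg (fun t : TreeVert a b => t.1.length) he
    rw [hx] at hh
    simp at hh
  have h0 : 0 < a + 2 := by omega
  have h1 : 1 < a + 2 := by omega
  have h2 : 2 < a + 2 := by omega
  have h3 : 3 < a + 2 := by omega
  have h4 : 4 < a + 2 := by omega
  have m01 : lt (v ⟨0, h0⟩) (v ⟨1, h1⟩) := hmono _ _ (Fin.mk_lt_mk.mpr (by omega))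
  have m12 : lt (v ⟨1, h1⟩) (v ⟨2, h2⟩) := hmono _ _ (Fin.mk_lt_mk.mpr (by omega))
  have m23 : lt (v ⟨2, h2⟩) (v ⟨3, h3⟩) := hmono _ _ (Fin.mk_lt_mk.mpr (by omega))
  have m34 : lt (v ⟨3, h3⟩) (v ⟨4, h4⟩) := hmono _ _ (Fin.mk_lt_mk.mpr (by omega))
  have m13 : lt (v ⟨1, h1⟩) (v ⟨3, h3⟩) := htrans _ _ _ m12 m23
  have m24 : lt (v ⟨2, h2⟩) (v ⟨4, h4⟩) := htrans _ _ _ m23 m34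
  have ev0 : Even ((⟨0, h0⟩ : Fin (a + 2)) : ℕ) := ⟨0, rfl⟩
  have ev2 : Even ((⟨2, h2⟩ : Fin (a + 2)) : ℕ) := ⟨1, rfl⟩
  have ev4 : Even ((⟨4, h4⟩ : Fin (a + 2)) : ℕ) := ⟨2, rfl⟩
  have od1 : ¬ Even ((⟨1, h1⟩ : Fin (a + 2)) : ℕ) := Nat.not_even_iff_odd.mpr ⟨0, rfl⟩
  have od3 : ¬ Even ((⟨3, h3⟩ : Fin (a + 2)) : ℕ) := Nat.not_even_iff_odd.mpr ⟨1, rfl⟩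
  rcases he₁ with ⟨p, hp, rfl⟩ | ⟨L1, hL1, rfl⟩ <;>
    rcases he₂ with ⟨q, hq, rfl⟩ | ⟨L2, hL2, rfl⟩
  · -- both child-sets
    have hPa : p.length < a := by omega
    have hQa : q.length < a := by omega
    obtain ⟨j0, hv0⟩ := childmem p hp _ ((hmem ⟨0, h0⟩).1 ev0)
    obtain ⟨j2, hv2⟩ := childmem p hp _ ((hmem ⟨2, h2⟩).1 ev2)
    obtain ⟨j1, hv1⟩ := childmem q hq _ ((hmem ⟨1, h1⟩).2 od1)
    obtain ⟨j3, hv3⟩ := childmem q hq _ ((hmem ⟨3, h3⟩).2 od3)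
    have hP0 : lt ⟨p, hPa⟩ (v ⟨0, h0⟩) := childlt p hPa _ j0 hv0
    have hQ1 : lt ⟨q, hQa⟩ (v ⟨1, h1⟩) := childlt q hQa _ j1 hv1
    have hP1 : lt ⟨p, hPa⟩ (v ⟨1, h1⟩) := htrans _ _ _ hP0 m01
    have hQ2 : lt ⟨q, hQa⟩ (v ⟨2, h2⟩) := htrans _ _ _ hQ1 m12
    have hPp1 : p <+: (v ⟨1, h1⟩).1 :=
      sand ⟨p, hPa⟩ _ _ (by rw [hv2]; exact List.prefix_append _ _) hP1 m12
    have hQp2 : q <+: (v ⟨2, h2⟩).1 :=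
      sand ⟨q, hQa⟩ _ _ (by rw [hv3]; exact List.prefix_append _ _) hQ2 m23
    have l1 : p.length < (v ⟨1, h1⟩).1.length := plen ⟨p, hPa⟩ _ hPp1 (nelt _ _ hP1)
    have l2 : q.length < (v ⟨2, h2⟩).1.length := plen ⟨q, hQa⟩ _ hQp2 (nelt _ _ hQ2)
    have lv1 : (v ⟨1, h1⟩).1.length = q.length + 1 := by rw [hv1]; simp
    have lv2 : (v ⟨2, h2⟩).1.length = p.length + 1 := by rw [hv2]; simp
    have hlen : p.length = q.length := by omega
    have hpq : p = q := by
      have h' : p <+: q ++ [j1] := by rw [← hv1]; exact hPp1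
      have hh := List.prefix_iff_eq_take.mp h'
      rw [hlen, List.take_left' rfl] at hh
      exact hh
    subst hpq
    exact hne rfl
  · -- e₁ child-set, e₂ chain
    have hPa : p.length < a := by omega
    obtain ⟨j0, hv0⟩ := childmem p hp _ ((hmem ⟨0, h0⟩).1 ev0)
    obtain ⟨j2, hv2⟩ := childmem p hp _ ((hmem ⟨2, h2⟩).1 ev2)
    have hv1c := (hmem ⟨1, h1⟩).2 od1
    have hv3c := (hmem ⟨3, h3⟩).2 od3
    have hP0 : lt ⟨p, hPa⟩ (v ⟨0, h0⟩) := childlt p hPa _ j0 hv0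
    have hP1 : lt ⟨p, hPa⟩ (v ⟨1, h1⟩) := htrans _ _ _ hP0 m01
    have hPp1 : p <+: (v ⟨1, h1⟩).1 :=
      sand ⟨p, hPa⟩ _ _ (by rw [hv2]; exact List.prefix_append _ _) hP1 m12
    have l1 : p.length < (v ⟨1, h1⟩).1.length := plen ⟨p, hPa⟩ _ hPp1 (nelt _ _ hP1)
    have h13 : (v ⟨1, h1⟩).1 <+: (v ⟨3, h3⟩).1 := chainpre L2 _ _ hv1c hv3c m13
    have h12 : (v ⟨1, h1⟩).1 <+: (v ⟨2, h2⟩).1 := sand _ _ _ h13 m12 m23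
    have l2 : (v ⟨1, h1⟩).1.length < (v ⟨2, h2⟩).1.length :=
      plen _ _ h12 (nelt _ _ m12)
    have lv2 : (v ⟨2, h2⟩).1.length = p.length + 1 := by rw [hv2]; simp
    omega
  · -- e₁ chain, e₂ child-set
    have hQa : q.length < a := by omega
    obtain ⟨j1, hv1⟩ := childmem q hq _ ((hmem ⟨1, h1⟩).2 od1)
    obtain ⟨j3, hv3⟩ := childmem q hq _ ((hmem ⟨3, h3⟩).2 od3)
    have hv2c := (hmem ⟨2, h2⟩).1 ev2
    have hv4c := (hmem ⟨4, h4⟩).1 ev4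
    have hQ1 : lt ⟨q, hQa⟩ (v ⟨1, h1⟩) := childlt q hQa _ j1 hv1
    have hQ2 : lt ⟨q, hQa⟩ (v ⟨2, h2⟩) := htrans _ _ _ hQ1 m12
    have hQp2 : q <+: (v ⟨2, h2⟩).1 :=
      sand ⟨q, hQa⟩ _ _ (by rw [hv3]; exact List.prefix_append _ _) hQ2 m23
    have l2 : q.length < (v ⟨2, h2⟩).1.length := plen ⟨q, hQa⟩ _ hQp2 (nelt _ _ hQ2)
    have h24 : (v ⟨2, h2⟩).1 <+: (v ⟨4, h4⟩).1 := chainpre L1 _ _ hv2c hv4c m24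
    have h23 : (v ⟨2, h2⟩).1 <+: (v ⟨3, h3⟩).1 := sand _ _ _ h24 m23 m34
    have l3 : (v ⟨2, h2⟩).1.length < (v ⟨3, h3⟩).1.length :=
      plen _ _ h23 (nelt _ _ m23)
    have lv3 : (v ⟨3, h3⟩).1.length = q.length + 1 := by rw [hv3]; simp
    omega
  · -- both chains
    have key : ∀ (i : ℕ) (hi : i < a + 2) (hi1 : i + 1 < a + 2) (hi2 : i + 2 < a + 2),
        (v ⟨i, hi⟩).1.length < (v ⟨i + 1, hi1⟩).1.length := by
      intro i hi hi1 hi2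
      have mA : lt (v ⟨i, hi⟩) (v ⟨i + 1, hi1⟩) := hmono _ _ (Fin.mk_lt_mk.mpr (by omega))
      have mB : lt (v ⟨i + 1, hi1⟩) (v ⟨i + 2, hi2⟩) := hmono _ _ (Fin.mk_lt_mk.mpr (by omega))
      have mC : lt (v ⟨i, hi⟩) (v ⟨i + 2, hi2⟩) := htrans _ _ _ mA mB
      have hpre : (v ⟨i, hi⟩).1 <+: (v ⟨i + 2, hi2⟩).1 := by
        rcases Nat.even_or_odd i with hE | hO
        · have hE2 : Even (i + 2) := by
            rcases hE with ⟨r, hr⟩; exact ⟨r + 1, by omega⟩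
          exact chainpre L1 _ _ ((hmem ⟨i, hi⟩).1 hE) ((hmem ⟨i + 2, hi2⟩).1 hE2) mC
        · have hO1 : ¬ Even i := Nat.not_even_iff_odd.mpr hO
          have hO2 : ¬ Even (i + 2) := by
            refine Nat.not_even_iff_odd.mpr ?_
            rcases hO with ⟨r, hr⟩; exact ⟨r + 1, by omega⟩
          exact chainpre L2 _ _ ((hmem ⟨i, hi⟩).2 hO1) ((hmem ⟨i + 2, hi2⟩).2 hO2) mC
      exact plen _ _ (sand _ _ _ hpre mA mB) (nelt _ _ mA)
    have grow : ∀ i : ℕ, ∀ hi : i < a + 2, i ≤ a → i ≤ (v ⟨i, hi⟩).1.length := by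
      intro i
      induction i with
      | zero => exact fun _ _ => Nat.zero_le _
      | succ n ih =>
        intro hi hn
        have hA : n < a + 2 := by omega
        have hB := ih hA (by omega)
        have hC := key n hA hi (by omega)
        omega
    have hAa : a < a + 2 := by omega
    have hg := grow a hAa le_rfl
    have hlt := (v ⟨a, hAa⟩).2
    omega
end

section
/- For every k ≥ 3 and m ≥ 2, the k-uniform hypergraph H^{k,m} is not (k+2)-interlacing with respect to the order ≺^{k,m}. -/
/-- Vertex types of the recursively defined hypergraphs `H^{k,m}`:
`HVert k 0 = Fin k` and `HVert k (m+1)` is the vertex set of the full b-ary tree of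
depth `k-1` whose branching at every non-leaf vertex is indexed by `HVert k m`
(so `b = |V(H^{k,m+1})| = |V(T(k, |HVert k m|))|`). The hypergraph `H^{k,m}` from the
paper lives on `HVert k (m-1)`. -/
@[reducible] def HVert (k : ℕ) : ℕ → Type
  | 0 => Fin k
  | m + 1 => {l : List (HVert k m) // l.length < k}

instance HVertDecEq (k m : ℕ) : DecidableEq (HVert k m) := by
  induction m with
  | zero => exact fun a b => inferInstanceAs (Decidable (a = b))
  | succ m ih => exact fun a b => by letI := ih; exact inferInstanceAs (Decidable (a = b))

/-- The canonical DFS (preorder/lexicographic) order on `HVert k m`: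
at level 0 the order of `Fin k`; at level `m+1` the lexicographic order on addresses,
which is a DFS order of the tree compatible with the orders on the copies. -/
def HVertLT (k : ℕ) : (m : ℕ) → HVert k m → HVert k m → Prop
  | 0 => fun a b => a < b
  | m + 1 => fun a b => List.Lex (HVertLT k m) a.1 b.1

/-- The hyperedges of `H^{k,m}` (at level `m`, i.e. of `H^{k,m+1}` in the paper's
numbering when `m ≥ 1`): at level 0 the single hyperedge `Fin k`; at level `m+1`,
the maximal chains of the tree together with, for each non-leaf vertex `l`, the
images of the hyperedges of the level-`m` hypergraph placed on the children of `l`. -/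
def HEdge (k : ℕ) : (m : ℕ) → Finset (HVert k m) → Prop
  | 0 => fun e => e = Finset.univ
  | m + 1 => fun e =>
      (∃ leaf : HVert k (m + 1), leaf.1.length = k - 1 ∧
        e = (Finset.range (leaf.1.length + 1)).image (fun i =>
          (⟨leaf.1.take i, by
              rw [List.length_take]; exact lt_of_le_of_lt (min_le_right _ _) leaf.2⟩ :
            HVert k (m + 1)))) ∨
      (∃ l : List (HVert k m), ∃ h : l.length + 1 < k, ∃ e' : Finset (HVert k m),
        HEdge k m e' ∧
        e = e'.image (fun w => (⟨l ++ [w], by simpa using h⟩ : HVert k (m + 1))))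


section ListLex
variable {β : Type*} {r : β → β → Prop}

theorem myLex_append_left (p : List β) {x y : List β} (h : List.Lex r x y) :
    List.Lex r (p ++ x) (p ++ y) := by
  induction p with
  | nil => simpa using h
  | cons a p ih => exact List.Lex.cons ih

theorem myLex_middle {a b : β} (hab : r a b) (p x y : List β) :
    List.Lex r (p ++ a :: x) (p ++ b :: y) :=
  myLex_append_left p (List.Lex.rel hab)

theorem myLex_of_prefix_ne {x y : List β} (h : x <+: y) (hne : x ≠ y) : List.Lex r x y := by
  obtain ⟨t, rfl⟩ := h
  induction x with
  | nil =>
    cases t with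
    | nil => exact absurd rfl hne
    | cons a t => exact List.Lex.nil
  | cons a x ih =>
    exact List.Lex.cons (ih (fun h => hne (by rw [List.cons_append]; exact congrArg _ h)))

theorem myLex_asymm (hasym : ∀ a b : β, r a b → r b a → False) :
    ∀ x y : List β, List.Lex r x y → List.Lex r y x → False := by
  haveI : IsAsymm β r := ⟨fun a b h h' => hasym a b h h'⟩
  exact fun x y h h' => asymm (r := List.Lex r) h h'

theorem myLex_trans (htr : ∀ a b c : β, r a b → r b c → r a c) :
    ∀ {x y z : List β}, List.Lex r x y → List.Lex r y z → List.Lex r x z := by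
  intro x y z h1
  induction h1 generalizing z with
  | nil => intro h2; cases h2 <;> exact List.Lex.nil
  | @cons a l₁ l₂ h ih =>
    intro h2
    cases h2 with
    | cons h2 => exact List.Lex.cons (ih h2)
    | rel h2 => exact List.Lex.rel h2
  | @rel a₁ l₁ a₂ l₂ h =>
    intro h2
    cases h2 with
    | cons h2 => exact List.Lex.rel h
    | rel h2 => exact List.Lex.rel (htr _ _ _ h h2)

theorem myLex_snoc_inv (hirr : ∀ c : β, ¬ r c c) {l : List β} {a b : β}
    (h : List.Lex r (l ++ [a]) (l ++ [b])) : r a b := by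
  induction l with
  | nil => simpa using h
  | cons c l ih =>
    cases h with
    | cons h => exact ih h
    | rel h => exact absurd h (hirr c)

theorem snoc_prefix_snoc {p : List β} {a b : β} {u : List β}
    (h1 : p ++ [a] <+: u) (h2 : p ++ [b] <+: u) : a = b := by
  have h := List.prefix_of_prefix_length_le h1 h2 (by simp)
  have h' := (List.prefix_append_right_inj p).1 h
  simpa using (List.cons_prefix_cons.1 h').1

theorem snoc_prefix_cons {p : List β} {a b : β} {u s : List β}
    (h1 : p ++ [a] <+: u) (h2 : u <+: p ++ b :: s) : a = b := by
  have h3 := (List.prefix_append_right_inj p).1 (h1.trans h2)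
  exact (List.cons_prefix_cons.1 h3).1

theorem diverge : ∀ (x : List β), ∀ (y : List β), ¬ x <+: y → ¬ y <+: x →
    ∃ (p : List β) (a b : β) (x' y' : List β), a ≠ b ∧ x = p ++ a :: x' ∧ y = p ++ b :: y' := by
  intro x
  induction x with
  | nil => intro y h1 _; exact absurd (List.nil_prefix) h1
  | cons a x ih =>
    intro y h1 h2
    cases y with
    | nil => exact absurd (List.nil_prefix) h2
    | cons b y =>
      by_cases hab : a = b
      · subst hab
        obtain ⟨p, c, d, x', y', hcd, hx, hy⟩ :=
          ih y (fun h => h1 (List.cons_prefix_cons.2 ⟨rfl, h⟩))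
            (fun h => h2 (List.cons_prefix_cons.2 ⟨rfl, h⟩))
        exact ⟨a :: p, c, d, x', y', hcd, by simp [hx], by simp [hy]⟩
      · exact ⟨[], a, b, x, y, hab, rfl, rfl⟩

end ListLex

section Frame
variable {V : Type*}

theorem frame (lt : V → V → Prop)
    (hasym : ∀ x y, lt x y → lt y x → False)
    {n N : ℕ} (v : ℕ → V) (P : ℕ → V → Prop)
    (hmono : ∀ i j, i < j → j < n → lt (v i) (v j))
    (hcover : ∀ i, i < n → ∃ t, t < N ∧ P t (v i))
    (hsep : ∀ t t' x y, t < t' → P t x → P t' y → lt x y)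
    (hnoadj : ∀ t i, i + 1 < n → P t (v i) → P t (v (i + 1)) → False) :
    ∃ b : ℕ → ℕ, (∀ i, i < n → b i < N ∧ P (b i) (v i)) ∧
      (∀ i j, i < j → j < n → b i < b j) := by
  classical
  set b : ℕ → ℕ := fun i => if h : i < n then (hcover i h).choose else 0 with hbdef
  have hbP : ∀ i, i < n → b i < N ∧ P (b i) (v i) := by
    intro i h
    have := (hcover i h).choose_spec
    simpa [hbdef, dif_pos h] using this
  have hle : ∀ i j, i < j → j < n → b i ≤ b j := by
    intro i j hij hj
    by_contra h
    push_neg at h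
    exact hasym _ _ (hmono i j hij hj)
      (hsep _ _ _ _ h (hbP j hj).2 (hbP i (lt_trans hij hj)).2)
  have hstrict : ∀ i j, i < j → j < n → b i < b j := by
    intro i j hij hj
    rcases lt_or_eq_of_le (hle i j hij hj) with h | h
    · exact h
    · exfalso
      have hi1 : i + 1 ≤ j := hij
      have hi1n : i + 1 < n := lt_of_le_of_lt hi1 hj
      have e1 : b i ≤ b (i + 1) := hle i (i + 1) (Nat.lt_succ_self i) hi1n
      have e2 : b (i + 1) ≤ b j := by
        rcases Nat.lt_or_ge (i + 1) j with h' | h'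
        · exact hle _ _ h' hj
        · have : i + 1 = j := le_antisymm hi1 h'
          rw [this]
      have heq : b (i + 1) = b i := le_antisymm (h ▸ e2) e1
      exact hnoadj (b i) i hi1n (hbP i (lt_trans (Nat.lt_succ_self i) hi1n)).2
        (heq ▸ (hbP (i + 1) hi1n).2)
  exact ⟨b, hbP, hstrict⟩

theorem strictmono_ge {b : ℕ → ℕ} {n : ℕ} (h : ∀ i j, i < j → j < n → b i < b j) :
    ∀ i, i < n → i ≤ b i := by
  intro i
  induction i with
  | zero => intro _; exact Nat.zero_le _
  | succ i ihh =>
    intro hi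
    have h1 := ihh (lt_trans (Nat.lt_succ_self i) hi)
    exact Nat.succ_le_of_lt (lt_of_le_of_lt h1 (h i (i + 1) (Nat.lt_succ_self i) hi))

theorem frame_le (lt : V → V → Prop)
    (hasym : ∀ x y, lt x y → lt y x → False)
    {n N : ℕ} (v : ℕ → V) (P : ℕ → V → Prop)
    (hmono : ∀ i j, i < j → j < n → lt (v i) (v j))
    (hcover : ∀ i, i < n → ∃ t, t < N ∧ P t (v i))
    (hsep : ∀ t t' x y, t < t' → P t x → P t' y → lt x y)
    (hnoadj : ∀ t i, i + 1 < n → P t (v i) → P t (v (i + 1)) → False) :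
    n ≤ N := by
  obtain ⟨b, h1, h2⟩ := frame lt hasym v P hmono hcover hsep hnoadj
  by_contra h
  push_neg at h
  exact absurd (h1 N h).1 (not_lt.2 (strictmono_ge h2 N h))

end Frame

section HVertOrd

theorem hlt_asymm (k : ℕ) : ∀ (n : ℕ) (a b : HVert k n),
    HVertLT k n a b → HVertLT k n b a → False := by
  intro n
  induction n with
  | zero => exact fun a b h1 h2 => absurd h1 (not_lt.2 (le_of_lt h2))
  | succ n ih =>
    intro a b h1 h2
    exact myLex_asymm (fun x y hx hy => ih x y hx hy) a.1 b.1 h1 h2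

theorem hlt_irrefl (k n : ℕ) (a : HVert k n) : ¬ HVertLT k n a a :=
  fun h => hlt_asymm k n a a h h

theorem hlt_trans (k : ℕ) : ∀ (n : ℕ) (a b c : HVert k n),
    HVertLT k n a b → HVertLT k n b c → HVertLT k n a c := by
  intro n
  induction n with
  | zero => exact fun a b c h1 h2 => lt_trans h1 h2
  | succ n ih =>
    intro a b c h1 h2
    exact myLex_trans (fun x y z hx hy => ih x y z hx hy) h1 h2

theorem hlt_tri (k : ℕ) : ∀ (n : ℕ) (a b : HVert k n),
    HVertLT k n a b ∨ a = b ∨ HVertLT k n b a := by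
  intro n
  induction n with
  | zero => exact fun a b => lt_trichotomy a b
  | succ n ih =>
    intro a b
    haveI : IsTrichotomous (HVert k n) (HVertLT k n) :=
      ⟨fun a b h1 h2 => ((ih a b).resolve_left h1).resolve_right h2⟩
    rcases trichotomous (r := List.Lex (HVertLT k n)) a.1 b.1 with h | h | h
    · exact Or.inl h
    · exact Or.inr (Or.inl (Subtype.ext h))
    · exact Or.inr (Or.inr h)

end HVertOrd

section Cases
variable {β : Type*} {r : β → β → Prop} {k : ℕ}

/-- chain–chain, oriented version -/
theorem caseCC' (hk : 3 ≤ k)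
    (hasym : ∀ a b : β, r a b → r b a → False)
    {L₁ L₂ : List β} (hlen₁ : L₁.length = k - 1)
    {p : List β} {a b : β} {x' y' : List β} (hab : r a b)
    (hx : L₁ = p ++ a :: x') (hy : L₂ = p ++ b :: y')
    (v : ℕ → List β)
    (hmono : ∀ i j, i < j → j < k + 2 → List.Lex r (v i) (v j))
    (hcov : ∀ i, i < k + 2 → v i <+: L₁ ∨ v i <+: L₂)
    (hadj : ∀ i, i + 1 < k + 2 →
      (v i <+: L₁ ∨ v (i + 1) <+: L₁) ∧ (v i <+: L₂ ∨ v (i + 1) <+: L₂)) : False := by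
  have hane : a ≠ b := fun h => hasym a b hab (h ▸ hab)
  have hplen : p.length + 1 ≤ k - 1 := by
    rw [hx] at hlen₁; simp [List.length_append] at hlen₁; omega
  set P : ℕ → List β → Prop := fun t x =>
    (t ≤ p.length ∧ x = p.take t) ∨ (t = p.length + 1 ∧ p ++ [a] <+: x) ∨
      (t = p.length + 2 ∧ p ++ [b] <+: x) with hP
  have hshort : ∀ (L : List β) (c : β) (s : List β) (z : List β), L = p ++ c :: s →
      z <+: L → z.length ≤ p.length → z = p.take z.length := by
    intro L c s z hL hp hlen
    have h1 : z = L.take z.length := List.prefix_iff_eq_take.1 hp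
    have h2 : p = L.take p.length :=
      List.prefix_iff_eq_take.1 (hL ▸ List.prefix_append p (c :: s))
    have h3 : List.take z.length p = List.take z.length L := by
      rw [h2, List.take_take, min_eq_left hlen]
    exact h1.trans h3.symm
  have hdeep : ∀ (L : List β) (c : β) (s : List β) (z : List β), L = p ++ c :: s →
      z <+: L → ¬ z.length ≤ p.length → p ++ [c] <+: z := by
    intro L c s z hL hp hlen
    exact List.prefix_of_prefix_length_le ⟨s, by simp [hL]⟩ hp (by simp; omega)
  have hcover : ∀ i, i < k + 2 → ∃ t, t < p.length + 3 ∧ P t (v i) := by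
    intro i hi
    rcases hcov i hi with h | h
    · by_cases hlen : (v i).length ≤ p.length
      · exact ⟨(v i).length, by omega, Or.inl ⟨hlen, hshort L₁ a x' _ hx h hlen⟩⟩
      · exact ⟨p.length + 1, by omega, Or.inr (Or.inl ⟨rfl, hdeep L₁ a x' _ hx h hlen⟩)⟩
    · by_cases hlen : (v i).length ≤ p.length
      · exact ⟨(v i).length, by omega, Or.inl ⟨hlen, hshort L₂ b y' _ hy h hlen⟩⟩
      · exact ⟨p.length + 2, by omega, Or.inr (Or.inr ⟨rfl, hdeep L₂ b y' _ hy h hlen⟩)⟩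
  have hsep : ∀ t t' x y, t < t' → P t x → P t' y → List.Lex r x y := by
    intro t t' x y htt' hPx hPy
    have hlow : ∀ (z : List β) (u : ℕ), u ≤ p.length → z = p.take u → ∀ (w : List β) (c : β),
        p ++ [c] <+: w → List.Lex r z w := by
      intro z u hu hz w c hw
      apply myLex_of_prefix_ne (((hz ▸ List.take_prefix u p).trans
        (List.prefix_append p [c])).trans hw)
      intro hEq
      have l1 : z.length ≤ p.length := by
        rw [hz, List.length_take]; omega
      have l2 : p.length + 1 ≤ w.length := by
        have := hw.length_le; simp at this; omega
      rw [hEq] at l1; omega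
    rcases hPx with ⟨ht, hx1⟩ | ⟨ht, hx1⟩ | ⟨ht, hx1⟩ <;>
      rcases hPy with ⟨ht', hy1⟩ | ⟨ht', hy1⟩ | ⟨ht', hy1⟩
    · -- both short
      have hpre : p.take t <+: p.take t' := by
        rw [show p.take t = (p.take t').take t by
          rw [List.take_take, min_eq_left (le_of_lt htt')]]
        exact List.take_prefix _ _
      rw [hx1, hy1]
      apply myLex_of_prefix_ne hpre
      intro hEq
      have := congrArg List.length hEq
      simp [List.length_take] at this
      omega
    · exact hlow x t ht hx1 y a hy1
    · exact hlow x t ht hx1 y b hy1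
    · omega
    · omega
    · obtain ⟨u, hu⟩ := hx1
      obtain ⟨u', hu'⟩ := hy1
      rw [← hu, ← hu', List.append_assoc, List.append_assoc]
      exact myLex_middle hab p ([] ++ u) ([] ++ u')
    · omega
    · omega
    · omega
  have hnoadj : ∀ t i, i + 1 < k + 2 → P t (v i) → P t (v (i + 1)) → False := by
    intro t i hi hP1 hP2
    have hlt := hmono i (i + 1) (Nat.lt_succ_self i) hi
    rcases hP1 with ⟨ht, h1⟩ | ⟨ht, h1⟩ | ⟨ht, h1⟩ <;>
      rcases hP2 with ⟨ht', h2⟩ | ⟨ht', h2⟩ | ⟨ht', h2⟩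
    · rw [h1, h2] at hlt
      exact myLex_asymm hasym _ _ hlt hlt
    · omega
    · omega
    · omega
    · -- both deep in L₁ : neither is a prefix of L₂
      have key : ∀ z : List β, p ++ [a] <+: z → ¬ z <+: L₂ := by
        intro z hz hzL
        exact hane (snoc_prefix_cons hz (hy ▸ hzL))
      rcases (hadj i hi).2 with h | h
      · exact key _ h1 h
      · exact key _ h2 h
    · omega
    · omega
    · omega
    · have key : ∀ z : List β, p ++ [b] <+: z → ¬ z <+: L₁ := by
        intro z hz hzL
        exact hane (snoc_prefix_cons hz (hx ▸ hzL)).symm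
      rcases (hadj i hi).1 with h | h
      · exact key _ h1 h
      · exact key _ h2 h
  have := frame_le (List.Lex r) (myLex_asymm hasym) v P hmono hcover hsep hnoadj
  omega

theorem caseCC (hk : 3 ≤ k)
    (hasym : ∀ a b : β, r a b → r b a → False)
    (htri : ∀ a b : β, r a b ∨ a = b ∨ r b a)
    {L₁ L₂ : List β} (hlen₁ : L₁.length = k - 1) (hlen₂ : L₂.length = k - 1)
    (hne : L₁ ≠ L₂)
    (v : ℕ → List β)
    (hmono : ∀ i j, i < j → j < k + 2 → List.Lex r (v i) (v j))
    (hcov : ∀ i, i < k + 2 → v i <+: L₁ ∨ v i <+: L₂)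
    (hadj : ∀ i, i + 1 < k + 2 →
      (v i <+: L₁ ∨ v (i + 1) <+: L₁) ∧ (v i <+: L₂ ∨ v (i + 1) <+: L₂)) : False := by
  have hp1 : ¬ L₁ <+: L₂ := fun h => hne (h.eq_of_length (hlen₁.trans hlen₂.symm))
  have hp2 : ¬ L₂ <+: L₁ := fun h => hne (h.eq_of_length (hlen₂.trans hlen₁.symm)).symm
  obtain ⟨p, a, b, x', y', hab, hx, hy⟩ := diverge L₁ L₂ hp1 hp2
  rcases htri a b with h | h | h
  · exact caseCC' hk hasym hlen₁ h hx hy v hmono hcov hadj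
  · exact hab h
  · exact caseCC' hk hasym hlen₂ h hy hx v hmono
      (fun i hi => (hcov i hi).symm)
      (fun i hi => ⟨(hadj i hi).2, (hadj i hi).1⟩)

theorem caseMixed (hk : 3 ≤ k)
    (hasym : ∀ a b : β, r a b → r b a → False)
    (htri : ∀ a b : β, r a b ∨ a = b ∨ r b a)
    (htr : ∀ a b c : β, r a b → r b c → r a c)
    {L l : List β} (hL : L.length = k - 1) (hl : l.length + 1 < k)
    (v : ℕ → List β)
    (hmono : ∀ i j, i < j → j < k + 2 → List.Lex r (v i) (v j))
    (hcov : ∀ i, i < k + 2 → v i <+: L ∨ ∃ w, v i = l ++ [w])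
    (hadj : ∀ i, i + 1 < k + 2 →
      (v i <+: L ∨ v (i + 1) <+: L) ∧
        ((∃ w, v i = l ++ [w]) ∨ (∃ w, v (i + 1) = l ++ [w])))
    (h13 : (v 1 <+: L ∧ v 3 <+: L) ∨
      ((∃ w, v 1 = l ++ [w]) ∧ (∃ w, v 3 = l ++ [w]))) : False := by
  have hirr : ∀ c : β, ¬ r c c := fun c h => hasym c c h h
  have hlL' : l.length < L.length := by omega
  by_cases hlL : l <+: L
  · -- the chain passes through the parent of the sibling edge
    obtain ⟨t, ht⟩ := hlL
    cases t with
    | nil => rw [← ht] at hlL'; simp at hlL'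
    | cons c L' =>
    have hLc : L = l ++ c :: L' := ht.symm
    set P : ℕ → List β → Prop := fun t x =>
      (t = 0 ∧ x <+: l) ∨
      (t = 1 ∧ ∃ w, x = l ++ [w] ∧ r w c) ∨
      (t = 2 ∧ x = l ++ [c]) ∨
      (t = 3 ∧ l ++ [c] <+: x ∧ l.length + 1 < x.length) ∨
      (t = 4 ∧ ∃ w, x = l ++ [w] ∧ r c w) with hP
    have notsib_short : ∀ z : List β, z <+: l → ¬ ∃ w, z = l ++ [w] := by
      rintro z hz ⟨w, rfl⟩
      have := hz.length_le
      simp at this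
    have notsib_long : ∀ z : List β, l.length + 1 < z.length → ¬ ∃ w, z = l ++ [w] := by
      rintro z hzl ⟨w, rfl⟩
      simp at hzl
    have notchain : ∀ (z : List β) (w : β), z = l ++ [w] → r w c → ¬ z <+: L := by
      rintro z w rfl hr hzL
      rw [hLc] at hzL
      have h1 := (List.prefix_append_right_inj l).1 hzL
      have h2 := (List.cons_prefix_cons.1 h1).1
      exact hirr c (h2 ▸ hr)
    have hcover : ∀ i, i < k + 2 → ∃ s, s < 5 ∧ P s (v i) := by
      intro i hi
      rcases hcov i hi with h | ⟨w, hw⟩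
      · by_cases hlen : (v i).length ≤ l.length
        · exact ⟨0, by omega, Or.inl ⟨rfl, List.prefix_of_prefix_length_le h
            ⟨c :: L', hLc.symm⟩ hlen⟩⟩
        · have hdc : l ++ [c] <+: v i :=
            List.prefix_of_prefix_length_le ⟨L', by simp [hLc]⟩ h (by simp; omega)
          by_cases hlen2 : (v i).length = l.length + 1
          · exact ⟨2, by omega, Or.inr (Or.inr (Or.inl ⟨rfl,
              (hdc.eq_of_length (by simp [hlen2])).symm⟩))⟩
          · refine ⟨3, by omega, Or.inr (Or.inr (Or.inr (Or.inl ⟨rfl, hdc, ?_⟩)))⟩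
            have := hdc.length_le
            simp at this
            omega
      · rcases htri w c with hr | hr | hr
        · exact ⟨1, by omega, Or.inr (Or.inl ⟨rfl, w, hw, hr⟩)⟩
        · exact ⟨2, by omega, Or.inr (Or.inr (Or.inl ⟨rfl, hr ▸ hw⟩))⟩
        · exact ⟨4, by omega, Or.inr (Or.inr (Or.inr (Or.inr ⟨rfl, w, hw, hr⟩)))⟩
    have sep0 : ∀ z y : List β, z <+: l → l <+: y → l.length < y.length → List.Lex r z y := by
      intro z y hz hy hlen
      apply myLex_of_prefix_ne (hz.trans hy)
      intro hEq
      have := hz.length_le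
      rw [hEq] at this
      omega
    have hsep : ∀ s s' x y, s < s' → P s x → P s' y → List.Lex r x y := by
      intro s s' x y hss hPx hPy
      rcases hPx with ⟨hs, hx1⟩ | ⟨hs, w, hx1, hrx⟩ | ⟨hs, hx1⟩ |
          ⟨hs, hx1, hx2⟩ | ⟨hs, w, hx1, hrx⟩ <;>
        rcases hPy with ⟨hs', hy1⟩ | ⟨hs', w', hy1, hry⟩ | ⟨hs', hy1⟩ |
          ⟨hs', hy1, hy2⟩ | ⟨hs', w', hy1, hry⟩ <;>
        try omega
      · exact sep0 x y hx1 (hy1 ▸ List.prefix_append l [w']) (by rw [hy1]; simp)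
      · exact sep0 x y hx1 (hy1 ▸ List.prefix_append l [c]) (by rw [hy1]; simp)
      · exact sep0 x y hx1 ((List.prefix_append l [c]).trans hy1)
          (by have := hy1.length_le; simp at this; omega)
      · exact sep0 x y hx1 (hy1 ▸ List.prefix_append l [w']) (by rw [hy1]; simp)
      · rw [hx1, hy1]; exact myLex_middle hrx l [] []
      · obtain ⟨u, hu⟩ := hy1
        rw [hx1, ← hu, List.append_assoc]
        exact myLex_middle hrx l [] ([] ++ u)
      · rw [hx1, hy1]; exact myLex_middle (htr _ _ _ hrx hry) l [] []
      · rw [hx1]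
        apply myLex_of_prefix_ne hy1
        intro hEq
        rw [← hEq] at hy2
        simp at hy2
      · rw [hx1, hy1]; exact myLex_middle hry l [] []
      · obtain ⟨u, hu⟩ := hx1
        rw [hy1, ← hu, List.append_assoc]
        exact myLex_middle hry l ([] ++ u) []
    have hnoadj : ∀ s i, i + 1 < k + 2 → P s (v i) → P s (v (i + 1)) → False := by
      intro s i hi h1 h2
      have hlt := hmono i (i + 1) (Nat.lt_succ_self i) hi
      rcases h1 with ⟨hs, h1⟩ | ⟨hs, w, h1, hr1⟩ | ⟨hs, h1⟩ |
          ⟨hs, h1, h1'⟩ | ⟨hs, w, h1, hr1⟩ <;>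
        rcases h2 with ⟨hs', h2⟩ | ⟨hs', w', h2, hr2⟩ | ⟨hs', h2⟩ |
          ⟨hs', h2, h2'⟩ | ⟨hs', w', h2, hr2⟩ <;>
        try omega
      · rcases (hadj i hi).2 with h | h
        · exact notsib_short _ h1 h
        · exact notsib_short _ h2 h
      · rcases (hadj i hi).1 with h | h
        · exact notchain _ _ h1 hr1 h
        · exact notchain _ _ h2 hr2 h
      · rw [h1, h2] at hlt
        exact myLex_asymm hasym _ _ hlt hlt
      · rcases (hadj i hi).2 with h | h
        · exact notsib_long _ h1' h
        · exact notsib_long _ h2' h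
      · have key : ∀ (z : List β) (w : β), z = l ++ [w] → r c w → ¬ z <+: L := by
          rintro z w rfl hr hzL
          rw [hLc] at hzL
          have hh := (List.cons_prefix_cons.1 ((List.prefix_append_right_inj l).1 hzL)).1
          exact hirr c (hh ▸ hr)
        rcases (hadj i hi).1 with h | h
        · exact key _ _ h1 hr1 h
        · exact key _ _ h2 hr2 h
    obtain ⟨b, hbP, hbs⟩ := frame (List.Lex r) (myLex_asymm hasym) v P hmono hcover hsep hnoadj
    have hge := strictmono_ge hbs
    have hk3 : k = 3 := by
      by_contra h
      have h1 := hge (k + 1) (by omega)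
      have h2 := (hbP (k + 1) (by omega)).1
      omega
    have hb4 : b 4 = 4 := by
      have := hge 4 (by omega)
      have := (hbP 4 (by omega)).1
      omega
    have hb3 : b 3 = 3 := by
      have := hge 3 (by omega)
      have := hbs 3 4 (by omega) (by omega)
      omega
    have hb1 : b 1 = 1 := by
      have := hge 1 (by omega)
      have := hge 2 (by omega)
      have := hbs 1 2 (by omega) (by omega)
      have := hbs 2 3 (by omega) (by omega)
      omega
    have hP1 := (hbP 1 (by omega)).2
    have hP3 := (hbP 3 (by omega)).2
    rw [hb1] at hP1
    rw [hb3] at hP3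
    have hP1' : ∃ w, v 1 = l ++ [w] ∧ r w c := by
      rcases hP1 with ⟨hs, _⟩ | ⟨_, hh⟩ | ⟨hs, _⟩ | ⟨hs, _⟩ | ⟨hs, _⟩ <;>
        first | omega | exact hh
    have hP3' : l ++ [c] <+: v 3 ∧ l.length + 1 < (v 3).length := by
      rcases hP3 with ⟨hs, _⟩ | ⟨hs, _⟩ | ⟨hs, _⟩ | ⟨_, hh1, hh2⟩ | ⟨hs, _⟩ <;>
        first | omega | exact ⟨hh1, hh2⟩
    obtain ⟨w, hw, hrw⟩ := hP1'
    rcases h13 with ⟨ha, _⟩ | ⟨_, hb'⟩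
    · exact notchain _ _ hw hrw ha
    · exact notsib_long _ hP3'.2 hb'
  · -- the chain and the sibling family diverge
    have hnLl : ¬ L <+: l := fun h => by
      have := h.length_le
      omega
    obtain ⟨p, a, b', l', L', hab, hldec, hLdec⟩ := diverge l L hlL hnLl
    have hplen : p.length < l.length := by rw [hldec]; simp
    have hsibpre : ∀ z : List β, (∃ w, z = l ++ [w]) → p ++ [a] <+: z := by
      rintro z ⟨w, rfl⟩
      exact ⟨l' ++ [w], by simp [hldec]⟩
    have F1 : ∀ z : List β, z <+: p → ¬ ∃ w, z = l ++ [w] := by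
      rintro z hz ⟨w, rfl⟩
      have := hz.length_le
      simp at this
      omega
    have F2 : ∀ z : List β, p ++ [a] <+: z → ¬ z <+: L := by
      intro z hz hzL
      exact hab (snoc_prefix_cons hz (hLdec ▸ hzL))
    have F3 : ∀ z : List β, p ++ [b'] <+: z → ¬ ∃ w, z = l ++ [w] := by
      intro z hz hw
      exact hab (snoc_prefix_snoc (hsibpre z hw) hz)
    have C1 : ∀ z : List β, z <+: L → z <+: p ∨ p ++ [b'] <+: z := by
      intro z hz
      by_cases hlen : z.length ≤ p.length
      · exact Or.inl (List.prefix_of_prefix_length_le hz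
          ⟨b' :: L', hLdec.symm⟩ hlen)
      · exact Or.inr (List.prefix_of_prefix_length_le ⟨L', by simp [hLdec]⟩ hz
          (by simp; omega))
    have sepP : ∀ (z y : List β) (d : β), z <+: p → p ++ [d] <+: y → List.Lex r z y := by
      intro z y d hz hy
      apply myLex_of_prefix_ne ((hz.trans (List.prefix_append p [d])).trans hy)
      intro hEq
      have h1 := hz.length_le
      have h2 := hy.length_le
      rw [hEq] at h1
      simp at h2
      omega
    have sepD : ∀ (z y : List β) (d d' : β), r d d' → p ++ [d] <+: z → p ++ [d'] <+: y →
        List.Lex r z y := by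
      rintro z y d d' hdd ⟨u, hu⟩ ⟨u', hu'⟩
      rw [← hu, ← hu', List.append_assoc, List.append_assoc]
      exact myLex_middle hdd p ([] ++ u) ([] ++ u')
    rcases htri a b' with hr | hr | hr
    · set P : ℕ → List β → Prop := fun t x =>
        (t = 0 ∧ x <+: p) ∨ (t = 1 ∧ p ++ [a] <+: x) ∨ (t = 2 ∧ p ++ [b'] <+: x) with hP
      have hcover : ∀ i, i < k + 2 → ∃ s, s < 3 ∧ P s (v i) := by
        intro i hi
        rcases hcov i hi with h | h
        · rcases C1 _ h with h' | h'
          · exact ⟨0, by omega, Or.inl ⟨rfl, h'⟩⟩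
          · exact ⟨2, by omega, Or.inr (Or.inr ⟨rfl, h'⟩)⟩
        · exact ⟨1, by omega, Or.inr (Or.inl ⟨rfl, hsibpre _ h⟩)⟩
      have hsep : ∀ s s' x y, s < s' → P s x → P s' y → List.Lex r x y := by
        intro s s' x y hss hPx hPy
        rcases hPx with ⟨hs, hx1⟩ | ⟨hs, hx1⟩ | ⟨hs, hx1⟩ <;>
          rcases hPy with ⟨hs', hy1⟩ | ⟨hs', hy1⟩ | ⟨hs', hy1⟩ <;> try omega
        · exact sepP x y a hx1 hy1
        · exact sepP x y b' hx1 hy1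
        · exact sepD x y a b' hr hx1 hy1
      have hnoadj : ∀ s i, i + 1 < k + 2 → P s (v i) → P s (v (i + 1)) → False := by
        intro s i hi h1 h2
        rcases h1 with ⟨hs, h1⟩ | ⟨hs, h1⟩ | ⟨hs, h1⟩ <;>
          rcases h2 with ⟨hs', h2⟩ | ⟨hs', h2⟩ | ⟨hs', h2⟩ <;> try omega
        · rcases (hadj i hi).2 with h | h
          · exact F1 _ h1 h
          · exact F1 _ h2 h
        · rcases (hadj i hi).1 with h | h
          · exact F2 _ h1 h
          · exact F2 _ h2 h
        · rcases (hadj i hi).2 with h | h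
          · exact F3 _ h1 h
          · exact F3 _ h2 h
      have := frame_le (List.Lex r) (myLex_asymm hasym) v P hmono hcover hsep hnoadj
      omega
    · exact hab hr
    · set P : ℕ → List β → Prop := fun t x =>
        (t = 0 ∧ x <+: p) ∨ (t = 1 ∧ p ++ [b'] <+: x) ∨ (t = 2 ∧ p ++ [a] <+: x) with hP
      have hcover : ∀ i, i < k + 2 → ∃ s, s < 3 ∧ P s (v i) := by
        intro i hi
        rcases hcov i hi with h | h
        · rcases C1 _ h with h' | h'
          · exact ⟨0, by omega, Or.inl ⟨rfl, h'⟩⟩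
          · exact ⟨1, by omega, Or.inr (Or.inl ⟨rfl, h'⟩)⟩
        · exact ⟨2, by omega, Or.inr (Or.inr ⟨rfl, hsibpre _ h⟩)⟩
      have hsep : ∀ s s' x y, s < s' → P s x → P s' y → List.Lex r x y := by
        intro s s' x y hss hPx hPy
        rcases hPx with ⟨hs, hx1⟩ | ⟨hs, hx1⟩ | ⟨hs, hx1⟩ <;>
          rcases hPy with ⟨hs', hy1⟩ | ⟨hs', hy1⟩ | ⟨hs', hy1⟩ <;> try omega
        · exact sepP x y b' hx1 hy1
        · exact sepP x y a hx1 hy1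
        · exact sepD x y b' a hr hx1 hy1
      have hnoadj : ∀ s i, i + 1 < k + 2 → P s (v i) → P s (v (i + 1)) → False := by
        intro s i hi h1 h2
        rcases h1 with ⟨hs, h1⟩ | ⟨hs, h1⟩ | ⟨hs, h1⟩ <;>
          rcases h2 with ⟨hs', h2⟩ | ⟨hs', h2⟩ | ⟨hs', h2⟩ <;> try omega
        · rcases (hadj i hi).2 with h | h
          · exact F1 _ h1 h
          · exact F1 _ h2 h
        · rcases (hadj i hi).2 with h | h
          · exact F3 _ h1 h
          · exact F3 _ h2 h
        · rcases (hadj i hi).1 with h | h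
          · exact F2 _ h1 h
          · exact F2 _ h2 h
      have := frame_le (List.Lex r) (myLex_asymm hasym) v P hmono hcover hsep hnoadj
      omega

theorem caseSSnest (hk : 3 ≤ k)
    (hasym : ∀ a b : β, r a b → r b a → False)
    (htri : ∀ a b : β, r a b ∨ a = b ∨ r b a)
    (htr : ∀ a b c : β, r a b → r b c → r a c)
    {l₁ l₂ : List β} {c : β} {t₂ : List β} (hc : l₂ = l₁ ++ c :: t₂)
    (v : ℕ → List β)
    (hmono : ∀ i j, i < j → j < k + 2 → List.Lex r (v i) (v j))
    (hcov : ∀ i, i < k + 2 → (∃ w, v i = l₁ ++ [w]) ∨ (∃ w, v i = l₂ ++ [w]))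
    (hadj : ∀ i, i + 1 < k + 2 →
      ((∃ w, v i = l₁ ++ [w]) ∨ (∃ w, v (i + 1) = l₁ ++ [w])) ∧
        ((∃ w, v i = l₂ ++ [w]) ∨ (∃ w, v (i + 1) = l₂ ++ [w]))) : False := by
  have hirr : ∀ d : β, ¬ r d d := fun d h => hasym d d h h
  set P : ℕ → List β → Prop := fun t x =>
    (t = 0 ∧ ∃ w, x = l₁ ++ [w] ∧ r w c) ∨
    (t = 1 ∧ x = l₁ ++ [c]) ∨
    (t = 2 ∧ l₁ ++ [c] <+: x ∧ l₁.length + 1 < x.length) ∨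
    (t = 3 ∧ ∃ w, x = l₁ ++ [w] ∧ r c w) with hP
  have not2short : ∀ z : List β, z.length = l₁.length + 1 → ¬ ∃ w, z = l₂ ++ [w] := by
    rintro z hzl ⟨w, rfl⟩
    rw [hc] at hzl
    simp at hzl
  have not1long : ∀ z : List β, l₁.length + 1 < z.length → ¬ ∃ w, z = l₁ ++ [w] := by
    rintro z hzl ⟨w, rfl⟩
    simp at hzl
  have hcover : ∀ i, i < k + 2 → ∃ s, s < 4 ∧ P s (v i) := by
    intro i hi
    rcases hcov i hi with ⟨w, hw⟩ | ⟨w, hw⟩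
    · rcases htri w c with hr | hr | hr
      · exact ⟨0, by omega, Or.inl ⟨rfl, w, hw, hr⟩⟩
      · exact ⟨1, by omega, Or.inr (Or.inl ⟨rfl, hr ▸ hw⟩)⟩
      · exact ⟨3, by omega, Or.inr (Or.inr (Or.inr ⟨rfl, w, hw, hr⟩))⟩
    · refine ⟨2, by omega, Or.inr (Or.inr (Or.inl ⟨rfl, ?_, ?_⟩))⟩
      · rw [hw, hc]
        exact ⟨t₂ ++ [w], by simp⟩
      · rw [hw, hc]
        simp
  have hsep : ∀ s s' x y, s < s' → P s x → P s' y → List.Lex r x y := by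
    intro s s' x y hss hPx hPy
    rcases hPx with ⟨hs, w, hx1, hrx⟩ | ⟨hs, hx1⟩ | ⟨hs, hx1, hx2⟩ | ⟨hs, w, hx1, hrx⟩ <;>
      rcases hPy with ⟨hs', w', hy1, hry⟩ | ⟨hs', hy1⟩ | ⟨hs', hy1, hy2⟩ |
        ⟨hs', w', hy1, hry⟩ <;> try omega
    · rw [hx1, hy1]; exact myLex_middle hrx l₁ [] []
    · obtain ⟨u, hu⟩ := hy1
      rw [hx1, ← hu, List.append_assoc]
      exact myLex_middle hrx l₁ [] ([] ++ u)
    · rw [hx1, hy1]; exact myLex_middle (htr _ _ _ hrx hry) l₁ [] []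
    · rw [hx1]
      apply myLex_of_prefix_ne hy1
      intro hEq
      rw [← hEq] at hy2
      simp at hy2
    · rw [hx1, hy1]; exact myLex_middle hry l₁ [] []
    · obtain ⟨u, hu⟩ := hx1
      rw [hy1, ← hu, List.append_assoc]
      exact myLex_middle hry l₁ ([] ++ u) []
  have hnoadj : ∀ s i, i + 1 < k + 2 → P s (v i) → P s (v (i + 1)) → False := by
    intro s i hi h1 h2
    have hlt := hmono i (i + 1) (Nat.lt_succ_self i) hi
    rcases h1 with ⟨hs, w, h1, hr1⟩ | ⟨hs, h1⟩ | ⟨hs, h1, h1'⟩ | ⟨hs, w, h1, hr1⟩ <;>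
      rcases h2 with ⟨hs', w', h2, hr2⟩ | ⟨hs', h2⟩ | ⟨hs', h2, h2'⟩ |
        ⟨hs', w', h2, hr2⟩ <;> try omega
    · rcases (hadj i hi).2 with h | h
      · exact not2short _ (by rw [h1]; simp) h
      · exact not2short _ (by rw [h2]; simp) h
    · rw [h1, h2] at hlt
      exact myLex_asymm hasym _ _ hlt hlt
    · rcases (hadj i hi).1 with h | h
      · exact not1long _ h1' h
      · exact not1long _ h2' h
    · rcases (hadj i hi).2 with h | h
      · exact not2short _ (by rw [h1]; simp) h
      · exact not2short _ (by rw [h2]; simp) h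
  have := frame_le (List.Lex r) (myLex_asymm hasym) v P hmono hcover hsep hnoadj
  omega

theorem caseSSdiv (hk : 3 ≤ k)
    (hasym : ∀ a b : β, r a b → r b a → False)
    (htri : ∀ a b : β, r a b ∨ a = b ∨ r b a)
    {l₁ l₂ : List β} (h12 : ¬ l₁ <+: l₂) (h21 : ¬ l₂ <+: l₁)
    (v : ℕ → List β)
    (hmono : ∀ i j, i < j → j < k + 2 → List.Lex r (v i) (v j))
    (hcov : ∀ i, i < k + 2 → (∃ w, v i = l₁ ++ [w]) ∨ (∃ w, v i = l₂ ++ [w]))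
    (hadj : ∀ i, i + 1 < k + 2 →
      ((∃ w, v i = l₁ ++ [w]) ∨ (∃ w, v (i + 1) = l₁ ++ [w])) ∧
        ((∃ w, v i = l₂ ++ [w]) ∨ (∃ w, v (i + 1) = l₂ ++ [w]))) : False := by
  obtain ⟨p, a, b', l₁', l₂', hab, h1dec, h2dec⟩ := diverge l₁ l₂ h12 h21
  have pre1 : ∀ z : List β, (∃ w, z = l₁ ++ [w]) → p ++ [a] <+: z := by
    rintro z ⟨w, rfl⟩
    exact ⟨l₁' ++ [w], by simp [h1dec]⟩
  have pre2 : ∀ z : List β, (∃ w, z = l₂ ++ [w]) → p ++ [b'] <+: z := by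
    rintro z ⟨w, rfl⟩
    exact ⟨l₂' ++ [w], by simp [h2dec]⟩
  have not2 : ∀ z : List β, p ++ [a] <+: z → ¬ ∃ w, z = l₂ ++ [w] := by
    intro z hz hw
    exact hab (snoc_prefix_snoc hz (pre2 z hw))
  have not1 : ∀ z : List β, p ++ [b'] <+: z → ¬ ∃ w, z = l₁ ++ [w] := by
    intro z hz hw
    exact hab (snoc_prefix_snoc (pre1 z hw) hz)
  have sepD : ∀ (z y : List β) (d d' : β), r d d' → p ++ [d] <+: z → p ++ [d'] <+: y →
      List.Lex r z y := by
    rintro z y d d' hdd ⟨u, hu⟩ ⟨u', hu'⟩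
    rw [← hu, ← hu', List.append_assoc, List.append_assoc]
    exact myLex_middle hdd p ([] ++ u) ([] ++ u')
  rcases htri a b' with hr | hr | hr
  · set P : ℕ → List β → Prop := fun t x =>
      (t = 0 ∧ p ++ [a] <+: x) ∨ (t = 1 ∧ p ++ [b'] <+: x) with hP
    have hcover : ∀ i, i < k + 2 → ∃ s, s < 2 ∧ P s (v i) := by
      intro i hi
      rcases hcov i hi with h | h
      · exact ⟨0, by omega, Or.inl ⟨rfl, pre1 _ h⟩⟩
      · exact ⟨1, by omega, Or.inr ⟨rfl, pre2 _ h⟩⟩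
    have hsep : ∀ s s' x y, s < s' → P s x → P s' y → List.Lex r x y := by
      intro s s' x y hss hPx hPy
      rcases hPx with ⟨hs, hx1⟩ | ⟨hs, hx1⟩ <;>
        rcases hPy with ⟨hs', hy1⟩ | ⟨hs', hy1⟩ <;> try omega
      exact sepD x y a b' hr hx1 hy1
    have hnoadj : ∀ s i, i + 1 < k + 2 → P s (v i) → P s (v (i + 1)) → False := by
      intro s i hi h1 h2
      rcases h1 with ⟨hs, h1⟩ | ⟨hs, h1⟩ <;>
        rcases h2 with ⟨hs', h2⟩ | ⟨hs', h2⟩ <;> try omega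
      · rcases (hadj i hi).2 with h | h
        · exact not2 _ h1 h
        · exact not2 _ h2 h
      · rcases (hadj i hi).1 with h | h
        · exact not1 _ h1 h
        · exact not1 _ h2 h
    have := frame_le (List.Lex r) (myLex_asymm hasym) v P hmono hcover hsep hnoadj
    omega
  · exact hab hr
  · set P : ℕ → List β → Prop := fun t x =>
      (t = 0 ∧ p ++ [b'] <+: x) ∨ (t = 1 ∧ p ++ [a] <+: x) with hP
    have hcover : ∀ i, i < k + 2 → ∃ s, s < 2 ∧ P s (v i) := by
      intro i hi
      rcases hcov i hi with h | h
      · exact ⟨1, by omega, Or.inr ⟨rfl, pre1 _ h⟩⟩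
      · exact ⟨0, by omega, Or.inl ⟨rfl, pre2 _ h⟩⟩
    have hsep : ∀ s s' x y, s < s' → P s x → P s' y → List.Lex r x y := by
      intro s s' x y hss hPx hPy
      rcases hPx with ⟨hs, hx1⟩ | ⟨hs, hx1⟩ <;>
        rcases hPy with ⟨hs', hy1⟩ | ⟨hs', hy1⟩ <;> try omega
      exact sepD x y b' a hr hx1 hy1
    have hnoadj : ∀ s i, i + 1 < k + 2 → P s (v i) → P s (v (i + 1)) → False := by
      intro s i hi h1 h2
      rcases h1 with ⟨hs, h1⟩ | ⟨hs, h1⟩ <;>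
        rcases h2 with ⟨hs', h2⟩ | ⟨hs', h2⟩ <;> try omega
      · rcases (hadj i hi).1 with h | h
        · exact not1 _ h1 h
        · exact not1 _ h2 h
      · rcases (hadj i hi).2 with h | h
        · exact not2 _ h1 h
        · exact not2 _ h2 h
    have := frame_le (List.Lex r) (myLex_asymm hasym) v P hmono hcover hsep hnoadj
    omega

end Cases

theorem hedge_succ {k n : ℕ} {e : Finset (HVert k (n + 1))} (h : HEdge k (n + 1) e) :
    (∃ leaf : HVert k (n + 1), leaf.1.length = k - 1 ∧
      (∀ x : HVert k (n + 1), x ∈ e ↔ x.1 <+: leaf.1)) ∨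
    (∃ l : List (HVert k n), l.length + 1 < k ∧ ∃ e' : Finset (HVert k n),
      HEdge k n e' ∧ (∀ x : HVert k (n + 1), x ∈ e ↔ ∃ w ∈ e', x.1 = l ++ [w])) := by
  rcases h with ⟨leaf, hlen, hedef⟩ | ⟨l, hlk, e', he', hedef⟩
  · left
    refine ⟨leaf, hlen, fun x => ?_⟩
    subst hedef
    simp only [Finset.mem_image, Finset.mem_range]
    constructor
    · rintro ⟨i, hi, rfl⟩
      exact List.take_prefix i leaf.1
    · intro hp
      exact ⟨x.1.length, by have := hp.length_le; omega,
        Subtype.ext (List.prefix_iff_eq_take.1 hp).symm⟩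
  · right
    refine ⟨l, hlk, e', he', fun x => ?_⟩
    subst hedef
    simp only [Finset.mem_image]
    constructor
    · rintro ⟨w, hw, rfl⟩
      exact ⟨w, hw, rfl⟩
    · rintro ⟨w, hw, hx⟩
      exact ⟨w, hw, Subtype.ext hx.symm⟩

theorem mainthm (k : ℕ) (hk : 3 ≤ k) : ∀ (n : ℕ) (e₁ e₂ : Finset (HVert k n)),
    HEdge k n e₁ → HEdge k n e₂ → e₁ ≠ e₂ →
    ∀ v : Fin (k + 2) → HVert k n,
      (∀ i j : Fin (k + 2), i < j → HVertLT k n (v i) (v j)) →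
      (∀ i : Fin (k + 2), (Even (i : ℕ) → v i ∈ e₁) ∧ (¬ Even (i : ℕ) → v i ∈ e₂)) →
      False := by
  intro n
  induction n with
  | zero =>
    intro e₁ e₂ h1 h2 hne _ _ _
    exact hne ((h1 : e₁ = Finset.univ).trans (h2 : e₂ = Finset.univ).symm)
  | succ n ih =>
    intro e₁ e₂ he₁ he₂ hne v hmonoF halt
    have hasym := hlt_asymm k n
    have htri := hlt_tri k n
    have htr := hlt_trans k n
    set r := HVertLT k n with hrdef
    set w : ℕ → HVert k (n + 1) := fun i => v ⟨i % (k + 2), Nat.mod_lt _ (by omega)⟩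
      with hwdef
    have hw : ∀ (i : ℕ) (hi : i < k + 2), w i = v ⟨i, hi⟩ := by
      intro i hi
      simp [hwdef, Nat.mod_eq_of_lt hi]
    have hmono : ∀ i j, i < j → j < k + 2 → List.Lex r (w i).1 (w j).1 := by
      intro i j hij hj
      have h := hmonoF ⟨i, lt_trans hij hj⟩ ⟨j, hj⟩ (Fin.mk_lt_mk.2 hij)
      rw [hw i (lt_trans hij hj), hw j hj]
      exact h
    have hmem : ∀ i, i < k + 2 → w i ∈ e₁ ∨ w i ∈ e₂ := by
      intro i hi
      rw [hw i hi]
      rcases Nat.even_or_odd i with he | ho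
      · exact Or.inl ((halt ⟨i, hi⟩).1 he)
      · exact Or.inr ((halt ⟨i, hi⟩).2 (Nat.not_even_iff_odd.2 ho))
    have hadjm : ∀ i, i + 1 < k + 2 →
        (w i ∈ e₁ ∨ w (i + 1) ∈ e₁) ∧ (w i ∈ e₂ ∨ w (i + 1) ∈ e₂) := by
      intro i hi
      rw [hw i (by omega), hw (i + 1) hi]
      rcases Nat.even_or_odd i with he | ho
      · refine ⟨Or.inl ((halt ⟨i, by omega⟩).1 he), Or.inr ((halt ⟨i + 1, hi⟩).2 ?_)⟩
        show ¬ Even (i + 1)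
        rw [Nat.even_add_one]
        simpa using he
      · refine ⟨Or.inr ((halt ⟨i + 1, hi⟩).1 ?_), Or.inl ((halt ⟨i, by omega⟩).2
          (Nat.not_even_iff_odd.2 ho))⟩
        show Even (i + 1)
        rw [Nat.even_add_one]
        exact Nat.not_even_iff_odd.2 ho
    have h1mem : w 1 ∈ e₂ := by
      rw [hw 1 (by omega)]
      exact (halt ⟨1, by omega⟩).2 (by decide : ¬ Even 1)
    have h3mem : w 3 ∈ e₂ := by
      rw [hw 3 (by omega)]
      exact (halt ⟨3, by omega⟩).2 (by decide : ¬ Even 3)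
    rcases hedge_succ he₁ with ⟨L₁v, hL₁, m₁⟩ | ⟨l₁, hl₁, e₁', he₁', m₁⟩ <;>
      rcases hedge_succ he₂ with ⟨L₂v, hL₂, m₂⟩ | ⟨l₂, hl₂, e₂', he₂', m₂⟩
    · -- chain / chain
      apply caseCC hk hasym htri hL₁ hL₂ ?_ (fun i => (w i).1) hmono ?_ ?_
      · intro h
        apply hne
        ext x
        rw [m₁, m₂, h]
      · intro i hi
        rcases hmem i hi with h | h
        · exact Or.inl ((m₁ _).1 h)
        · exact Or.inr ((m₂ _).1 h)
      · intro i hi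
        constructor
        · rcases (hadjm i hi).1 with h | h
          · exact Or.inl ((m₁ _).1 h)
          · exact Or.inr ((m₁ _).1 h)
        · rcases (hadjm i hi).2 with h | h
          · exact Or.inl ((m₂ _).1 h)
          · exact Or.inr ((m₂ _).1 h)
    · -- chain / sibling
      apply caseMixed hk hasym htri htr hL₁ hl₂ (fun i => (w i).1) hmono ?_ ?_ ?_
      · intro i hi
        rcases hmem i hi with h | h
        · exact Or.inl ((m₁ _).1 h)
        · obtain ⟨u, _, hu⟩ := (m₂ _).1 h
          exact Or.inr ⟨u, hu⟩
      · intro i hi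
        constructor
        · rcases (hadjm i hi).1 with h | h
          · exact Or.inl ((m₁ _).1 h)
          · exact Or.inr ((m₁ _).1 h)
        · rcases (hadjm i hi).2 with h | h
          · obtain ⟨u, _, hu⟩ := (m₂ _).1 h
            exact Or.inl ⟨u, hu⟩
          · obtain ⟨u, _, hu⟩ := (m₂ _).1 h
            exact Or.inr ⟨u, hu⟩
      · right
        obtain ⟨u1, _, hu1⟩ := (m₂ _).1 h1mem
        obtain ⟨u3, _, hu3⟩ := (m₂ _).1 h3mem
        exact ⟨⟨u1, hu1⟩, ⟨u3, hu3⟩⟩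
    · -- sibling / chain
      apply caseMixed hk hasym htri htr hL₂ hl₁ (fun i => (w i).1) hmono ?_ ?_ ?_
      · intro i hi
        rcases hmem i hi with h | h
        · obtain ⟨u, _, hu⟩ := (m₁ _).1 h
          exact Or.inr ⟨u, hu⟩
        · exact Or.inl ((m₂ _).1 h)
      · intro i hi
        constructor
        · rcases (hadjm i hi).2 with h | h
          · exact Or.inl ((m₂ _).1 h)
          · exact Or.inr ((m₂ _).1 h)
        · rcases (hadjm i hi).1 with h | h
          · obtain ⟨u, _, hu⟩ := (m₁ _).1 h
            exact Or.inl ⟨u, hu⟩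
          · obtain ⟨u, _, hu⟩ := (m₁ _).1 h
            exact Or.inr ⟨u, hu⟩
      · left
        exact ⟨(m₂ _).1 h1mem, (m₂ _).1 h3mem⟩
    · -- sibling / sibling
      by_cases hll : l₁ = l₂
      · subst hll
        have hne' : e₁' ≠ e₂' := by
          intro h
          apply hne
          ext x
          rw [m₁, m₂, h]
        have hqq : ∀ i : Fin (k + 2), ∃ u : HVert k n, (v i).1 = l₁ ++ [u] := by
          intro i
          have hi : (i : ℕ) < k + 2 := i.2
          have : v i = w (i : ℕ) := by rw [hw (i : ℕ) hi]
          rcases hmem (i : ℕ) hi with h | h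
          · obtain ⟨u, _, hu⟩ := (m₁ _).1 h
            exact ⟨u, by rw [this]; exact hu⟩
          · obtain ⟨u, _, hu⟩ := (m₂ _).1 h
            exact ⟨u, by rw [this]; exact hu⟩
        choose u hu using hqq
        have hirr : ∀ c : HVert k n, ¬ r c c := fun c h => hasym c c h h
        apply ih e₁' e₂' he₁' he₂' hne' u ?_ ?_
        · intro i j hij
          have h := hmonoF i j hij
          have h' : List.Lex r (v i).1 (v j).1 := h
          rw [hu i, hu j] at h'
          exact myLex_snoc_inv hirr h'
        · intro i
          constructor
          · intro he
            obtain ⟨z, hz, hshape⟩ := (m₁ _).1 ((halt i).1 he)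
            have : z = u i := by
              have h2 := List.append_cancel_left (hshape.symm.trans (hu i))
              simpa using h2
            exact this ▸ hz
          · intro he
            obtain ⟨z, hz, hshape⟩ := (m₂ _).1 ((halt i).2 he)
            have : z = u i := by
              have h2 := List.append_cancel_left (hshape.symm.trans (hu i))
              simpa using h2
            exact this ▸ hz
      · have hcovSS : ∀ i, i < k + 2 →
            (∃ z, (w i).1 = l₁ ++ [z]) ∨ (∃ z, (w i).1 = l₂ ++ [z]) := by
          intro i hi
          rcases hmem i hi with h | h
          · obtain ⟨z, _, hz⟩ := (m₁ _).1 h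
            exact Or.inl ⟨z, hz⟩
          · obtain ⟨z, _, hz⟩ := (m₂ _).1 h
            exact Or.inr ⟨z, hz⟩
        have hadjSS : ∀ i, i + 1 < k + 2 →
            ((∃ z, (w i).1 = l₁ ++ [z]) ∨ (∃ z, (w (i + 1)).1 = l₁ ++ [z])) ∧
              ((∃ z, (w i).1 = l₂ ++ [z]) ∨ (∃ z, (w (i + 1)).1 = l₂ ++ [z])) := by
          intro i hi
          constructor
          · rcases (hadjm i hi).1 with h | h
            · obtain ⟨z, _, hz⟩ := (m₁ _).1 h
              exact Or.inl ⟨z, hz⟩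
            · obtain ⟨z, _, hz⟩ := (m₁ _).1 h
              exact Or.inr ⟨z, hz⟩
          · rcases (hadjm i hi).2 with h | h
            · obtain ⟨z, _, hz⟩ := (m₂ _).1 h
              exact Or.inl ⟨z, hz⟩
            · obtain ⟨z, _, hz⟩ := (m₂ _).1 h
              exact Or.inr ⟨z, hz⟩
        by_cases h12 : l₁ <+: l₂
        · obtain ⟨t, ht⟩ := h12
          cases t with
          | nil => exact hll (by simpa using ht)
          | cons c t₂ =>
            exact caseSSnest hk hasym htri htr (ht.symm : l₂ = l₁ ++ c :: t₂)
              (fun i => (w i).1) hmono hcovSS hadjSS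
        · by_cases h21 : l₂ <+: l₁
          · obtain ⟨t, ht⟩ := h21
            cases t with
            | nil => exact hll (by simpa using ht.symm)
            | cons c t₂ =>
              exact caseSSnest hk hasym htri htr (ht.symm : l₁ = l₂ ++ c :: t₂)
                (fun i => (w i).1) hmono
                (fun i hi => (hcovSS i hi).symm)
                (fun i hi => ⟨(hadjSS i hi).2, (hadjSS i hi).1⟩)
          · exact caseSSdiv hk hasym htri h12 h21 (fun i => (w i).1) hmono hcovSS hadjSS

/-- For every `k ≥ 3` and `m ≥ 2`, the hypergraph `H^{k,m}` is not
`(k+2)`-interlacing with respect to the DFS order `≺^{k,m}`. -/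
theorem stmt_7 (k m : ℕ) (hk : 3 ≤ k) (hm : 2 ≤ m) :
    ¬ ∃ e₁ e₂ : Finset (HVert k (m - 1)), HEdge k (m - 1) e₁ ∧ HEdge k (m - 1) e₂ ∧
        e₁ ≠ e₂ ∧ ∃ v : Fin (k + 2) → HVert k (m - 1),
          (∀ i j : Fin (k + 2), i < j → HVertLT k (m - 1) (v i) (v j)) ∧
          ∀ i : Fin (k + 2), (Even (i : ℕ) → v i ∈ e₁) ∧ (¬ Even (i : ℕ) → v i ∈ e₂) := by
  rintro ⟨e₁, e₂, h1, h2, hne, v, hv, ha⟩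
  exact mainthm k hk (m - 1) e₁ e₂ h1 h2 hne v hv ha
end

section
/- For every k ≥ 3 and m ≥ 2, the hypergraph H^{k,m} is not m-colorable: for every coloring of its vertices with m colors, some hyperedge is monochromatic. -/
section Aux

variable {k m : ℕ}

/-- Greedy chain construction in the tree of level `m+1`. -/
noncomputable def chainAux (pick : (l : List (HVert k m)) → l.length + 1 < k → HVert k m) :
    ℕ → List (HVert k m)
  | 0 => []
  | j + 1 =>
      let l := chainAux pick j
      if h : l.length + 1 < k then l ++ [pick l h] else l

lemma chainAux_succ_of_lt (pick : (l : List (HVert k m)) → l.length + 1 < k → HVert k m)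
    {j : ℕ} (h : (chainAux pick j).length + 1 < k) :
    chainAux pick (j + 1) = chainAux pick j ++ [pick (chainAux pick j) h] := by
  simp only [chainAux]
  rw [dif_pos h]

lemma chainAux_length (pick : (l : List (HVert k m)) → l.length + 1 < k → HVert k m)
    (hk : 1 ≤ k) : ∀ j, j ≤ k - 1 → (chainAux pick j).length = j := by
  intro j
  induction j with
  | zero => intro _; simp [chainAux]
  | succ j ih =>
    intro hj
    have hj' : j ≤ k - 1 := by omega
    have hlen : (chainAux pick j).length = j := ih hj'
    have hlt : (chainAux pick j).length + 1 < k := by omega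
    rw [chainAux_succ_of_lt pick hlt]
    simp [hlen]

lemma chainAux_prefix (pick : (l : List (HVert k m)) → l.length + 1 < k → HVert k m)
    {i j : ℕ} (hij : i ≤ j) : chainAux pick i <+: chainAux pick j := by
  induction j with
  | zero => simp_all
  | succ j ih =>
    rcases Nat.lt_or_ge i (j + 1) with h | h
    · refine (ih (by omega)).trans ?_
      by_cases hlt : (chainAux pick j).length + 1 < k
      · rw [chainAux_succ_of_lt pick hlt]; exact List.prefix_append _ _
      · simp only [chainAux]
        rw [dif_neg hlt]
    · have : i = j + 1 := by omega
      subst this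
      exact List.prefix_refl _

lemma chainAux_take (pick : (l : List (HVert k m)) → l.length + 1 < k → HVert k m)
    (hk : 1 ≤ k) {i j : ℕ} (hij : i ≤ j) (hj : j ≤ k - 1) :
    (chainAux pick j).take i = chainAux pick i := by
  have hpre := chainAux_prefix pick hij
  have hlen : (chainAux pick i).length = i := chainAux_length pick hk i (le_trans hij hj)
  have := List.prefix_iff_eq_take.mp hpre
  rw [hlen] at this
  exact this.symm

lemma c_congr (c : HVert k (m + 1) → Fin (m + 2)) {l₁ l₂ : List (HVert k m)} (h : l₁ = l₂)
    (p₁ : l₁.length < k) (p₂ : l₂.length < k) :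
    c ⟨l₁, p₁⟩ = c ⟨l₂, p₂⟩ := by subst h; rfl

lemma chainAux_color (hk : 1 ≤ k) (c : HVert k (m + 1) → Fin (m + 2)) (c₀ : Fin (m + 2))
    (pick : (l : List (HVert k m)) → l.length + 1 < k → HVert k m)
    (hpick : ∀ l h, c ⟨l ++ [pick l h], by simpa using h⟩ = c₀)
    (h0 : ∀ p, c ⟨[], p⟩ = c₀) :
    ∀ j, j ≤ k - 1 → ∀ p, c ⟨chainAux pick j, p⟩ = c₀ := by
  intro j
  induction j with
  | zero => intro _ p; exact h0 p
  | succ j ih =>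
    intro hj p
    have hlen : (chainAux pick j).length = j := chainAux_length pick hk j (by omega)
    have hlt : (chainAux pick j).length + 1 < k := by omega
    rw [c_congr c (chainAux_succ_of_lt pick hlt) p (by simpa using hlt)]
    exact hpick _ hlt

lemma key (k : ℕ) (hk : 3 ≤ k) :
    ∀ (m : ℕ) (c : HVert k m → Fin (m + 1)),
      ∃ e : Finset (HVert k m), HEdge k m e ∧ ∃ col : Fin (m + 1), ∀ v ∈ e, c v = col := by
  intro m
  induction m with
  | zero =>
    intro c
    exact ⟨Finset.univ, rfl, 0, fun v _ => Fin.eq_zero _⟩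
  | succ m ih =>
    intro c
    by_cases hcase : ∃ l : List (HVert k m), ∃ h : l.length + 1 < k,
        ∃ i : Fin (m + 2), ∀ w : HVert k m, c ⟨l ++ [w], by simpa using h⟩ ≠ i
    · -- some non-leaf's children miss color i: recurse
      obtain ⟨l, h, i, hi⟩ := hcase
      set c' : HVert k m → Fin (m + 1) := fun w =>
        (finSuccEquiv' i (c ⟨l ++ [w], by simpa using h⟩)).getD 0 with hc'
      obtain ⟨e', he', col', hcol'⟩ := ih c'
      refine ⟨e'.image (fun w => (⟨l ++ [w], by simpa using h⟩ : HVert k (m + 1))),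
        Or.inr ⟨l, h, e', he', rfl⟩, (finSuccEquiv' i).symm (some col'), ?_⟩
      intro v hv
      simp only [Finset.mem_image] at hv
      obtain ⟨w, hw, rfl⟩ := hv
      have h1 : c ⟨l ++ [w], by simpa using h⟩ ≠ i := hi w
      obtain ⟨y, hy⟩ : ∃ y, finSuccEquiv' i (c ⟨l ++ [w], by simpa using h⟩) = some y := by
        cases hEq : finSuccEquiv' i (c ⟨l ++ [w], by simpa using h⟩) with
        | none =>
          exact absurd (by rw [← (finSuccEquiv' i).symm_apply_apply
            (c ⟨l ++ [w], by simpa using h⟩), hEq, finSuccEquiv'_symm_none]) h1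
        | some y => exact ⟨y, rfl⟩
      have hyc : y = col' := by
        have := hcol' w hw
        rw [hc'] at this
        simp only [hy, Option.getD_some] at this
        exact this
      subst hyc
      rw [← hy, Equiv.symm_apply_apply]
    · -- all non-leaves' children hit every color: build a monochromatic chain
      push_neg at hcase
      have h0k : 0 < k := by omega
      have hnil : ([] : List (HVert k m)).length < k := by simpa using h0k
      set c₀ : Fin (m + 2) := c ⟨[], hnil⟩ with hc₀
      have hpick' : ∀ (l : List (HVert k m)) (h : l.length + 1 < k),
          ∃ w : HVert k m, c ⟨l ++ [w], by simpa using h⟩ = c₀ := fun l h => hcase l h c₀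
      set pick : (l : List (HVert k m)) → l.length + 1 < k → HVert k m :=
        fun l h => (hpick' l h).choose with hpickdef
      have hpick : ∀ l h, c ⟨l ++ [pick l h], by simpa using h⟩ = c₀ :=
        fun l h => (hpick' l h).choose_spec
      have hkk : 1 ≤ k := by omega
      have hL : (chainAux pick (k - 1)).length = k - 1 :=
        chainAux_length pick hkk (k - 1) le_rfl
      have pfL : (chainAux pick (k - 1)).length < k := by omega
      refine ⟨_, Or.inl ⟨(⟨chainAux pick (k - 1), pfL⟩ : HVert k (m + 1)), hL, rfl⟩, c₀, ?_⟩
      intro v hv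
      simp only [Finset.mem_image, Finset.mem_range] at hv
      obtain ⟨j, hj, rfl⟩ := hv
      have hjle : j ≤ k - 1 := by omega
      rw [c_congr c (chainAux_take pick hkk hjle le_rfl) _
        (by rw [chainAux_length pick hkk j hjle]; omega)]
      exact chainAux_color hkk c c₀ pick hpick (fun p => rfl) j hjle _

end Aux

/-- For every `k ≥ 3` and `m ≥ 2`, the hypergraph `H^{k,m}` is not
`m`-colorable: every `m`-coloring of its vertices yields a monochromatic hyperedge. -/
theorem stmt_8 (k m : ℕ) (hk : 3 ≤ k) (hm : 2 ≤ m)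
    (c : HVert k (m - 1) → Fin m) :
    ∃ e : Finset (HVert k (m - 1)), HEdge k (m - 1) e ∧
      ∃ col : Fin m, ∀ v ∈ e, c v = col := by
  obtain ⟨n, rfl⟩ : ∃ n, m = n + 1 := ⟨m - 1, by omega⟩
  exact key k hk n c
end

section
/- For every m ≥ 1 and d ≥ 1, there exists a finite linear (d+1)-uniform hypergraph that is not m-colorable. -/
open Combinatorics Function

/-- Two distinct points on a combinatorial line determine its `idxFun`. -/
lemma line_idxFun_eq_of_two_points {α ι : Type*} [DecidableEq α] (l : Combinatorics.Line α ι)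
    {a b : α} {p q : ι → α} (hpa : l a = p) (hpb : l b = q) (hab : a ≠ b) (i : ι) :
    l.idxFun i = if p i = q i then some (p i) else none := by
  subst hpa hpb
  cases h : l.idxFun i with
  | none =>
    simp [h, Combinatorics.Line.apply_none l a i h, Combinatorics.Line.apply_none l b i h, hab]
  | some c =>
    simp [h, Combinatorics.Line.apply_some h]

/-- For every `m ≥ 1` and `d ≥ 1` there exists a finite linear
`(d+1)`-uniform hypergraph which is not `m`-colorable. -/
theorem stmt_10 (m d : ℕ) (hm : 1 ≤ m) (hd : 1 ≤ d) :
    ∃ (n : ℕ) (E : Finset (Finset (Fin n))),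
      (∀ e ∈ E, e.card = d + 1) ∧
      (∀ e₁ ∈ E, ∀ e₂ ∈ E, e₁ ≠ e₂ → (e₁ ∩ e₂).card ≤ 1) ∧
      ∀ c : Fin n → Fin m, ∃ e ∈ E, ∃ col : Fin m, ∀ v ∈ e, c v = col := by
  classical
  obtain ⟨ι, ιfin, hι⟩ :=
    Combinatorics.Line.exists_mono_in_high_dimension (Fin (d + 1)) (Fin m)
  haveI := ιfin
  haveI : Fintype (Combinatorics.Line (Fin (d + 1)) ι) :=
    Fintype.ofInjective Combinatorics.Line.idxFun (fun l₁ l₂ h => by ext1 <;> simp [h])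
  set n := Fintype.card (ι → Fin (d + 1)) with hn
  set e : (ι → Fin (d + 1)) ≃ Fin n := Fintype.equivFin _ with he
  -- edge of a line
  set edge : Combinatorics.Line (Fin (d + 1)) ι → Finset (Fin n) :=
    fun l => Finset.univ.image (fun x : Fin (d + 1) => e (l x)) with hedge
  have lapply_inj : ∀ l : Combinatorics.Line (Fin (d + 1)) ι, Injective (fun x => (l x : ι → Fin (d+1))) := by
    intro l x y hxy
    obtain ⟨i, hi⟩ := l.proper
    have := congrFun hxy i
    simpa [hi] using this
  refine ⟨n, Finset.univ.image edge, ?_, ?_, ?_⟩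
  · intro s hs
    simp only [Finset.mem_image, Finset.mem_univ, true_and] at hs
    obtain ⟨l, rfl⟩ := hs
    rw [hedge]
    rw [Finset.card_image_of_injective _ (fun x y hxy => lapply_inj l (e.injective hxy))]
    simp
  · intro e₁ he₁ e₂ he₂ hne
    by_contra h
    push_neg at h
    obtain ⟨p, hp, q, hq, hpq⟩ := Finset.one_lt_card.mp h
    simp only [Finset.mem_inter] at hp hq
    simp only [Finset.mem_image, Finset.mem_univ, true_and] at he₁ he₂
    obtain ⟨l₁, rfl⟩ := he₁
    obtain ⟨l₂, rfl⟩ := he₂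
    apply hne
    simp only [hedge, Finset.mem_image, Finset.mem_univ, true_and] at hp hq
    obtain ⟨⟨a₁, ha₁⟩, ⟨a₂, ha₂⟩⟩ := hp
    obtain ⟨⟨b₁, hb₁⟩, ⟨b₂, hb₂⟩⟩ := hq
    have hP : l₁ a₁ = l₂ a₂ := e.injective (ha₁.trans ha₂.symm)
    have hQ : l₁ b₁ = l₂ b₂ := e.injective (hb₁.trans hb₂.symm)
    have hPQ : (l₁ a₁ : ι → Fin (d+1)) ≠ l₁ b₁ := by
      intro hc; apply hpq
      rw [← ha₁, ← hb₁]
      exact congrArg e hc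
    have hab₁ : a₁ ≠ b₁ := fun hc => hPQ (by rw [hc])
    have hab₂ : a₂ ≠ b₂ := fun hc => hPQ (by rw [hP, hQ, hc])
    have hl : l₁ = l₂ := by
      ext1
      funext i
      rw [line_idxFun_eq_of_two_points l₁ rfl rfl hab₁ i,
        line_idxFun_eq_of_two_points l₂ hP.symm hQ.symm hab₂ i]
    rw [hl]
  · intro c
    obtain ⟨l, col, hcol⟩ := hι (fun v => c (e v))
    refine ⟨edge l, Finset.mem_image_of_mem _ (Finset.mem_univ _), col, ?_⟩
    intro v hv
    simp only [hedge, Finset.mem_image, Finset.mem_univ, true_and] at hv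
    obtain ⟨x, rfl⟩ := hv
    exact hcol x
end

section
/- Let d = 2k-1 with k ≥ 2. The (d+1)-uniform hypergraph L_d = K_1 ∪ K_2 ∪ (M_1 * M_2) is not 2-colorable: for every 2-coloring of its vertex set, some hyperedge is monochromatic. -/
/-- Vertices of the hypergraph `L_d` for `d = 2k-1`: `false` indexes the vertices
`v^i_j ∈ V_i` and `true` the vertices `w^i_j ∈ W_i`, for `i ∈ [d]`, `j ∈ [4k-2]`
(0-based). -/
@[reducible] def LVert (k : ℕ) : Type := Bool × Fin (2 * k - 1) × Fin (4 * k - 2)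

/-- The consecutive pair `{v^i_{j}, v^i_{j+1}}` (resp. with `w`'s) of the `i`-th path. -/
def pairEdge (k : ℕ) (b : Bool) (i : Fin (2 * k - 1)) (j : Fin (4 * k - 3)) :
    Finset (LVert k) :=
  {(b, i, ⟨j.1, by have := j.isLt; omega⟩), (b, i, ⟨j.1 + 1, by have := j.isLt; omega⟩)}

/-- Hyperedges of `K₁` (for `b = false`) resp. `K₂` (for `b = true`): unions, over a
`k`-subset `S` of `[2k-1]`, of one consecutive pair chosen from each path `P_i`
(`i ∈ S`); i.e. the abstract join `P_{i₁} * ⋯ * P_{i_k}`. -/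
def IsKEdge (k : ℕ) (b : Bool) (e : Finset (LVert k)) : Prop :=
  ∃ S : Finset (Fin (2 * k - 1)), S.card = k ∧
    ∃ g : Fin (2 * k - 1) → Fin (4 * k - 3),
      e = S.biUnion fun i => pairEdge k b i (g i)

/-- Hyperedges of `M₁` (b = false) resp. `M₂` (b = true): for some `i`, either the
first `k` odd-indexed vertices `{v^i_1, v^i_3, …, v^i_{2k-1}}` (0-based: even indices
`< 2k-1`) or the last `k` even-indexed vertices `{v^i_{2k}, …, v^i_{4k-2}}`
(0-based: odd indices `≥ 2k-1`). -/
def IsMEdge (k : ℕ) (b : Bool) (f : Finset (LVert k)) : Prop :=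
  ∃ i : Fin (2 * k - 1),
    f = (Finset.univ.filter fun j : Fin (4 * k - 2) =>
          Even j.1 ∧ j.1 < 2 * k - 1).image (fun j => (b, i, j)) ∨
    f = (Finset.univ.filter fun j : Fin (4 * k - 2) =>
          ¬ Even j.1 ∧ 2 * k - 1 ≤ j.1).image (fun j => (b, i, j))

/-- The hyperedges of `L_d = K₁ ∪ K₂ ∪ (M₁ * M₂)`, `d = 2k-1`. -/
def IsLEdge (k : ℕ) (e : Finset (LVert k)) : Prop :=
  IsKEdge k false e ∨ IsKEdge k true e ∨
    ∃ f₁ f₂ : Finset (LVert k), IsMEdge k false f₁ ∧ IsMEdge k true f₂ ∧ e = f₁ ∪ f₂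

lemma kEdge_mono (k : ℕ) (hk : 2 ≤ k) (c : LVert k → Bool) (b col : Bool)
    (h : k ≤ (Finset.univ.filter fun i : Fin (2*k-1) =>
        ∃ j : Fin (4*k-3), ∀ v ∈ pairEdge k b i j, c v = col).card) :
    ∃ e, IsKEdge k b e ∧ ∀ v ∈ e, c v = col := by
  classical
  obtain ⟨S, hSsub, hScard⟩ := Finset.exists_subset_card_eq h
  set P := fun i : Fin (2*k-1) => ∃ j : Fin (4*k-3), ∀ v ∈ pairEdge k b i j, c v = col with hPdef
  refine ⟨S.biUnion (fun i => pairEdge k b i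
      (if h : P i then h.choose else ⟨0, by omega⟩)),
    ⟨S, hScard, _, rfl⟩, ?_⟩
  intro v hv
  simp only [Finset.mem_biUnion] at hv
  obtain ⟨i, hiS, hvp⟩ := hv
  have hPi : P i := by have := hSsub hiS; simpa [hPdef] using this
  rw [dif_pos hPi] at hvp
  exact hPi.choose_spec v hvp

lemma alt_color (k : ℕ) (hk : 2 ≤ k) (c : LVert k → Bool) (b : Bool) (i : Fin (2*k-1))
    (h : ∀ j : Fin (4*k-3), c (b,i,⟨j.1, by have := j.isLt; omega⟩)
        ≠ c (b,i,⟨j.1+1, by have := j.isLt; omega⟩)) :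
    ∀ n (hn : n < 4*k-2), c (b,i,⟨n,hn⟩) =
      (if Even n then c (b,i,⟨0, by omega⟩) else ! c (b,i,⟨0, by omega⟩)) := by
  intro n
  induction n with
  | zero => intro hn; simp
  | succ m ih =>
    intro hn
    have hm : m < 4*k-2 := by omega
    have hj : m < 4*k-3 := by omega
    have hne := h ⟨m, hj⟩
    have hcm := ih hm
    have hstep : c (b,i,⟨m+1,hn⟩) = ! c (b,i,⟨m,hm⟩) := by
      revert hne
      cases hx : c (b,i,⟨m,hm⟩) <;> cases hy : c (b,i,⟨m+1,hn⟩) <;> simp_all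
    rw [hstep, hcm]
    rcases Nat.even_or_odd m with he | ho
    · have : ¬ Even (m+1) := by simp [Nat.even_add_one, he]
      simp [he, this]
    · have h1 : ¬ Even m := Nat.not_even_iff_odd.2 ho
      have h2 : Even (m+1) := by simpa [Nat.even_add_one] using h1
      simp [h1, h2]

lemma neighbors_ne (k : ℕ) (c : LVert k → Bool) (b : Bool) (i : Fin (2*k-1))
    (hf : ¬ ∃ j : Fin (4*k-3), ∀ v ∈ pairEdge k b i j, c v = false)
    (ht : ¬ ∃ j : Fin (4*k-3), ∀ v ∈ pairEdge k b i j, c v = true) :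
    ∀ j : Fin (4*k-3), c (b,i,⟨j.1, by have := j.isLt; omega⟩)
      ≠ c (b,i,⟨j.1+1, by have := j.isLt; omega⟩) := by
  intro j
  push_neg at hf ht
  have hf' := hf j
  have ht' := ht j
  simp only [pairEdge, Finset.mem_insert, Finset.mem_singleton, forall_eq_or_imp,
    forall_eq, not_and] at hf' ht'
  revert hf' ht'
  cases hx : c (b,i,⟨j.1, by have := j.isLt; omega⟩) <;>
    cases hy : c (b,i,⟨j.1+1, by have := j.isLt; omega⟩) <;> simp_all

/-- For `d = 2k-1`, `k ≥ 2`, the `(d+1)`-uniform hypergraph `L_d` is not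
2-colorable: every 2-coloring has a monochromatic hyperedge. -/
theorem stmt_11 (k : ℕ) (hk : 2 ≤ k) (c : LVert k → Bool) :
    ∃ e : Finset (LVert k), IsLEdge k e ∧ ∃ col : Bool, ∀ v ∈ e, c v = col := by
  classical
  set P : Bool → Bool → Fin (2*k-1) → Prop := fun b col i =>
    ∃ j : Fin (4*k-3), ∀ v ∈ pairEdge k b i j, c v = col with hPdef
  by_cases h1 : ∃ b col, k ≤ (Finset.univ.filter (P b col)).card
  · obtain ⟨b, col, h⟩ := h1
    obtain ⟨e, he, hm⟩ := kEdge_mono k hk c b col h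
    refine ⟨e, ?_, col, hm⟩
    cases b
    · exact Or.inl he
    · exact Or.inr (Or.inl he)
  · push_neg at h1
    have key : ∀ b : Bool, ∃ i : Fin (2*k-1), ¬ P b false i ∧ ¬ P b true i := by
      intro b
      by_contra hc2
      push_neg at hc2
      have hsub : (Finset.univ : Finset (Fin (2*k-1))) ⊆
          Finset.univ.filter (P b false) ∪ Finset.univ.filter (P b true) := by
        intro i _
        by_cases hf : P b false i
        · exact Finset.mem_union_left _ (Finset.mem_filter.2 ⟨Finset.mem_univ _, hf⟩)
        · exact Finset.mem_union_right _ (Finset.mem_filter.2 ⟨Finset.mem_univ _, hc2 i hf⟩)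
      have hcard := Finset.card_le_card hsub
      have hcu := Finset.card_union_le (Finset.univ.filter (P b false))
        (Finset.univ.filter (P b true))
      have h2 := h1 b false
      have h3 := h1 b true
      rw [Finset.card_univ, Fintype.card_fin] at hcard
      omega
    obtain ⟨i₀, hi₀f, hi₀t⟩ := key false
    obtain ⟨i₁, hi₁f, hi₁t⟩ := key true
    have halt₀ := alt_color k hk c false i₀ (neighbors_ne k c false i₀ hi₀f hi₀t)
    have halt₁ := alt_color k hk c true i₁ (neighbors_ne k c true i₁ hi₁f hi₁t)
    set a : Bool := c (false, i₀, ⟨0, by omega⟩) with ha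
    set a' : Bool := c (true, i₁, ⟨0, by omega⟩) with ha'
    set f₁ : Finset (LVert k) := (Finset.univ.filter fun j : Fin (4 * k - 2) =>
        Even j.1 ∧ j.1 < 2 * k - 1).image (fun j => (false, i₀, j)) with hf₁
    by_cases hmatch : a' = a
    · -- use even side on both
      set f₂ : Finset (LVert k) := (Finset.univ.filter fun j : Fin (4 * k - 2) =>
          Even j.1 ∧ j.1 < 2 * k - 1).image (fun j => (true, i₁, j)) with hf₂
      refine ⟨f₁ ∪ f₂, Or.inr (Or.inr ⟨f₁, f₂, ⟨i₀, Or.inl rfl⟩, ⟨i₁, Or.inl rfl⟩, rfl⟩),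
        a, ?_⟩
      intro v hv
      simp only [hf₁, hf₂, Finset.mem_union, Finset.mem_image, Finset.mem_filter,
        Finset.mem_univ, true_and] at hv
      rcases hv with ⟨j, ⟨hje, _⟩, rfl⟩ | ⟨j, ⟨hje, _⟩, rfl⟩
      · have := halt₀ j.1 j.2
        simpa [hje] using this
      · have := halt₁ j.1 j.2
        rw [← hmatch]
        simpa [hje] using this
    · -- a' = !a; use odd side on true
      have hmatch' : a' = ! a := Bool.eq_not_iff.mpr hmatch
      set f₂ : Finset (LVert k) := (Finset.univ.filter fun j : Fin (4 * k - 2) =>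
          ¬ Even j.1 ∧ 2 * k - 1 ≤ j.1).image (fun j => (true, i₁, j)) with hf₂
      refine ⟨f₁ ∪ f₂, Or.inr (Or.inr ⟨f₁, f₂, ⟨i₀, Or.inl rfl⟩, ⟨i₁, Or.inr rfl⟩, rfl⟩),
        a, ?_⟩
      intro v hv
      simp only [hf₁, hf₂, Finset.mem_union, Finset.mem_image, Finset.mem_filter,
        Finset.mem_univ, true_and] at hv
      rcases hv with ⟨j, ⟨hje, _⟩, rfl⟩ | ⟨j, ⟨hje, _⟩, rfl⟩
      · have := halt₀ j.1 j.2
        simpa [hje] using this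
      · have := halt₁ j.1 j.2
        rw [if_neg hje] at this
        rw [this, ← ha', hmatch', Bool.not_not]
end

section
/- Let d = 2k-1 with k ≥ 2. The hypergraph L_d is 3-colorable: color the vertices of each path V_i (and each W_i) by three colors RED, BLUE, GREEN alternating cyclically in index order; then no hyperedge of L_d is monochromatic. -/
lemma K_case (k : ℕ) (hk : 2 ≤ k) (b : Bool) (e : Finset (LVert k))
    (h : IsKEdge k b e) :
    ∃ u ∈ e, ∃ v ∈ e, u.2.2.1 % 3 ≠ v.2.2.1 % 3 := by
  obtain ⟨S, hS, g, rfl⟩ := h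
  obtain ⟨i, hi⟩ := Finset.card_pos.mp (by omega : 0 < S.card)
  refine ⟨(b, i, ⟨(g i).1, by have := (g i).isLt; omega⟩), ?_,
          (b, i, ⟨(g i).1 + 1, by have := (g i).isLt; omega⟩), ?_, ?_⟩
  · exact Finset.mem_biUnion.mpr ⟨i, hi, by simp [pairEdge]⟩
  · exact Finset.mem_biUnion.mpr ⟨i, hi, by simp [pairEdge]⟩
  · simp only []
    omega

lemma M_case (k : ℕ) (hk : 2 ≤ k) (b : Bool) (f : Finset (LVert k))
    (h : IsMEdge k b f) :
    ∃ u ∈ f, ∃ v ∈ f, u.2.2.1 % 3 ≠ v.2.2.1 % 3 := by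
  obtain ⟨i, h | h⟩ := h <;> subst h
  · refine ⟨(b, i, ⟨0, by omega⟩), ?_, (b, i, ⟨2, by omega⟩), ?_, by simp⟩
    · exact Finset.mem_image.mpr ⟨⟨0, by omega⟩, by
        simp [Nat.even_iff]; omega, rfl⟩
    · exact Finset.mem_image.mpr ⟨⟨2, by omega⟩, by
        simp [Nat.even_iff]; omega, rfl⟩
  · refine ⟨(b, i, ⟨2 * k - 1, by omega⟩), ?_, (b, i, ⟨2 * k + 1, by omega⟩), ?_, by
      simp; omega⟩
    · exact Finset.mem_image.mpr ⟨⟨2 * k - 1, by omega⟩, by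
        simp [Nat.even_iff]; omega, rfl⟩
    · exact Finset.mem_image.mpr ⟨⟨2 * k + 1, by omega⟩, by
        simp [Nat.even_iff]; omega, rfl⟩

/-- For `d = 2k-1`, `k ≥ 2`, the hypergraph `L_d` is 3-colorable; indeed
coloring vertex `v^i_j` (and `w^i_j`) by `j mod 3` (i.e. alternating RED, BLUE, GREEN
along each path in index order) leaves no hyperedge monochromatic. -/
theorem stmt_12 (k : ℕ) (hk : 2 ≤ k) :
    ∀ e : Finset (LVert k), IsLEdge k e →
      ∃ u ∈ e, ∃ v ∈ e, u.2.2.1 % 3 ≠ v.2.2.1 % 3 := by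
  intro e he
  rcases he with hK | hK | ⟨f₁, f₂, hf₁, hf₂, rfl⟩
  · exact K_case k hk false e hK
  · exact K_case k hk true e hK
  · obtain ⟨u, hu, v, hv, huv⟩ := M_case k hk false f₁ hf₁
    exact ⟨u, Finset.mem_union_left _ hu, v, Finset.mem_union_left _ hv, huv⟩
end
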